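/- arXiv:2505.11431 — 13 statements merged into one kernel-verified Lean document; each statement's English description precedes it below -/
import Mathlib

section
/- Let n ≥ 1 and let α_1, …, α_n ∈ [0,1) be real numbers with Σ_{k=1}^n α_k = 1. Then for every subset I ⊆ {1,…,n}: (1 − ∏_{k=1}^n (1−α_k))·Σ_{i∈I} α_i + ∏_{i∈I}(1−α_i) + (1/2)·∏_{k=1}^n (1−α_k)·(Σ_{i∈I} α_i/(1−α_i))·(Σ_{j∉I} α_j) ≤ 1. -/
private lemma aux_prod_le_one {n : ℕ} (x : Fin n → ℝ) (hx : ∀ i, 0 ≤ x i ∧ x i < 1)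
    (s : Finset (Fin n)) : ∏ i ∈ s, (1 - x i) ≤ 1 :=
  Finset.prod_le_one (fun i _ => by linarith [(hx i).2]) (fun i _ => by linarith [(hx i).1])

private lemma aux_prod_nonneg {n : ℕ} (x : Fin n → ℝ) (hx : ∀ i, 0 ≤ x i ∧ x i < 1)
    (s : Finset (Fin n)) : 0 ≤ ∏ i ∈ s, (1 - x i) :=
  Finset.prod_nonneg (fun i _ => by linarith [(hx i).2])

private lemma aux_weier {n : ℕ} (x : Fin n → ℝ) (hx : ∀ i, 0 ≤ x i ∧ x i < 1)
    (s : Finset (Fin n)) : 1 - ∑ i ∈ s, x i ≤ ∏ i ∈ s, (1 - x i) := by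
  induction s using Finset.cons_induction with
  | empty => simp
  | cons a s ha ih =>
    rw [Finset.prod_cons, Finset.sum_cons]
    have h1 := (hx a).1
    have h2 := (hx a).2
    have hs : 0 ≤ ∑ i ∈ s, x i := Finset.sum_nonneg (fun i _ => (hx i).1)
    nlinarith [ih]

private lemma aux_A {n : ℕ} (x : Fin n → ℝ) (hx : ∀ i, 0 ≤ x i ∧ x i < 1)
    (s : Finset (Fin n)) :
    (∏ i ∈ s, (1 - x i)) * (1 + ∑ i ∈ s, x i / (1 - x i)) ≤ 1 := by
  induction s using Finset.cons_induction with
  | empty => simp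
  | cons a s ha ih =>
    rw [Finset.prod_cons, Finset.sum_cons]
    have h1 := (hx a).1
    have h2 := (hx a).2
    have hne : (1 : ℝ) - x a ≠ 0 := by linarith
    have hQ0 := aux_prod_nonneg x hx s
    have hQ1 := aux_prod_le_one x hx s
    have hfrac : (1 - x a) * (x a / (1 - x a)) = x a := by field_simp
    set Q := ∏ i ∈ s, (1 - x i)
    set T := ∑ i ∈ s, x i / (1 - x i)
    have : (1 - x a) * Q * (1 + (x a / (1 - x a) + T))
        = Q * (1 + T) * (1 - x a) + Q * x a := by field_simp; ring
    nlinarith [this, ih]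

private lemma aux_L {n : ℕ} (x : Fin n → ℝ) (hx : ∀ i, 0 ≤ x i ∧ x i < 1)
    (s : Finset (Fin n)) (hs : ∑ i ∈ s, x i ≤ 1) :
    (∏ i ∈ s, (1 - x i)) *
      (1 + (∑ i ∈ s, x i) + (1/2) * (∑ i ∈ s, x i) * (∑ i ∈ s, x i / (1 - x i))) ≤ 1 := by
  induction s using Finset.cons_induction with
  | empty => simp
  | cons a s ha ih =>
    rw [Finset.prod_cons, Finset.sum_cons, Finset.sum_cons] at *
    have h1 := (hx a).1
    have h2 := (hx a).2
    have hne : (1 : ℝ) - x a ≠ 0 := by linarith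
    have hQ0 := aux_prod_nonneg x hx s
    have hS0 : 0 ≤ ∑ i ∈ s, x i := Finset.sum_nonneg (fun i _ => (hx i).1)
    have hs' : ∑ i ∈ s, x i ≤ 1 := by linarith
    have ih' := ih hs'
    set Q := ∏ i ∈ s, (1 - x i)
    set S := ∑ i ∈ s, x i with hSdef
    set T := ∑ i ∈ s, x i / (1 - x i) with hTdef
    have hT0 : 0 ≤ T := Finset.sum_nonneg (fun i hi => div_nonneg (hx i).1 (by linarith [(hx i).2]))
    -- key bound : T * (1 - (x a + S)) ≤ S
    have hTb : T * (1 - (x a + S)) ≤ S := by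
      rw [hTdef, hSdef, Finset.sum_mul]
      apply Finset.sum_le_sum
      intro i hi
      have hxi1 := (hx i).1
      have hxi2 := (hx i).2
      have hle : x i ≤ S := Finset.single_le_sum (fun j _ => (hx j).1) hi
      have hpos : 0 < 1 - x i := by linarith
      rw [div_mul_eq_mul_div, div_le_iff₀ hpos]
      nlinarith
    have hfrac : (1 - x a) * (x a / (1 - x a)) = x a := by field_simp
    -- (1 - x a) * (1 + (x a + S) + ½ (x a + S)(x a/(1-x a) + T)) ≤ 1 + S + ½ S T
    have key : (1 - x a) * (1 + (x a + S) + (1/2) * (x a + S) * (x a / (1 - x a) + T))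
        ≤ 1 + S + (1/2) * S * T := by
      have expand : (1 - x a) * (1 + (x a + S) + (1/2) * (x a + S) * (x a / (1 - x a) + T))
          = (1 - x a) * (1 + x a + S) + (1/2) * (x a + S) * (x a + (1 - x a) * T) := by
        field_simp; ring
      rw [expand]
      nlinarith [mul_nonneg h1 (sub_nonneg.2 hTb), mul_nonneg h1 hS0, mul_nonneg h1 h1,
        mul_nonneg (mul_nonneg h1 h1) hT0]
    have hpos : (0:ℝ) ≤ 1 + (x a + S) + (1/2) * (x a + S) * (x a / (1 - x a) + T) := by
      have : 0 ≤ x a / (1 - x a) := div_nonneg h1 (by linarith)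
      nlinarith [mul_nonneg (by linarith : (0:ℝ) ≤ x a + S) (by linarith : (0:ℝ) ≤ x a / (1 - x a) + T)]
    calc (1 - x a) * Q * (1 + (x a + S) + (1/2) * (x a + S) * (x a / (1 - x a) + T))
        = Q * ((1 - x a) * (1 + (x a + S) + (1/2) * (x a + S) * (x a / (1 - x a) + T))) := by ring
      _ ≤ Q * (1 + S + (1/2) * S * T) := by
          apply mul_le_mul_of_nonneg_left key hQ0
      _ ≤ 1 := ih'

theorem stmt_0 (n : ℕ) (hn : 1 ≤ n) (α : Fin n → ℝ)
    (hα : ∀ i, 0 ≤ α i ∧ α i < 1) (hsum : ∑ i, α i = 1) (I : Finset (Fin n)) :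
    (1 - ∏ k, (1 - α k)) * (∑ i ∈ I, α i)
      + (∏ i ∈ I, (1 - α i))
      + (1 / 2) * (∏ k, (1 - α k)) * (∑ i ∈ I, α i / (1 - α i)) * (∑ j ∈ Iᶜ, α j)
      ≤ 1 := by
  have hP : (∏ k, (1 - α k)) = (∏ i ∈ I, (1 - α i)) * (∏ i ∈ Iᶜ, (1 - α i)) :=
    (Finset.prod_mul_prod_compl I _).symm
  have hSU : (∑ i ∈ I, α i) + (∑ j ∈ Iᶜ, α j) = 1 := by
    rw [Finset.sum_add_sum_compl]; exact hsum
  set S := ∑ i ∈ I, α i with hSdef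
  set U := ∑ j ∈ Iᶜ, α j with hUdef
  set Q := ∏ i ∈ I, (1 - α i) with hQdef
  set R := ∏ i ∈ Iᶜ, (1 - α i) with hRdef
  set T := ∑ i ∈ I, α i / (1 - α i) with hTdef
  have hS0 : 0 ≤ S := Finset.sum_nonneg (fun i _ => (hα i).1)
  have hU0 : 0 ≤ U := Finset.sum_nonneg (fun i _ => (hα i).1)
  have hT0 : 0 ≤ T := Finset.sum_nonneg (fun i hi => div_nonneg (hα i).1 (by linarith [(hα i).2]))
  have hQ0 : 0 ≤ Q := aux_prod_nonneg α hα I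
  have hQ1 : Q ≤ 1 := aux_prod_le_one α hα I
  have hR0 : 0 ≤ R := aux_prod_nonneg α hα Iᶜ
  have hR1 : R ≤ 1 := aux_prod_le_one α hα Iᶜ
  have hRS : S ≤ R := by
    have := aux_weier α hα Iᶜ
    rw [← hUdef, ← hRdef] at this
    linarith
  have hA : Q * (1 + T) ≤ 1 := aux_A α hα I
  have hL : Q * (1 + S + (1/2) * S * T) ≤ 1 := aux_L α hα I (by linarith)
  rw [hP]
  rcases le_or_gt (2 * S) (T * U) with hc | hc
  · -- case A : ½TU ≥ S, use R ≤ 1 and Q(1+T) ≤ 1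
    nlinarith [mul_nonneg (mul_nonneg hQ0 (sub_nonneg.2 hR1)) (by linarith : (0:ℝ) ≤ T * U - 2 * S),
      mul_nonneg hU0 (by nlinarith : (0:ℝ) ≤ 1 - Q * (1 + T)),
      mul_nonneg hU0 (sub_nonneg.2 hQ1)]
  · -- case B : ½TU < S, use R ≥ S and the key lemma L
    nlinarith [mul_nonneg (mul_nonneg hQ0 (sub_nonneg.2 hRS)) (by linarith : (0:ℝ) ≤ 2 * S - T * U),
      mul_nonneg hU0 (sub_nonneg.2 hL)]
end

section
/- Let n ≥ 1, let β_1,…,β_n ∈ (0,1] and p_1,…,p_n ∈ [0,1] be real numbers. There exist allocation probabilities (q_S^i), i.e. a family of reals indexed by subsets S ⊆ {1,…,n} and agents i with q_S^i ∈ [0,1], q_S^i = 0 whenever i ∉ S, and Σ_{i∈S} q_S^i = 1 for every nonempty S, such that for every i, p_i = Σ_{S ⊆ {1,…,n}, i∈S} q_S^i · (∏_{j∈S∖{i}} β_j) · (∏_{j∉S} (1−β_j)), if and only if both (1) Σ_{i=1}^n p_i β_i = 1 − ∏_{i=1}^n (1−β_i), and (2) for every subset I ⊆ {1,…,n}: Σ_{i∈I}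 p_i β_i ≤ 1 − ∏_{i∈I}(1−β_i). -/
open Finset

noncomputable def bw (n : ℕ) (β : Fin n → ℝ) (S : Finset (Fin n)) : ℝ :=
  (∏ j ∈ S, β j) * ∏ j ∈ Sᶜ, (1 - β j)

lemma bw_nonneg (n : ℕ) (β : Fin n → ℝ) (hβ : ∀ i, 0 < β i ∧ β i ≤ 1) (S : Finset (Fin n)) :
    0 ≤ bw n β S := by
  apply mul_nonneg
  · exact prod_nonneg fun j _ => (hβ j).1.le
  · exact prod_nonneg fun j _ => by linarith [(hβ j).2]

lemma sum_bw_disj (n : ℕ) (β : Fin n → ℝ) (I : Finset (Fin n)) :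
    ∑ S ∈ univ.filter (fun S : Finset (Fin n) => S ∩ I = ∅), bw n β S
      = ∏ i ∈ I, (1 - β i) := by
  have key : ∀ S ∈ Iᶜ.powerset, bw n β S = (∏ i ∈ I, (1 - β i)) *
      ((∏ j ∈ S, β j) * ∏ j ∈ Iᶜ \ S, (1 - β j)) := by
    intro S hS
    rw [mem_powerset] at hS
    have hcompl : Sᶜ = (Iᶜ \ S) ∪ I := by
      ext x
      simp only [mem_compl, mem_union, mem_sdiff]
      constructor
      · intro hx
        by_cases hxI : x ∈ I
        · right; exact hxI
        · left; exact ⟨by simpa using hxI, hx⟩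
      · rintro (⟨_, hx⟩ | hxI)
        · exact hx
        · intro hxS; exact absurd (hS hxS) (by simpa using hxI)
    have hdisj : Disjoint (Iᶜ \ S) I := by
      apply Finset.disjoint_left.mpr
      intro x hx
      simp only [mem_sdiff, mem_compl] at hx
      exact hx.1
    rw [bw, hcompl, Finset.prod_union hdisj]
    ring
  have hset : univ.filter (fun S : Finset (Fin n) => S ∩ I = ∅) = Iᶜ.powerset := by
    ext S
    simp only [mem_filter, mem_univ, true_and, mem_powerset]
    constructor
    · intro h x hx
      simp only [mem_compl]
      intro hxI
      exact absurd (Finset.mem_inter.mpr ⟨hx, hxI⟩) (by simp [h])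
    · intro h
      ext x
      simp only [mem_inter, Finset.notMem_empty, iff_false]
      rintro ⟨hxS, hxI⟩
      exact absurd hxI (by simpa using h hxS)
  rw [hset, Finset.sum_congr rfl key, ← Finset.mul_sum]
  have := Finset.prod_add (β) (fun i => 1 - β i) (Iᶜ : Finset (Fin n))
  simp only [add_sub_cancel, Finset.prod_const_one] at this
  rw [← this, mul_one]

lemma sum_bw_total (n : ℕ) (β : Fin n → ℝ) :
    ∑ S : Finset (Fin n), bw n β S = 1 := by
  have h := sum_bw_disj n β ∅
  simpa using h

section
variable (n : ℕ) (β : Fin n → ℝ)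

lemma sum_bw_inter_nonempty
    (hdisj : ∀ I : Finset (Fin n),
      ∑ S ∈ univ.filter (fun S : Finset (Fin n) => S ∩ I = ∅), bw n β S = ∏ i ∈ I, (1 - β i))
    (htot : ∑ S : Finset (Fin n), bw n β S = 1) (I : Finset (Fin n)) :
    ∑ S ∈ univ.filter (fun S : Finset (Fin n) => (S ∩ I).Nonempty), bw n β S
      = 1 - ∏ i ∈ I, (1 - β i) := by
  classical
  have h := Finset.sum_filter_add_sum_filter_not (univ : Finset (Finset (Fin n)))
    (fun S => (S ∩ I).Nonempty) (bw n β)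
  have h2 : univ.filter (fun S : Finset (Fin n) => ¬(S ∩ I).Nonempty)
      = univ.filter (fun S : Finset (Fin n) => S ∩ I = ∅) := by
    apply filter_congr; intro S _; simp [Finset.not_nonempty_iff_eq_empty]
  rw [h2, hdisj I] at h
  have : ∑ S ∈ (univ : Finset (Finset (Fin n))), bw n β S = 1 := htot
  linarith

end

section forward
variable (n : ℕ) (β p : Fin n → ℝ) (hβ : ∀ i, 0 < β i ∧ β i ≤ 1)
  (q : Finset (Fin n) → Fin n → ℝ)
  (hq01 : ∀ S i, 0 ≤ q S i ∧ q S i ≤ 1)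
  (hq0 : ∀ S i, i ∉ S → q S i = 0)
  (hqsum : ∀ S : Finset (Fin n), S.Nonempty → ∑ i ∈ S, q S i = 1)
  (hpq : ∀ i, p i = ∑ S ∈ Finset.univ.filter (fun S : Finset (Fin n) => i ∈ S),
        q S i * (∏ j ∈ S.erase i, β j) * (∏ j ∈ Sᶜ, (1 - β j)))

include hβ hq0 hpq in
lemma key_sum (I : Finset (Fin n)) :
    ∑ i ∈ I, p i * β i = ∑ S : Finset (Fin n), (∑ i ∈ I, q S i) * bw n β S := by
  classical
  have hterm : ∀ i, p i * β i = ∑ S : Finset (Fin n), q S i * bw n β S := by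
    intro i
    rw [hpq i, Finset.sum_mul]
    rw [Finset.sum_filter]
    apply Finset.sum_congr rfl
    intro S _
    by_cases hi : i ∈ S
    · simp only [hi, if_true]
      rw [bw, ← Finset.mul_prod_erase S β hi]
      ring
    · simp [hi, hq0 S i hi]
  rw [Finset.sum_congr rfl (fun i _ => hterm i), Finset.sum_comm]
  apply Finset.sum_congr rfl
  intro S _
  rw [Finset.sum_mul]

end forward

section fwd2
variable (n : ℕ) (β p : Fin n → ℝ) (hβ : ∀ i, 0 < β i ∧ β i ≤ 1)
  (q : Finset (Fin n) → Fin n → ℝ)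
  (hq01 : ∀ S i, 0 ≤ q S i ∧ q S i ≤ 1)
  (hq0 : ∀ S i, i ∉ S → q S i = 0)
  (hqsum : ∀ S : Finset (Fin n), S.Nonempty → ∑ i ∈ S, q S i = 1)
  (hbwpos : ∀ S, 0 ≤ bw n β S)
  (hkey : ∀ I : Finset (Fin n),
    ∑ i ∈ I, p i * β i = ∑ S : Finset (Fin n), (∑ i ∈ I, q S i) * bw n β S)
  (hint : ∀ I : Finset (Fin n),
    ∑ S ∈ univ.filter (fun S : Finset (Fin n) => (S ∩ I).Nonempty), bw n β S
      = 1 - ∏ i ∈ I, (1 - β i))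

include hq01 hq0 hqsum hbwpos hkey hint in
lemma forward_ineq (I : Finset (Fin n)) :
    ∑ i ∈ I, p i * β i ≤ 1 - ∏ i ∈ I, (1 - β i) := by
  classical
  rw [hkey I, ← hint I]
  have : ∑ S ∈ univ.filter (fun S : Finset (Fin n) => (S ∩ I).Nonempty), bw n β S
      = ∑ S : Finset (Fin n), (if (S ∩ I).Nonempty then (1:ℝ) else 0) * bw n β S := by
    rw [Finset.sum_filter]
    apply Finset.sum_congr rfl
    intro S _
    by_cases h : (S ∩ I).Nonempty <;> simp [h]
  rw [this]
  apply Finset.sum_le_sum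
  intro S _
  apply mul_le_mul_of_nonneg_right _ (hbwpos S)
  by_cases h : (S ∩ I).Nonempty
  · simp only [h, if_true]
    have h1 : ∑ i ∈ I, q S i = ∑ i ∈ I ∩ S, q S i := by
      apply (Finset.sum_subset (Finset.inter_subset_left) _).symm
      intro i hi hni
      exact hq0 S i (fun hiS => hni (Finset.mem_inter.mpr ⟨hi, hiS⟩))
    rw [h1, ← hqsum S ⟨h.choose, (Finset.mem_inter.mp h.choose_spec).1⟩]
    exact Finset.sum_le_sum_of_subset_of_nonneg (Finset.inter_subset_right)
      (fun i hi _ => (hq01 S i).1)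
  · simp only [h, if_false]
    have : S ∩ I = ∅ := Finset.not_nonempty_iff_eq_empty.mp h
    have h0 : ∀ i ∈ I, q S i = 0 := by
      intro i hi
      apply hq0
      intro hiS
      exact absurd (Finset.mem_inter.mpr ⟨hiS, hi⟩) (by simp [this])
    rw [Finset.sum_congr rfl h0]
    simp

include hq0 hqsum hkey hint in
lemma forward_eq : ∑ i, p i * β i = 1 - ∏ i, (1 - β i) := by
  classical
  rw [hkey univ, ← hint univ]
  rw [Finset.sum_filter]
  apply Finset.sum_congr rfl
  intro S _
  by_cases h : (S ∩ univ).Nonempty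
  · have hS : S.Nonempty := by rwa [Finset.inter_univ] at h
    have h1 : ∑ i ∈ (univ : Finset (Fin n)), q S i = ∑ i ∈ S, q S i := by
      apply (Finset.sum_subset (Finset.subset_univ S) _).symm
      intro i _ hni
      exact hq0 S i hni
    simp [h, h1, hqsum S hS, hS]
  · have hS : S = ∅ := by
      rw [Finset.inter_univ] at h
      exact Finset.not_nonempty_iff_eq_empty.mp h
    subst hS
    simp [h, fun i => hq0 ∅ i (Finset.notMem_empty i)]

end fwd2

section flow
variable {n : ℕ}

/-- Reachability of supply nodes (sets) from agent `i0` via alternating paths in flow `x`. -/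
def Reach (x : Finset (Fin n) → Fin n → ℝ) (i0 : Fin n) : ℕ → Finset (Fin n) → Prop
  | 0 => fun S => i0 ∈ S
  | (k+1) => fun S' => Reach x i0 k S' ∨ ∃ S j, Reach x i0 k S ∧ 0 < x S j ∧ j ∈ S'

lemma reach_mono (x : Finset (Fin n) → Fin n → ℝ) (i0 : Fin n) :
    ∀ {m k : ℕ}, m ≤ k → ∀ {S}, Reach x i0 m S → Reach x i0 k S := by
  intro m k hmk
  induction k with
  | zero => intro S h; rwa [Nat.le_zero.mp hmk] at h
  | succ k ih =>
    intro S h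
    rcases Nat.lt_or_ge m (k+1) with hm | hm
    · exact Or.inl (ih (Nat.lt_succ_iff.mp hm) h)
    · rwa [Nat.le_antisymm hmk hm] at h

lemma reach_transfer (x x' : Finset (Fin n) → Fin n → ℝ) (i0 : Fin n)
    (S0 : Finset (Fin n)) (k : ℕ) (hS0 : ¬ Reach x i0 k S0)
    (hpres : ∀ T j, T ≠ S0 → 0 < x T j → 0 < x' T j) :
    ∀ m, m ≤ k + 1 → ∀ T, Reach x i0 m T → Reach x' i0 m T := by
  intro m
  induction m with
  | zero => intro _ T h; exact h
  | succ m ih =>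
    intro hm T h
    rcases h with h | ⟨U, j, hU, hxUj, hjT⟩
    · exact Or.inl (ih (Nat.le_of_succ_le hm) T h)
    · have hUne : U ≠ S0 := by
        intro hEq
        subst hEq
        exact hS0 (reach_mono x i0 (Nat.lt_succ_iff.mp hm) hU)
      exact Or.inr ⟨U, j, ih (Nat.le_of_succ_le hm) U hU, hpres U j hUne hxUj, hjT⟩

end flow

section flow2
variable {n : ℕ}

def Feas (w : Finset (Fin n) → ℝ) (d : Fin n → ℝ) (x : Finset (Fin n) → Fin n → ℝ) : Prop :=
  (∀ S i, 0 ≤ x S i) ∧ (∀ S i, i ∉ S → x S i = 0) ∧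
  (∀ S, ∑ i, x S i ≤ w S) ∧ (∀ i, ∑ S : Finset (Fin n), x S i ≤ d i)

def Tot (x : Finset (Fin n) → Fin n → ℝ) : ℝ := ∑ S : Finset (Fin n), ∑ i, x S i

def bump (A : Finset (Fin n)) (a : Fin n) (ε : ℝ) : Finset (Fin n) → Fin n → ℝ :=
  fun T i => if T = A ∧ i = a then ε else 0

lemma bump_row (A : Finset (Fin n)) (a : Fin n) (ε : ℝ) (T : Finset (Fin n)) :
    ∑ i, bump A a ε T i = if T = A then ε else 0 := by
  unfold bump
  by_cases hT : T = A <;> simp [hT]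

lemma bump_col (A : Finset (Fin n)) (a : Fin n) (ε : ℝ) (i : Fin n) :
    ∑ T : Finset (Fin n), bump A a ε T i = if i = a then ε else 0 := by
  unfold bump
  by_cases hi : i = a <;> simp [hi]

lemma bump_tot (A : Finset (Fin n)) (a : Fin n) (ε : ℝ) :
    ∑ T : Finset (Fin n), ∑ i, bump A a ε T i = ε := by
  simp [bump_row]

lemma augment (w : Finset (Fin n) → ℝ) (d : Fin n → ℝ) (i0 : Fin n) :
    ∀ k : ℕ, ∀ x, Feas w d x → (∑ S : Finset (Fin n), x S i0) < d i0 →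
      ∀ S', Reach x i0 k S' → (∑ i, x S' i) < w S' →
      ∃ x', Feas w d x' ∧ Tot x < Tot x' := by
  intro k
  induction k with
  | zero =>
    intro x hx hdef S' hreach hunsat
    obtain ⟨hpos, hsupp, hrow, hcol⟩ := hx
    have hi0 : i0 ∈ S' := hreach
    set ε := min (w S' - ∑ i, x S' i) (d i0 - ∑ S : Finset (Fin n), x S i0) with hε
    have hεpos : 0 < ε := lt_min (by linarith) (by linarith)
    have hεle1 : ε ≤ w S' - ∑ i, x S' i := min_le_left _ _
    have hεle2 : ε ≤ d i0 - ∑ S : Finset (Fin n), x S i0 := min_le_right _ _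
    set x' := fun T i => x T i + bump S' i0 ε T i with hx'
    have hrow' : ∀ T, ∑ i, x' T i = ∑ i, x T i + (if T = S' then ε else 0) := by
      intro T
      simp only [hx']
      rw [Finset.sum_add_distrib, bump_row]
    have hcol' : ∀ i, ∑ T : Finset (Fin n), x' T i
        = ∑ T : Finset (Fin n), x T i + (if i = i0 then ε else 0) := by
      intro i
      simp only [hx']
      rw [Finset.sum_add_distrib, bump_col]
    refine ⟨x', ⟨?_, ?_, ?_, ?_⟩, ?_⟩
    · intro S i
      have hb : (0:ℝ) ≤ bump S' i0 ε S i := by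
        unfold bump; split
        · exact hεpos.le
        · rfl
      have := hpos S i
      simp only [hx']
      linarith
    · intro S i hi
      have h1 : x S i = 0 := hsupp S i hi
      have h2 : bump S' i0 ε S i = 0 := by
        unfold bump
        rw [if_neg]
        rintro ⟨rfl, rfl⟩
        exact hi hi0
      simp only [hx', h1, h2, add_zero]
    · intro S
      rw [hrow' S]
      by_cases hS : S = S'
      · subst hS; rw [if_pos rfl]; linarith
      · rw [if_neg hS, add_zero]; exact hrow S
    · intro i
      rw [hcol' i]
      by_cases hi : i = i0
      · subst hi; rw [if_pos rfl]; linarith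
      · rw [if_neg hi, add_zero]; exact hcol i
    · unfold Tot
      rw [Finset.sum_congr rfl fun T _ => hrow' T, Finset.sum_add_distrib,
        Finset.sum_ite_eq' Finset.univ S' (fun _ => ε), if_pos (Finset.mem_univ S')]
      linarith
  | succ k ih =>
    intro x hx hdef S' hreach hunsat
    rcases hreach with hreach | ⟨S, j, hSreach, hxSj, hjS'⟩
    · exact ih x hx hdef S' hreach hunsat
    by_cases hSS' : S = S'
    · exact ih x hx hdef S' (hSS' ▸ hSreach) hunsat
    obtain ⟨hpos, hsupp, hrow, hcol⟩ := hx
    set ε := min (x S j) (w S' - ∑ i, x S' i) with hε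
    have hεpos : 0 < ε := lt_min hxSj (by linarith)
    have hεle1 : ε ≤ x S j := min_le_left _ _
    have hεle2 : ε ≤ w S' - ∑ i, x S' i := min_le_right _ _
    set x'' := fun T i => x T i + bump S' j ε T i - bump S j ε T i with hx''
    have hrow'' : ∀ T, ∑ i, x'' T i
        = ∑ i, x T i + (if T = S' then ε else 0) - (if T = S then ε else 0) := by
      intro T
      simp only [hx'']
      rw [Finset.sum_sub_distrib, Finset.sum_add_distrib, bump_row, bump_row]
    have hcol'' : ∀ i, ∑ T : Finset (Fin n), x'' T i = ∑ T : Finset (Fin n), x T i := by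
      intro i
      simp only [hx'']
      rw [Finset.sum_sub_distrib, Finset.sum_add_distrib, bump_col, bump_col]
      ring
    have hjS : j ∈ S := by
      by_contra hc
      rw [hsupp S j hc] at hxSj
      exact lt_irrefl 0 hxSj
    have hx''feas : Feas w d x'' := by
      refine ⟨?_, ?_, ?_, ?_⟩
      · intro T i
        simp only [hx'', bump]
        split
        · next h =>
          have hne : ¬ (T = S ∧ i = j) := fun hc => hSS' (hc.1 ▸ h.1.symm ▸ rfl)
          rw [if_neg hne]
          have := hpos T i
          linarith
        · split
          · next h2 =>
            rw [h2.1, h2.2]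
            linarith
          · have := hpos T i
            simp only [add_zero, sub_zero]
            linarith
      · intro T i hi
        have h0 : x T i = 0 := hsupp T i hi
        have h1 : bump S' j ε T i = 0 := by
          unfold bump; rw [if_neg]; rintro ⟨rfl, rfl⟩; exact hi hjS'
        have h2 : bump S j ε T i = 0 := by
          unfold bump; rw [if_neg]; rintro ⟨rfl, rfl⟩; exact hi hjS
        simp only [hx'', h0, h1, h2, add_zero, sub_zero]
      · intro T
        rw [hrow'' T]
        by_cases h1 : T = S'
        · subst h1
          rw [if_pos rfl, if_neg (fun hc => hSS' hc.symm)]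
          linarith
        · rw [if_neg h1]
          by_cases h2 : T = S
          · subst h2
            rw [if_pos rfl]
            have := hrow T
            linarith
          · rw [if_neg h2]
            have := hrow T
            linarith
      · intro i
        rw [hcol'' i]
        exact hcol i
    have hx''tot : Tot x'' = Tot x := by
      unfold Tot
      rw [Finset.sum_congr rfl fun T _ => hrow'' T, Finset.sum_sub_distrib,
        Finset.sum_add_distrib, Finset.sum_ite_eq' Finset.univ S' (fun _ => ε),
        Finset.sum_ite_eq' Finset.univ S (fun _ => ε),
        if_pos (Finset.mem_univ S'), if_pos (Finset.mem_univ S)]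
      ring
    have hx''def : (∑ T : Finset (Fin n), x'' T i0) < d i0 := by
      rw [hcol'' i0]; exact hdef
    have hx''unsat : (∑ i, x'' S i) < w S := by
      rw [hrow'' S, if_neg (fun hc : S = S' => hSS' hc), if_pos rfl]
      have := hrow S
      linarith
    have hreach'' : Reach x'' i0 k S := by
      classical
      have hex : ∃ m, Reach x i0 m S := ⟨k, hSreach⟩
      have hm0spec : Reach x i0 (Nat.find hex) S := Nat.find_spec hex
      have hm0le : Nat.find hex ≤ k := Nat.find_le hSreach
      have hpres : ∀ T j', T ≠ S → 0 < x T j' → 0 < x'' T j' := by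
        intro T j' hTS hpos'
        simp only [hx'', bump]
        have h2 : ¬ (T = S ∧ j' = j) := fun hc => hTS hc.1
        rw [if_neg h2]
        split
        · linarith
        · simp only [add_zero, sub_zero]
          exact hpos'
      rcases Nat.eq_zero_or_pos (Nat.find hex) with h0 | hpos0
      · refine reach_mono x'' i0 hm0le ?_
        rw [h0] at hm0spec ⊢
        exact hm0spec
      · obtain ⟨l, hl⟩ := Nat.exists_eq_succ_of_ne_zero (Nat.pos_iff_ne_zero.mp hpos0)
        have hnot : ¬ Reach x i0 l S := Nat.find_min hex (by omega)
        have ht := reach_transfer x x'' i0 S l hnot hpres (Nat.find hex) (by omega) S hm0spec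
        exact reach_mono x'' i0 hm0le ht
    obtain ⟨x', hx'feas, hx'tot⟩ := ih x'' hx''feas hx''def S hreach'' hx''unsat
    exact ⟨x', hx'feas, by linarith [hx''tot]⟩

end flow2

section flow3
variable {n : ℕ}

lemma exists_max (w : Finset (Fin n) → ℝ) (d : Fin n → ℝ)
    (hw : ∀ S, 0 ≤ w S) (hd : ∀ i, 0 ≤ d i) :
    ∃ x, Feas w d x ∧ ∀ y, Feas w d y → Tot y ≤ Tot x := by
  classical
  set K : Set (Finset (Fin n) → Fin n → ℝ) := {x | Feas w d x} with hK
  have hne : K.Nonempty := by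
    refine ⟨fun _ _ => 0, ?_, ?_, ?_, ?_⟩
    · intro S i; exact le_refl 0
    · intro S i _; rfl
    · intro S; simpa using hw S
    · intro i; simpa using hd i
  have hclosed : IsClosed K := by
    have h1 : IsClosed {x : Finset (Fin n) → Fin n → ℝ | ∀ S i, 0 ≤ x S i} := by
      rw [Set.setOf_forall]
      refine isClosed_iInter fun S => ?_
      rw [Set.setOf_forall]
      refine isClosed_iInter fun i => ?_
      exact isClosed_le continuous_const ((continuous_apply i).comp (continuous_apply S))
    have h2 : IsClosed {x : Finset (Fin n) → Fin n → ℝ | ∀ S i, i ∉ S → x S i = 0} := by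
      rw [Set.setOf_forall]
      refine isClosed_iInter fun S => ?_
      rw [Set.setOf_forall]
      refine isClosed_iInter fun i => ?_
      by_cases hi : i ∈ S
      · simp [hi]
      · have : {x : Finset (Fin n) → Fin n → ℝ | i ∉ S → x S i = 0}
            = {x | x S i = 0} := by
          ext x; simp [hi]
        rw [this]
        exact isClosed_eq ((continuous_apply i).comp (continuous_apply S)) continuous_const
    have h3 : IsClosed {x : Finset (Fin n) → Fin n → ℝ | ∀ S, ∑ i, x S i ≤ w S} := by
      rw [Set.setOf_forall]
      refine isClosed_iInter fun S => ?_
      exact isClosed_le (continuous_finset_sum _ fun i _ =>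
        (continuous_apply i).comp (continuous_apply S)) continuous_const
    have h4 : IsClosed {x : Finset (Fin n) → Fin n → ℝ | ∀ i, ∑ S : Finset (Fin n), x S i ≤ d i} := by
      rw [Set.setOf_forall]
      refine isClosed_iInter fun i => ?_
      exact isClosed_le (continuous_finset_sum _ fun S _ =>
        (continuous_apply i).comp (continuous_apply S)) continuous_const
    have : K = {x : Finset (Fin n) → Fin n → ℝ | ∀ S i, 0 ≤ x S i}
        ∩ ({x | ∀ S i, i ∉ S → x S i = 0}
        ∩ ({x | ∀ S, ∑ i, x S i ≤ w S} ∩ {x | ∀ i, ∑ S : Finset (Fin n), x S i ≤ d i})) := by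
      ext x
      simp only [hK, Set.mem_setOf_eq, Set.mem_inter_iff, Feas]
    rw [this]
    exact h1.inter (h2.inter (h3.inter h4))
  have hsub : K ⊆ Set.pi Set.univ (fun S => Set.pi Set.univ (fun _ => Set.Icc (0:ℝ) (w S))) := by
    intro x hx
    obtain ⟨hpos, _, hrow, _⟩ := hx
    intro S _ 
    intro i _
    refine ⟨hpos S i, ?_⟩
    calc x S i ≤ ∑ i', x S i' := Finset.single_le_sum (fun i' _ => hpos S i') (mem_univ i)
      _ ≤ w S := hrow S
  have hcpt : IsCompact K := by
    refine IsCompact.of_isClosed_subset ?_ hclosed hsub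
    exact isCompact_univ_pi fun S => isCompact_univ_pi fun _ => isCompact_Icc
  have hcont : Continuous (Tot (n := n)) :=
    continuous_finset_sum _ fun S _ => continuous_finset_sum _ fun i _ =>
      (continuous_apply i).comp (continuous_apply S)
  obtain ⟨x, hxK, hmax⟩ := hcpt.exists_isMaxOn hne hcont.continuousOn
  exact ⟨x, hxK, fun y hy => hmax hy⟩

end flow3

section flow4
variable {n : ℕ}

lemma cols_full (w : Finset (Fin n) → ℝ) (d : Fin n → ℝ)
    (x : Finset (Fin n) → Fin n → ℝ) (hx : Feas w d x)
    (hmax : ∀ y, Feas w d y → Tot y ≤ Tot x)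
    (hall : ∀ I : Finset (Fin n), ∑ i ∈ I, d i
      ≤ ∑ S ∈ univ.filter (fun S : Finset (Fin n) => (S ∩ I).Nonempty), w S) :
    ∀ i, ∑ S : Finset (Fin n), x S i = d i := by
  classical
  by_contra hcon
  push_neg at hcon
  obtain ⟨i0, hi0⟩ := hcon
  obtain ⟨hpos, hsupp, hrow, hcol⟩ := hx
  have hdef : ∑ S : Finset (Fin n), x S i0 < d i0 := lt_of_le_of_ne (hcol i0) hi0
  set RA : Finset (Fin n) :=
    univ.filter (fun j => j = i0 ∨ ∃ k S, Reach x i0 k S ∧ 0 < x S j) with hRA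
  have hi0RA : i0 ∈ RA := by
    rw [hRA, mem_filter]
    exact ⟨mem_univ i0, Or.inl rfl⟩
  set A : Finset (Finset (Fin n)) :=
    univ.filter (fun S : Finset (Fin n) => (S ∩ RA).Nonempty) with hA
  have hreachA : ∀ S ∈ A, ∃ k, Reach x i0 k S := by
    intro S hS
    rw [hA, mem_filter] at hS
    obtain ⟨j, hj⟩ := hS.2
    rw [mem_inter] at hj
    have hj2 := hj.2
    rw [hRA, mem_filter] at hj2
    rcases hj2.2 with rfl | ⟨k, S1, hr, hx1⟩
    · exact ⟨0, hj.1⟩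
    · exact ⟨k + 1, Or.inr ⟨S1, j, hr, hx1, hj.1⟩⟩
  have hsat : ∀ S ∈ A, ∑ i, x S i = w S := by
    intro S hS
    obtain ⟨k, hk⟩ := hreachA S hS
    by_contra hne
    have hlt : ∑ i, x S i < w S := lt_of_le_of_ne (hrow S) hne
    obtain ⟨x', hx'feas, hx'tot⟩ :=
      augment w d i0 k x ⟨hpos, hsupp, hrow, hcol⟩ hdef S hk hlt
    exact absurd (hmax x' hx'feas) (by linarith)
  have hvanish : ∀ S ∈ A, ∀ i, i ∉ RA → x S i = 0 := by
    intro S hS i hiRA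
    by_contra hne
    have : 0 < x S i := lt_of_le_of_ne (hpos S i) (Ne.symm hne)
    obtain ⟨k, hk⟩ := hreachA S hS
    exact hiRA (by
      rw [hRA, mem_filter]
      exact ⟨mem_univ i, Or.inr ⟨k, S, hk, this⟩⟩)
  have hchain : ∑ S ∈ A, w S = ∑ i ∈ RA, ∑ S ∈ A, x S i := by
    rw [← Finset.sum_comm]
    apply Finset.sum_congr rfl
    intro S hS
    rw [← hsat S hS]
    exact Finset.sum_subset (subset_univ RA) (fun i _ hi => hvanish S hS i hi) |>.symm
  have hlt2 : ∑ i ∈ RA, ∑ S ∈ A, x S i < ∑ i ∈ RA, d i := by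
    apply Finset.sum_lt_sum
    · intro i _
      calc ∑ S ∈ A, x S i ≤ ∑ S : Finset (Fin n), x S i :=
            Finset.sum_le_sum_of_subset_of_nonneg (filter_subset _ _)
              (fun S _ _ => hpos S i)
        _ ≤ d i := hcol i
    · refine ⟨i0, hi0RA, ?_⟩
      calc ∑ S ∈ A, x S i0 ≤ ∑ S : Finset (Fin n), x S i0 :=
            Finset.sum_le_sum_of_subset_of_nonneg (filter_subset _ _)
              (fun S _ _ => hpos S i0)
        _ < d i0 := hdef
  have := hall RA
  rw [← hA] at this
  linarith [hchain, hlt2, this]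

lemma rows_full (w : Finset (Fin n) → ℝ) (d : Fin n → ℝ)
    (x : Finset (Fin n) → Fin n → ℝ) (hx : Feas w d x)
    (hcols : ∀ i, ∑ S : Finset (Fin n), x S i = d i)
    (htotal : ∑ i, d i = ∑ S ∈ univ.filter (fun S : Finset (Fin n) => S.Nonempty), w S) :
    ∀ S : Finset (Fin n), S.Nonempty → ∑ i, x S i = w S := by
  classical
  obtain ⟨hpos, hsupp, hrow, hcol⟩ := hx
  have h1 : ∑ S ∈ univ.filter (fun S : Finset (Fin n) => S.Nonempty), ∑ i, x S i
      = ∑ S : Finset (Fin n), ∑ i, x S i := by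
    apply Finset.sum_subset (filter_subset _ _)
    intro S _ hS
    simp only [mem_filter, mem_univ, true_and] at hS
    have : S = ∅ := Finset.not_nonempty_iff_eq_empty.mp hS
    subst this
    exact Finset.sum_eq_zero fun i _ => hsupp ∅ i (Finset.notMem_empty i)
  have h2 : ∑ S : Finset (Fin n), ∑ i, x S i = ∑ i, d i := by
    rw [Finset.sum_comm]
    exact Finset.sum_congr rfl fun i _ => hcols i
  have h3 : ∑ S ∈ univ.filter (fun S : Finset (Fin n) => S.Nonempty), ∑ i, x S i
      = ∑ S ∈ univ.filter (fun S : Finset (Fin n) => S.Nonempty), w S := by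
    rw [h1, h2, htotal]
  have h4 := (Finset.sum_eq_sum_iff_of_le
    (fun S (_ : S ∈ univ.filter (fun S : Finset (Fin n) => S.Nonempty)) => hrow S)).mp h3
  intro S hS
  exact h4 S (by simp [hS])

end flow4

section converse
variable (n : ℕ) (β p : Fin n → ℝ)

lemma converse_dir (hβ : ∀ i, 0 < β i ∧ β i ≤ 1) (hp : ∀ i, 0 ≤ p i ∧ p i ≤ 1)
    (heq : ∑ i, p i * β i = 1 - ∏ i, (1 - β i))
    (hineq : ∀ I : Finset (Fin n), ∑ i ∈ I, p i * β i ≤ 1 - ∏ i ∈ I, (1 - β i)) :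
    ∃ q : Finset (Fin n) → Fin n → ℝ,
      (∀ S i, 0 ≤ q S i ∧ q S i ≤ 1) ∧
      (∀ S i, i ∉ S → q S i = 0) ∧
      (∀ S : Finset (Fin n), S.Nonempty → ∑ i ∈ S, q S i = 1) ∧
      (∀ i, p i = ∑ S ∈ Finset.univ.filter (fun S : Finset (Fin n) => i ∈ S),
        q S i * (∏ j ∈ S.erase i, β j) * (∏ j ∈ Sᶜ, (1 - β j))) := by
  classical
  set w : Finset (Fin n) → ℝ := bw n β with hwdef
  set d : Fin n → ℝ := fun i => p i * β i with hddef
  have hw : ∀ S, 0 ≤ w S := bw_nonneg n β hβ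
  have hd : ∀ i, 0 ≤ d i := fun i => mul_nonneg (hp i).1 (hβ i).1.le
  have hint : ∀ I : Finset (Fin n),
      ∑ S ∈ univ.filter (fun S : Finset (Fin n) => (S ∩ I).Nonempty), w S
        = 1 - ∏ i ∈ I, (1 - β i) :=
    sum_bw_inter_nonempty n β (sum_bw_disj n β) (sum_bw_total n β)
  have hall : ∀ I : Finset (Fin n), ∑ i ∈ I, d i
      ≤ ∑ S ∈ univ.filter (fun S : Finset (Fin n) => (S ∩ I).Nonempty), w S := by
    intro I
    rw [hint I]
    exact hineq I
  obtain ⟨x, hxfeas, hmax⟩ := exists_max w d hw hd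
  have hcols := cols_full w d x hxfeas hmax hall
  have htotal : ∑ i, d i = ∑ S ∈ univ.filter (fun S : Finset (Fin n) => S.Nonempty), w S := by
    have h1 := hint univ
    have h2 : univ.filter (fun S : Finset (Fin n) => (S ∩ univ).Nonempty)
        = univ.filter (fun S : Finset (Fin n) => S.Nonempty) := by
      apply filter_congr
      intro S _
      rw [Finset.inter_univ]
    rw [h2] at h1
    rw [h1, hddef]
    exact heq
  have hrows := rows_full w d x hxfeas hcols htotal
  obtain ⟨hpos, hsupp, hrow, hcol⟩ := hxfeas
  set q : Finset (Fin n) → Fin n → ℝ := fun S i =>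
    if w S = 0 then (if i ∈ S then ((S.card : ℝ))⁻¹ else 0) else x S i / w S with hqdef
  have hxle : ∀ S i, x S i ≤ w S := by
    intro S i
    calc x S i ≤ ∑ i', x S i' := Finset.single_le_sum (fun i' _ => hpos S i') (mem_univ i)
      _ ≤ w S := hrow S
  refine ⟨q, ?_, ?_, ?_, ?_⟩
  · intro S i
    simp only [hqdef]
    by_cases h0 : w S = 0
    · rw [if_pos h0]
      by_cases hi : i ∈ S
      · rw [if_pos hi]
        have hcard : (1:ℝ) ≤ (S.card : ℝ) := by
          have : 1 ≤ S.card := Finset.card_pos.mpr ⟨i, hi⟩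
          exact_mod_cast this
        constructor
        · positivity
        · exact inv_le_one_of_one_le₀ hcard
      · rw [if_neg hi]; exact ⟨le_refl 0, zero_le_one⟩
    · rw [if_neg h0]
      have hwpos : 0 < w S := lt_of_le_of_ne (hw S) (Ne.symm h0)
      constructor
      · exact div_nonneg (hpos S i) (hw S)
      · rw [div_le_one hwpos]
        exact hxle S i
  · intro S i hi
    simp only [hqdef]
    by_cases h0 : w S = 0
    · rw [if_pos h0, if_neg hi]
    · rw [if_neg h0, hsupp S i hi, zero_div]
  · intro S hS
    simp only [hqdef]
    by_cases h0 : w S = 0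
    · rw [Finset.sum_congr rfl (fun i hi => by rw [if_pos h0, if_pos hi])]
      rw [Finset.sum_const, nsmul_eq_mul]
      have : (S.card : ℝ) ≠ 0 := by
        have : 0 < S.card := Finset.card_pos.mpr hS
        positivity
      field_simp
    · rw [Finset.sum_congr rfl (fun i _ => by rw [if_neg h0])]
      rw [← Finset.sum_div]
      have : ∑ i ∈ S, x S i = w S := by
        rw [← hrows S hS]
        exact Finset.sum_subset (subset_univ S) (fun i _ hi => hsupp S i hi)
      rw [this, div_self h0]
  · intro i
    have hterm : ∀ S ∈ univ.filter (fun S : Finset (Fin n) => i ∈ S),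
        q S i * (∏ j ∈ S.erase i, β j) * (∏ j ∈ Sᶜ, (1 - β j)) = x S i / β i := by
      intro S hSf
      rw [mem_filter] at hSf
      have hiS := hSf.2
      have hβi : β i ≠ 0 := ne_of_gt (hβ i).1
      have hwS : β i * ((∏ j ∈ S.erase i, β j) * (∏ j ∈ Sᶜ, (1 - β j))) = w S := by
        rw [hwdef, bw, ← Finset.mul_prod_erase S β hiS]
        ring
      by_cases h0 : w S = 0
      · have hx0 : x S i = 0 := by
          have hsum : ∑ i', x S i' = 0 := by rw [hrows S ⟨i, hiS⟩, h0]
          have := (Finset.sum_eq_zero_iff_of_nonneg (fun i' _ => hpos S i')).mp hsum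
          exact this i (mem_univ i)
        have hc0 : (∏ j ∈ S.erase i, β j) * (∏ j ∈ Sᶜ, (1 - β j)) = 0 := by
          have := hwS
          rw [h0] at this
          rcases mul_eq_zero.mp this with h | h
          · exact absurd h hβi
          · exact h
        rw [mul_assoc, hc0, mul_zero, hx0, zero_div]
      · have hq : q S i = x S i / w S := by simp only [hqdef, if_neg h0]
        rw [hq, mul_assoc]
        rw [show (∏ j ∈ S.erase i, β j) * (∏ j ∈ Sᶜ, (1 - β j)) = w S / β i by
          field_simp
          linarith [hwS]]
        field_simp
    rw [Finset.sum_congr rfl hterm, ← Finset.sum_div]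
    have : ∑ S ∈ univ.filter (fun S : Finset (Fin n) => i ∈ S), x S i
        = ∑ S : Finset (Fin n), x S i := by
      apply Finset.sum_subset (filter_subset _ _)
      intro S _ hSf
      simp only [mem_filter, mem_univ, true_and] at hSf
      exact hsupp S i hSf
    rw [this, hcols i, hddef]
    have hβi : β i ≠ 0 := ne_of_gt (hβ i).1
    field_simp

end converse

theorem stmt_1 (n : ℕ) (hn : 1 ≤ n) (β p : Fin n → ℝ)
    (hβ : ∀ i, 0 < β i ∧ β i ≤ 1) (hp : ∀ i, 0 ≤ p i ∧ p i ≤ 1) :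
    (∃ q : Finset (Fin n) → Fin n → ℝ,
      (∀ S i, 0 ≤ q S i ∧ q S i ≤ 1) ∧
      (∀ S i, i ∉ S → q S i = 0) ∧
      (∀ S : Finset (Fin n), S.Nonempty → ∑ i ∈ S, q S i = 1) ∧
      (∀ i, p i = ∑ S ∈ Finset.univ.filter (fun S : Finset (Fin n) => i ∈ S),
        q S i * (∏ j ∈ S.erase i, β j) * (∏ j ∈ Sᶜ, (1 - β j)))) ↔
    ((∑ i, p i * β i = 1 - ∏ i, (1 - β i)) ∧
      ∀ I : Finset (Fin n), ∑ i ∈ I, p i * β i ≤ 1 - ∏ i ∈ I, (1 - β i)) := by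
  constructor
  · rintro ⟨q, hq01, hq0, hqsum, hpq⟩
    have hint := sum_bw_inter_nonempty n β (sum_bw_disj n β) (sum_bw_total n β)
    have hkey := key_sum n β p hβ q hq0 hpq
    have hbwpos := bw_nonneg n β hβ
    exact ⟨forward_eq n β p q hq0 hqsum hkey hint,
      fun I => forward_ineq n β p q hq01 hq0 hqsum hbwpos hkey hint I⟩
  · rintro ⟨heq, hineq⟩
    exact converse_dir n β p hβ hp heq hineq
end

section
/- Let n ≥ 2 and let α_1,…,α_n ∈ (0,1) be real numbers with Σ_{i=1}^n α_i = 1, and set p_i = 1 − ∏_{j=1}^n (1−α_j) for every i. There exist allocation probabilities (q_S^i) (a family with q_S^i ∈ [0,1], q_S^i = 0 when i ∉ S, Σ_{i∈S} q_S^i = 1 for every nonempty S) that induce the interim allocation probabilities p_i = Σ_{S∋i} q_S^i ∏_{j∈S∖{i}} α_j ∏_{j∉S}(1−α_j) and satisfy q_{{i,j}}^j ≤ (1+α_i)/2 for every two-element subset {i,j}, if and only if for every subset I ⊆ {1,…,n}: (1 − ∏_{k=1}^n (1−α_k))·Σ_{i∈I} α_i + ∏_{i∈I}(1−α_i) + (1/2)·∏_{k=1}^n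 (1−α_k)·(Σ_{i∈I} α_i/(1−α_i))·(Σ_{j∉I} α_j) ≤ 1. -/
open Finset
open Fin.CommRing

section Construction
variable {n : ℕ}



def fkey (m x : Fin (n+1)) : Fin (n+1) := x - m - 1
def bkey (m x : Fin (n+1)) : Fin (n+1) := Fin.rev (x - m)

lemma aux_sub_one_lt {u v : Fin (n+1)} (hu : u ≠ 0) (hv : v ≠ 0) :
    u - 1 < v - 1 ↔ u < v := by
  rw [Fin.lt_def, Fin.lt_def, Fin.coe_sub_one, Fin.coe_sub_one, if_neg hu, if_neg hv]
  have h1 : u.val ≠ 0 := fun h => hu (Fin.ext h)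
  have h2 : v.val ≠ 0 := fun h => hv (Fin.ext h)
  omega

lemma aux_not_neg_one_lt (x : Fin (n+1)) : ¬ (-1 : Fin (n+1)) < x := by
  rw [Fin.lt_def, Fin.coe_neg_one]
  have := x.is_le; omega

lemma aux_lt_neg_one {x : Fin (n+1)} : x < -1 ↔ x ≠ -1 := by
  rw [Fin.lt_def, Fin.coe_neg_one, Ne, Fin.ext_iff, Fin.coe_neg_one]
  have := x.is_le; omega

lemma aux_cast_ne_neg_one {d : ℕ} (hd : d < n) : (↑d : Fin (n+1)) ≠ -1 := by
  rw [Ne, Fin.ext_iff, Fin.coe_neg_one, Fin.val_cast_of_lt (by omega : d < n+1)]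
  omega

lemma fkey_sub_eq (m x : Fin (n+1)) : fkey (m - 1) x = x - m := by
  simp only [fkey]; ring

lemma bkey_lt_iff (m x y : Fin (n+1)) : bkey m x < bkey m y ↔ y - m < x - m := by
  simp only [bkey, Fin.rev_lt_rev]

lemma fwd_m_not_bad (i m : Fin (n+1)) :
    m ∉ univ.filter (fun j => fkey m j < fkey m i) := by
  simp only [Finset.mem_filter, Finset.mem_univ, true_and, not_lt]
  have h1 : fkey m m = -1 := by simp only [fkey]; ring
  rw [h1]
  exact le_of_not_gt (aux_not_neg_one_lt _)

lemma bwd_m_not_bad (i m : Fin (n+1)) :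
    m ∉ univ.filter (fun j => bkey m j < bkey m i) := by
  simp only [Finset.mem_filter, Finset.mem_univ, true_and, bkey_lt_iff, sub_self]
  exact fun h => (Fin.not_lt_zero _) (by exact h)

lemma fwd_bad_step (i m : Fin (n+1)) (him : m ≠ i) :
    univ.filter (fun j => fkey (m - 1) j < fkey (m - 1) i)
      = insert m (univ.filter (fun j => fkey m j < fkey m i)) := by
  ext j
  simp only [Finset.mem_filter, Finset.mem_univ, true_and, Finset.mem_insert,
    fkey_sub_eq]
  by_cases hjm : j = m
  · rw [hjm]
    simp only [sub_self, eq_self_iff_true, true_or, iff_true]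
    exact Fin.pos_iff_ne_zero.2 (sub_ne_zero_of_ne him.symm)
  · have : fkey m j < fkey m i ↔ (j - m) - 1 < (i - m) - 1 := Iff.rfl
    rw [this, aux_sub_one_lt (sub_ne_zero_of_ne hjm) (sub_ne_zero_of_ne him.symm)]
    simp [hjm]

lemma bwd_bad_step (i m : Fin (n+1)) (him : m ≠ i) :
    univ.filter (fun j => bkey (m + 1) j < bkey (m + 1) i)
      = insert m (univ.filter (fun j => bkey m j < bkey m i)) := by
  ext j
  simp only [Finset.mem_filter, Finset.mem_univ, true_and, Finset.mem_insert, bkey_lt_iff]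
  have e1 : ∀ x : Fin (n+1), x - (m + 1) = (x - m) - 1 := by intro x; ring
  rw [e1, e1]
  by_cases hjm : j = m
  · rw [hjm]
    simp only [sub_self, zero_sub, eq_self_iff_true, true_or, iff_true]
    rw [aux_lt_neg_one]
    intro h
    have h2 : i - m = 0 := by
      have h3 := sub_eq_iff_eq_add.1 h
      rwa [neg_add_cancel] at h3
    exact him.symm (by rwa [sub_eq_zero] at h2)
  · rw [aux_sub_one_lt (sub_ne_zero_of_ne him.symm) (sub_ne_zero_of_ne hjm)]
    simp [hjm]

lemma fwd_telescope (α : Fin (n+1) → ℝ) (i : Fin (n+1)) :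
    ∑ m : Fin (n+1), α m * ∏ j ∈ univ.filter (fun j => fkey m j < fkey m i), (1 - α j)
      = 1 - ∏ j, (1 - α j) := by
  set f : Fin (n+1) → ℝ :=
    fun m => α m * ∏ j ∈ univ.filter (fun j => fkey m j < fkey m i), (1 - α j) with hf
  have hreindex : ∑ m : Fin (n+1), f m = ∑ d ∈ Finset.range (n+1), f (i - 1 - (d : Fin (n+1))) := by
    rw [← Fin.sum_univ_eq_sum_range (fun d : ℕ => f (i - 1 - (d : Fin (n+1)))) (n+1)]
    refine Fintype.sum_equiv (Equiv.subLeft (i-1)) _ _ (fun k => ?_)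
    rw [Fin.cast_val_eq_self]
    show f k = f (i - 1 - (i - 1 - k))
    congr 1
    ring
  have hind : ∀ d : ℕ, d ≤ n →
      ∑ k ∈ Finset.range d, f (i - 1 - (k : Fin (n+1)))
        = 1 - ∏ j ∈ univ.filter
            (fun j => fkey (i - 1 - (d : Fin (n+1))) j < fkey (i - 1 - (d : Fin (n+1))) i),
            (1 - α j) := by
    intro d hd
    induction d with
    | zero =>
      simp only [Finset.sum_range_zero, Nat.cast_zero, sub_zero]
      have hfil : univ.filter (fun j => fkey (i - 1) j < fkey (i - 1) i) = ∅ := by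
        apply Finset.filter_false_of_mem
        intro j _
        rw [fkey_sub_eq, fkey_sub_eq, sub_self]
        exact Fin.not_lt_zero _
      rw [hfil, Finset.prod_empty]
      ring
    | succ d ih =>
      have hd' : d ≤ n := by omega
      rw [Finset.sum_range_succ, ih hd']
      set m : Fin (n+1) := i - 1 - (d : Fin (n+1)) with hm
      have hmne : m ≠ i := by
        intro h
        rw [hm, sub_sub, sub_eq_self] at h
        exact aux_cast_ne_neg_one (show d < n by omega)
          (eq_neg_of_add_eq_zero_right h)
      have hidx : i - 1 - ((d+1 : ℕ) : Fin (n+1)) = m - 1 := by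
        push_cast
        rw [hm]; ring
      rw [hidx, fwd_bad_step i m hmne, Finset.prod_insert (fwd_m_not_bad i m)]
      show _ = 1 - (1 - α m) * _
      have : f m = α m * ∏ j ∈ univ.filter (fun j => fkey m j < fkey m i), (1 - α j) := rfl
      rw [this]
      ring
  rw [hreindex, Finset.sum_range_succ, hind n (le_refl n)]
  have hcast : ((n : ℕ) : Fin (n+1)) = -1 := by
    have h0 : ((n : ℕ) : Fin (n+1)) + 1 = 0 := by
      exact_mod_cast Fin.natCast_self (n+1)
    exact eq_neg_of_add_eq_zero_left h0
  rw [hcast]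
  have hmi : i - 1 - (-1 : Fin (n+1)) = i := by ring
  rw [hmi]
  have hfil : univ.filter (fun j => fkey i j < fkey i i) = univ.erase i := by
    ext j
    simp only [Finset.mem_filter, Finset.mem_univ, true_and, Finset.mem_erase, and_true]
    have h1 : fkey i i = -1 := by simp only [fkey]; ring
    have h2 : fkey i j = -1 ↔ j = i := by
      constructor
      · intro h
        have : j - i = 0 := by
          have := sub_eq_iff_eq_add.1 h
          simpa using this
        rwa [sub_eq_zero] at this
      · rintro rfl; exact h1
    rw [h1, aux_lt_neg_one]
    exact not_congr h2
  rw [hfil]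
  have hprod := Finset.mul_prod_erase univ (fun j => 1 - α j) (Finset.mem_univ i)
  show _ + f i = _
  have : f i = α i * ∏ j ∈ univ.filter (fun j => fkey i j < fkey i i), (1 - α j) := rfl
  rw [this, hfil, ← hprod]
  ring

lemma bwd_telescope (α : Fin (n+1) → ℝ) (i : Fin (n+1)) :
    ∑ m : Fin (n+1), α m * ∏ j ∈ univ.filter (fun j => bkey m j < bkey m i), (1 - α j)
      = 1 - ∏ j, (1 - α j) := by
  set f : Fin (n+1) → ℝ :=
    fun m => α m * ∏ j ∈ univ.filter (fun j => bkey m j < bkey m i), (1 - α j) with hf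
  have hreindex : ∑ m : Fin (n+1), f m = ∑ d ∈ Finset.range (n+1), f (i + 1 + (d : Fin (n+1))) := by
    rw [← Fin.sum_univ_eq_sum_range (fun d : ℕ => f (i + 1 + (d : Fin (n+1)))) (n+1)]
    refine Fintype.sum_equiv (Equiv.subRight (i+1)) _ _ (fun k => ?_)
    rw [Fin.cast_val_eq_self]
    show f k = f (i + 1 + (k - (i + 1)))
    congr 1
    ring
  have hind : ∀ d : ℕ, d ≤ n →
      ∑ k ∈ Finset.range d, f (i + 1 + (k : Fin (n+1)))
        = 1 - ∏ j ∈ univ.filter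
            (fun j => bkey (i + 1 + (d : Fin (n+1))) j < bkey (i + 1 + (d : Fin (n+1))) i),
            (1 - α j) := by
    intro d hd
    induction d with
    | zero =>
      simp only [Finset.sum_range_zero, Nat.cast_zero, add_zero]
      have hfil : univ.filter (fun j => bkey (i + 1) j < bkey (i + 1) i) = ∅ := by
        apply Finset.filter_false_of_mem
        intro j _
        rw [bkey_lt_iff]
        have : i - (i + 1) = -1 := by ring
        rw [this]
        exact aux_not_neg_one_lt _
      rw [hfil, Finset.prod_empty]
      ring
    | succ d ih =>
      have hd' : d ≤ n := by omega
      rw [Finset.sum_range_succ, ih hd']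
      set m : Fin (n+1) := i + 1 + (d : Fin (n+1)) with hm
      have hmne : m ≠ i := by
        intro h
        rw [hm] at h
        have h2 : (d : Fin (n+1)) = -1 := by linear_combination h
        exact aux_cast_ne_neg_one (show d < n by omega) h2
      have hidx : i + 1 + ((d+1 : ℕ) : Fin (n+1)) = m + 1 := by
        push_cast
        rw [hm]; ring
      rw [hidx, bwd_bad_step i m hmne, Finset.prod_insert (bwd_m_not_bad i m)]
      show _ = 1 - (1 - α m) * _
      have : f m = α m * ∏ j ∈ univ.filter (fun j => bkey m j < bkey m i), (1 - α j) := rfl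
      rw [this]
      ring
  rw [hreindex, Finset.sum_range_succ, hind n (le_refl n)]
  have hcast : ((n : ℕ) : Fin (n+1)) = -1 := by
    have h0 : ((n : ℕ) : Fin (n+1)) + 1 = 0 := by
      exact_mod_cast Fin.natCast_self (n+1)
    exact eq_neg_of_add_eq_zero_left h0
  rw [hcast]
  have hmi : i + 1 + (-1 : Fin (n+1)) = i := by ring
  rw [hmi]
  have hfil : univ.filter (fun j => bkey i j < bkey i i) = univ.erase i := by
    ext j
    simp only [Finset.mem_filter, Finset.mem_univ, true_and, Finset.mem_erase, and_true,
      bkey_lt_iff, sub_self]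
    rw [Fin.pos_iff_ne_zero]
    exact not_congr sub_eq_zero
  rw [hfil]
  have hprod := Finset.mul_prod_erase univ (fun j => 1 - α j) (Finset.mem_univ i)
  show _ + f i = _
  have : f i = α i * ∏ j ∈ univ.filter (fun j => bkey i j < bkey i i), (1 - α j) := rfl
  rw [this, hfil, ← hprod]
  ring

lemma fkey_inj (m : Fin (n+1)) : Function.Injective (fkey m) := by
  intro a b h
  simpa [fkey, sub_left_inj] using h

lemma bkey_inj (m : Fin (n+1)) : Function.Injective (bkey m) := by
  intro a b h
  have := Fin.rev_injective h
  simpa [sub_left_inj] using this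

/-- winner of the forward rule with start m+1 -/
noncomputable def fwin (m : Fin (n+1)) (S : Finset (Fin (n+1))) (h : S.Nonempty) : Fin (n+1) :=
  ((S.image (fkey m)).min' (h.image _)) + m + 1

noncomputable def bwin (m : Fin (n+1)) (S : Finset (Fin (n+1))) (h : S.Nonempty) : Fin (n+1) :=
  Fin.rev ((S.image (bkey m)).min' (h.image _)) + m

lemma fwin_eq_iff (m : Fin (n+1)) (S : Finset (Fin (n+1))) (h : S.Nonempty) (i : Fin (n+1)) :
    fwin m S h = i ↔ i ∈ S ∧ ∀ j ∈ S, fkey m i ≤ fkey m j := by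
  have hkey : ∀ x : Fin (n+1), fkey m x + m + 1 = x := by intro x; simp [fkey]; ring
  constructor
  · rintro rfl
    obtain ⟨x, hx, he⟩ := Finset.mem_image.1 (Finset.min'_mem _ (h.image (fkey m)))
    have hxw : x = fwin m S h := by rw [fwin, ← he, hkey]
    refine ⟨hxw ▸ hx, fun j hj => ?_⟩
    have : fkey m (fwin m S h) = (S.image (fkey m)).min' (h.image _) := by
      rw [← hxw, he]
    rw [this]
    exact Finset.min'_le _ _ (mem_image_of_mem _ hj)
  · rintro ⟨hi, hmin⟩
    have h1 : (S.image (fkey m)).min' (h.image _) = fkey m i :=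
      le_antisymm (Finset.min'_le _ _ (mem_image_of_mem _ hi))
        (Finset.le_min' _ _ _ (by rintro y hy; obtain ⟨j, hj, rfl⟩ := Finset.mem_image.1 hy
                                  exact hmin j hj))
    rw [fwin, h1, hkey]

lemma bwin_eq_iff (m : Fin (n+1)) (S : Finset (Fin (n+1))) (h : S.Nonempty) (i : Fin (n+1)) :
    bwin m S h = i ↔ i ∈ S ∧ ∀ j ∈ S, bkey m i ≤ bkey m j := by
  have hkey : ∀ x : Fin (n+1), Fin.rev (bkey m x) + m = x := by
    intro x; rw [bkey, Fin.rev_rev]; ring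
  constructor
  · rintro rfl
    obtain ⟨x, hx, he⟩ := Finset.mem_image.1 (Finset.min'_mem _ (h.image (bkey m)))
    have hxw : x = bwin m S h := by rw [bwin, ← he, hkey]
    refine ⟨hxw ▸ hx, fun j hj => ?_⟩
    have : bkey m (bwin m S h) = (S.image (bkey m)).min' (h.image _) := by
      rw [← hxw, he]
    rw [this]
    exact Finset.min'_le _ _ (mem_image_of_mem _ hj)
  · rintro ⟨hi, hmin⟩
    have h1 : (S.image (bkey m)).min' (h.image _) = bkey m i :=
      le_antisymm (Finset.min'_le _ _ (mem_image_of_mem _ hi))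
        (Finset.le_min' _ _ _ (by rintro y hy; obtain ⟨j, hj, rfl⟩ := Finset.mem_image.1 hy
                                  exact hmin j hj))
    rw [bwin, h1, hkey]

lemma fwin_mem (m : Fin (n+1)) (S : Finset (Fin (n+1))) (h : S.Nonempty) : fwin m S h ∈ S :=
  ((fwin_eq_iff m S h _).1 rfl).1

lemma bwin_mem (m : Fin (n+1)) (S : Finset (Fin (n+1))) (h : S.Nonempty) : bwin m S h ∈ S :=
  ((bwin_eq_iff m S h _).1 rfl).1




lemma sum_win_weights (α γ : Fin (n+1) → ℝ) (hαγ : ∀ j, α j + γ j = 1)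
    (k : Fin (n+1) → Fin (n+1)) (i : Fin (n+1)) :
    ∑ S ∈ univ.filter (fun S : Finset (Fin (n+1)) => i ∈ S),
      (if (∀ j ∈ S, k i ≤ k j) then (1:ℝ) else 0) * ((∏ j ∈ S.erase i, α j) * ∏ j ∈ Sᶜ, γ j)
    = ∏ j ∈ univ.filter (fun j => k j < k i), γ j := by
  classical
  set Bad : Finset (Fin (n+1)) := univ.filter (fun j => k j < k i) with hBad
  have hiBad : i ∉ Bad := by simp [hBad]
  set V : Finset (Fin (n+1)) := (insert i Bad)ᶜ with hV
  have hiV : i ∉ V := by simp [hV]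
  have hVBad : ∀ x ∈ V, x ∉ Bad := by
    intro x hx; rw [hV, Finset.mem_compl, Finset.mem_insert] at hx; tauto
  have hVi : ∀ x ∈ V, x ≠ i := by
    intro x hx; rw [hV, Finset.mem_compl, Finset.mem_insert] at hx; tauto
  have hmemV : ∀ x, x ≠ i → x ∉ Bad → x ∈ V := by
    intro x h1 h2; rw [hV, Finset.mem_compl, Finset.mem_insert]; tauto
  simp only [ite_mul, one_mul, zero_mul]
  rw [← Finset.sum_filter, Finset.filter_filter]
  have hstep : ∑ S ∈ univ.filter (fun S : Finset (Fin (n+1)) => i ∈ S ∧ ∀ j ∈ S, k i ≤ k j),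
      ((∏ j ∈ S.erase i, α j) * ∏ j ∈ Sᶜ, γ j)
      = ∑ T ∈ V.powerset, ((∏ j ∈ T, α j) * ∏ j ∈ (insert i T)ᶜ, γ j) := by
    refine Finset.sum_nbij' (fun S => S.erase i) (fun T => insert i T) ?_ ?_ ?_ ?_ ?_
    · intro S hS
      simp only [Finset.mem_filter, Finset.mem_univ, true_and] at hS
      simp only [Finset.mem_powerset]
      intro x hx
      rw [Finset.mem_erase] at hx
      have := hS.2 x hx.2
      exact hmemV x hx.1 (by simp [hBad, not_lt.2 this])
    · intro T hT
      simp only [Finset.mem_powerset] at hT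
      simp only [Finset.mem_filter, Finset.mem_univ, true_and]
      refine ⟨Finset.mem_insert_self i T, fun j hj => ?_⟩
      rcases Finset.mem_insert.1 hj with rfl | hj
      · exact le_refl _
      · have := hVBad j (hT hj)
        simp only [hBad, Finset.mem_filter, Finset.mem_univ, true_and, not_lt] at this
        exact this
    · intro S hS
      simp only [Finset.mem_filter, Finset.mem_univ, true_and] at hS
      exact Finset.insert_erase hS.1
    · intro T hT
      simp only [Finset.mem_powerset] at hT
      exact Finset.erase_insert (fun h => hiV (hT h))
    · intro S hS
      simp only [Finset.mem_filter, Finset.mem_univ, true_and] at hS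
      rw [Finset.insert_erase hS.1]
  rw [hstep]
  have hcompl : ∀ T ∈ V.powerset, (insert i T)ᶜ = Bad ∪ (V \ T) := by
    intro T hT
    rw [Finset.mem_powerset] at hT
    ext x
    simp only [Finset.mem_compl, Finset.mem_insert, Finset.mem_union, Finset.mem_sdiff]
    constructor
    · rintro h
      push_neg at h
      by_cases hxB : x ∈ Bad
      · exact Or.inl hxB
      · exact Or.inr ⟨hmemV x h.1 hxB, h.2⟩
    · rintro (hxB | ⟨hxV, hxT⟩)
      · push_neg
        exact ⟨fun h => hiBad (h ▸ hxB), fun h => hVBad x (hT h) hxB⟩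
      · push_neg
        exact ⟨hVi x hxV, hxT⟩
  calc ∑ T ∈ V.powerset, ((∏ j ∈ T, α j) * ∏ j ∈ (insert i T)ᶜ, γ j)
      = ∑ T ∈ V.powerset, (∏ j ∈ Bad, γ j) * ((∏ j ∈ T, α j) * ∏ j ∈ V \ T, γ j) := by
        apply Finset.sum_congr rfl
        intro T hT
        rw [hcompl T hT, Finset.prod_union
          (Finset.disjoint_left.2 fun x hxB hxVT => hVBad x (Finset.mem_sdiff.1 hxVT).1 hxB)]
        ring
    _ = (∏ j ∈ Bad, γ j) * ∑ T ∈ V.powerset, (∏ j ∈ T, α j) * ∏ j ∈ V \ T, γ j := by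
        rw [Finset.mul_sum]
    _ = ∏ j ∈ Bad, γ j := by
        rw [← Finset.prod_add]
        have : ∏ j ∈ V, (α j + γ j) = 1 :=
          Finset.prod_eq_one (fun j _ => hαγ j)
        rw [this, mul_one]

end Construction

section QProps
variable {n : ℕ}

noncomputable def qfun (α : Fin (n+1) → ℝ) (S : Finset (Fin (n+1))) (x : Fin (n+1)) : ℝ :=
  if h : S.Nonempty then
    (1/2) * ∑ m, α m * ((if fwin m S h = x then (1:ℝ) else 0) +
      (if bwin m S h = x then (1:ℝ) else 0))
  else 0

variable {α : Fin (n+1) → ℝ}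

lemma ind_nonneg (p : Prop) [Decidable p] : (0:ℝ) ≤ if p then 1 else 0 := by positivity

lemma ind_le_one (p : Prop) [Decidable p] : (if p then (1:ℝ) else 0) ≤ 1 := by
  split_ifs <;> norm_num

lemma qfun_nonneg (hα : ∀ i, 0 < α i ∧ α i < 1) (S : Finset (Fin (n+1))) (x : Fin (n+1)) :
    0 ≤ qfun α S x := by
  rw [qfun]
  split_ifs with h
  · have : ∀ m ∈ univ, (0:ℝ) ≤ α m * ((if fwin m S h = x then (1:ℝ) else 0) +
        (if bwin m S h = x then (1:ℝ) else 0)) := by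
      intro m _
      have := (hα m).1
      have h1 := ind_nonneg (fwin m S h = x)
      have h2 := ind_nonneg (bwin m S h = x)
      nlinarith
    have := Finset.sum_nonneg this
    linarith
  · exact le_refl 0

lemma qfun_le_one (hα : ∀ i, 0 < α i ∧ α i < 1) (hsum : ∑ i, α i = 1)
    (S : Finset (Fin (n+1))) (x : Fin (n+1)) :
    qfun α S x ≤ 1 := by
  rw [qfun]
  split_ifs with h
  · have hb : ∀ m ∈ univ, α m * ((if fwin m S h = x then (1:ℝ) else 0) +
        (if bwin m S h = x then (1:ℝ) else 0)) ≤ α m * 2 := by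
      intro m _
      have := (hα m).1
      have h1 := ind_le_one (fwin m S h = x)
      have h2 := ind_le_one (bwin m S h = x)
      nlinarith
    have := Finset.sum_le_sum hb
    have h2 : ∑ m : Fin (n+1), α m * 2 = 2 := by
      rw [← Finset.sum_mul, hsum]; ring
    rw [h2] at this
    linarith
  · norm_num

lemma qfun_zero_of_not_mem (S : Finset (Fin (n+1))) (x : Fin (n+1)) (hx : x ∉ S) :
    qfun α S x = 0 := by
  rw [qfun]
  split_ifs with h
  · have : ∀ m ∈ univ, α m * ((if fwin m S h = x then (1:ℝ) else 0) +
        (if bwin m S h = x then (1:ℝ) else 0)) = 0 := by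
      intro m _
      rw [if_neg (fun he : fwin m S h = x => hx (he ▸ fwin_mem m S h)),
          if_neg (fun he : bwin m S h = x => hx (he ▸ bwin_mem m S h))]
      ring
    rw [Finset.sum_eq_zero this]
    ring
  · rfl

lemma qfun_row (hsum : ∑ i, α i = 1) (S : Finset (Fin (n+1))) (hS : S.Nonempty) :
    ∑ x ∈ S, qfun α S x = 1 := by
  have : ∀ x ∈ S, qfun α S x = (1/2) * ∑ m, α m * ((if fwin m S hS = x then (1:ℝ) else 0) +
      (if bwin m S hS = x then (1:ℝ) else 0)) := by
    intro x _
    rw [qfun, dif_pos hS]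
  rw [Finset.sum_congr rfl this, ← Finset.mul_sum, Finset.sum_comm]
  have hinner : ∀ m ∈ univ, ∑ x ∈ S, α m * ((if fwin m S hS = x then (1:ℝ) else 0) +
      (if bwin m S hS = x then (1:ℝ) else 0)) = α m * 2 := by
    intro m _
    rw [← Finset.mul_sum, Finset.sum_add_distrib,
        Finset.sum_ite_eq S (fwin m S hS) (fun _ => (1:ℝ)),
        Finset.sum_ite_eq S (bwin m S hS) (fun _ => (1:ℝ)),
        if_pos (fwin_mem m S hS), if_pos (bwin_mem m S hS)]
    norm_num
  rw [Finset.sum_congr rfl hinner, ← Finset.sum_mul, hsum]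
  ring

end QProps

section QMore
variable {n : ℕ} {α : Fin (n+1) → ℝ}

lemma qfun_interim (hsum : ∑ i, α i = 1) (i : Fin (n+1)) :
    (1 - ∏ j, (1 - α j)) =
      ∑ S ∈ univ.filter (fun S : Finset (Fin (n+1)) => i ∈ S),
        qfun α S i * (∏ j ∈ S.erase i, α j) * (∏ j ∈ Sᶜ, (1 - α j)) := by
  symm
  have hterm : ∀ S ∈ univ.filter (fun S : Finset (Fin (n+1)) => i ∈ S),
      qfun α S i * (∏ j ∈ S.erase i, α j) * (∏ j ∈ Sᶜ, (1 - α j))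
        = ∑ m, ((1/2) * α m * ((if (∀ j ∈ S, fkey m i ≤ fkey m j) then (1:ℝ) else 0) *
              ((∏ j ∈ S.erase i, α j) * ∏ j ∈ Sᶜ, (1 - α j)))
            + (1/2) * α m * ((if (∀ j ∈ S, bkey m i ≤ bkey m j) then (1:ℝ) else 0) *
              ((∏ j ∈ S.erase i, α j) * ∏ j ∈ Sᶜ, (1 - α j)))) := by
    intro S hS
    rw [Finset.mem_filter] at hS
    have hi := hS.2
    have hne : S.Nonempty := ⟨i, hi⟩
    have hF : ∀ m : Fin (n+1), (if fwin m S hne = i then (1:ℝ) else 0)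
        = (if (∀ j ∈ S, fkey m i ≤ fkey m j) then (1:ℝ) else 0) := by
      intro m
      refine if_congr ?_ rfl rfl
      rw [fwin_eq_iff]
      exact and_iff_right hi
    have hB : ∀ m : Fin (n+1), (if bwin m S hne = i then (1:ℝ) else 0)
        = (if (∀ j ∈ S, bkey m i ≤ bkey m j) then (1:ℝ) else 0) := by
      intro m
      refine if_congr ?_ rfl rfl
      rw [bwin_eq_iff]
      exact and_iff_right hi
    rw [qfun, dif_pos hne, Finset.mul_sum, Finset.sum_mul, Finset.sum_mul]
    refine Finset.sum_congr rfl (fun m _ => ?_)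
    rw [← hF m, ← hB m]
    ring
  rw [Finset.sum_congr rfl hterm, Finset.sum_comm]
  have hmid : ∀ m ∈ (univ : Finset (Fin (n+1))),
      ∑ S ∈ univ.filter (fun S : Finset (Fin (n+1)) => i ∈ S),
        ((1/2) * α m * ((if (∀ j ∈ S, fkey m i ≤ fkey m j) then (1:ℝ) else 0) *
              ((∏ j ∈ S.erase i, α j) * ∏ j ∈ Sᶜ, (1 - α j)))
            + (1/2) * α m * ((if (∀ j ∈ S, bkey m i ≤ bkey m j) then (1:ℝ) else 0) *
              ((∏ j ∈ S.erase i, α j) * ∏ j ∈ Sᶜ, (1 - α j))))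
        = (1/2) * (α m * ∏ j ∈ univ.filter (fun j => fkey m j < fkey m i), (1 - α j))
          + (1/2) * (α m * ∏ j ∈ univ.filter (fun j => bkey m j < bkey m i), (1 - α j)) := by
    intro m _
    rw [Finset.sum_add_distrib, ← Finset.mul_sum, ← Finset.mul_sum,
        sum_win_weights α (fun j => 1 - α j) (fun j => by ring) (fkey m) i,
        sum_win_weights α (fun j => 1 - α j) (fun j => by ring) (bkey m) i]
    ring
  rw [Finset.sum_congr rfl hmid, Finset.sum_add_distrib, ← Finset.mul_sum, ← Finset.mul_sum,
      fwd_telescope α i, bwd_telescope α i]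
  ring

lemma qfun_cap (hα : ∀ i, 0 < α i ∧ α i < 1) (hsum : ∑ i, α i = 1)
    (i j : Fin (n+1)) (hij : i ≠ j) :
    qfun α {i, j} j ≤ (1 + α i) / 2 := by
  have hne : ({i, j} : Finset (Fin (n+1))).Nonempty := ⟨i, by simp⟩
  have hiS : i ∈ ({i, j} : Finset (Fin (n+1))) := by simp
  have hjS : j ∈ ({i, j} : Finset (Fin (n+1))) := by simp
  rw [qfun, dif_pos hne]
  have hclaim : ∀ m : Fin (n+1),
      ((if fwin m {i,j} hne = j then (1:ℝ) else 0) + (if bwin m {i,j} hne = j then (1:ℝ) else 0))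
        ≤ 1 + (if m = i then (1:ℝ) else 0) := by
    intro m
    by_cases hmi : m = i
    · rw [if_pos hmi]
      have h1 := ind_le_one (fwin m {i,j} hne = j)
      have h2 := ind_le_one (bwin m {i,j} hne = j)
      linarith
    · rw [if_neg hmi]
      have hnot : ¬ (fwin m {i,j} hne = j ∧ bwin m {i,j} hne = j) := by
        rintro ⟨hFw, hBw⟩
        have hF := ((fwin_eq_iff m _ hne j).1 hFw).2 i hiS
        have hB := ((bwin_eq_iff m _ hne j).1 hBw).2 i hiS
        have hFlt : fkey m j < fkey m i :=
          lt_of_le_of_ne hF (fun h => hij ((fkey_inj m h.symm)))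
        have hBlt : bkey m j < bkey m i :=
          lt_of_le_of_ne hB (fun h => hij ((bkey_inj m h.symm)))
        rw [bkey_lt_iff] at hBlt
        by_cases hmj : m = j
        · subst hmj
          have : fkey m m = -1 := by simp only [fkey]; ring
          rw [this] at hFlt
          exact aux_not_neg_one_lt _ hFlt
        · have hFlt' : (j - m) - 1 < (i - m) - 1 := hFlt
          rw [aux_sub_one_lt (sub_ne_zero_of_ne (fun h : j = m => hmj h.symm))
              (sub_ne_zero_of_ne (fun h : i = m => hmi h.symm))] at hFlt'
          exact lt_asymm hFlt' hBlt
      by_cases hFw : fwin m {i,j} hne = j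
      · rw [if_pos hFw, if_neg (fun hBw => hnot ⟨hFw, hBw⟩)]
      · rw [if_neg hFw]
        have := ind_le_one (bwin m {i,j} hne = j)
        linarith
  have hsum2 : ∑ m : Fin (n+1), α m * ((if fwin m {i,j} hne = j then (1:ℝ) else 0) +
      (if bwin m {i,j} hne = j then (1:ℝ) else 0))
      ≤ ∑ m : Fin (n+1), α m * (1 + (if m = i then (1:ℝ) else 0)) := by
    refine Finset.sum_le_sum (fun m _ => ?_)
    exact mul_le_mul_of_nonneg_left (hclaim m) (le_of_lt (hα m).1)
  have hsum3 : ∑ m : Fin (n+1), α m * (1 + (if m = i then (1:ℝ) else 0)) = 1 + α i := by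
    have : ∀ m ∈ (univ : Finset (Fin (n+1))),
        α m * (1 + (if m = i then (1:ℝ) else 0)) = α m + (if m = i then α m else 0) := by
      intro m _
      split_ifs <;> ring
    rw [Finset.sum_congr rfl this, Finset.sum_add_distrib, hsum,
        Finset.sum_ite_eq' univ i α, if_pos (Finset.mem_univ i)]
  linarith

end QMore

section Necessity
variable {n : ℕ}

lemma necessity (α : Fin (n+1) → ℝ)
    (hα : ∀ i, 0 < α i ∧ α i < 1) (hsum : ∑ i, α i = 1)
    (q : Finset (Fin (n+1)) → Fin (n+1) → ℝ)
    (hq01 : ∀ S i, 0 ≤ q S i ∧ q S i ≤ 1)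
    (hq0 : ∀ S i, i ∉ S → q S i = 0)
    (hrow : ∀ S : Finset (Fin (n+1)), S.Nonempty → ∑ i ∈ S, q S i = 1)
    (hint : ∀ i, (1 - ∏ j, (1 - α j)) =
        ∑ S ∈ univ.filter (fun S : Finset (Fin (n+1)) => i ∈ S),
          q S i * (∏ j ∈ S.erase i, α j) * (∏ j ∈ Sᶜ, (1 - α j)))
    (hcap : ∀ i j : Fin (n+1), i ≠ j → q {i, j} j ≤ (1 + α i) / 2)
    (I : Finset (Fin (n+1))) :
    (1 - ∏ k, (1 - α k)) * (∑ i ∈ I, α i)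
        + (∏ i ∈ I, (1 - α i))
        + (1 / 2) * (∏ k, (1 - α k)) * (∑ i ∈ I, α i / (1 - α i)) * (∑ j ∈ Iᶜ, α j)
        ≤ 1 := by
  classical
  set π : Finset (Fin (n+1)) → ℝ :=
    fun S => (∏ j ∈ S, α j) * ∏ j ∈ Sᶜ, (1 - α j) with hπ
  set c : Finset (Fin (n+1)) → ℝ :=
    fun S => ∑ x ∈ I, if x ∈ S then q S x else 0 with hc
  have hπ0 : ∀ S, 0 ≤ π S := by
    intro S
    apply mul_nonneg <;> apply Finset.prod_nonneg <;> intro j _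
    · exact le_of_lt (hα j).1
    · linarith [(hα j).2]
  -- Step A
  have hA : ∀ i : Fin (n+1), α i * (1 - ∏ j, (1 - α j)) =
      ∑ S ∈ univ, (if i ∈ S then q S i * π S else 0) := by
    intro i
    rw [← Finset.sum_filter, hint i, Finset.mul_sum]
    refine Finset.sum_congr rfl fun S hS => ?_
    have hi : i ∈ S := (Finset.mem_filter.1 hS).2
    simp only [hπ]
    rw [← Finset.mul_prod_erase S α hi]
    ring
  have hmain : (1 - ∏ j, (1 - α j)) * (∑ i ∈ I, α i)
      = ∑ S ∈ (univ : Finset (Finset (Fin (n+1)))), c S * π S := by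
    calc (1 - ∏ j, (1 - α j)) * (∑ i ∈ I, α i)
        = ∑ i ∈ I, α i * (1 - ∏ j, (1 - α j)) := by
          rw [Finset.mul_sum]; exact Finset.sum_congr rfl fun i _ => mul_comm _ _
      _ = ∑ i ∈ I, ∑ S ∈ univ, (if i ∈ S then q S i * π S else 0) :=
          Finset.sum_congr rfl fun i _ => hA i
      _ = ∑ S ∈ univ, ∑ i ∈ I, (if i ∈ S then q S i * π S else 0) := Finset.sum_comm
      _ = ∑ S ∈ (univ : Finset (Finset (Fin (n+1)))), c S * π S := by
          refine Finset.sum_congr rfl fun S _ => ?_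
          rw [hc, Finset.sum_mul]
          refine Finset.sum_congr rfl fun x _ => ?_
          split_ifs <;> ring
  -- bounds on c
  have hc0 : ∀ S, 0 ≤ c S := by
    intro S
    apply Finset.sum_nonneg
    intro x _
    split_ifs with h
    · exact (hq01 S x).1
    · exact le_refl 0
  have hczero : ∀ S : Finset (Fin (n+1)), ¬ (S ∩ I).Nonempty → c S = 0 := by
    intro S hS
    apply Finset.sum_eq_zero
    intro x hx
    rw [if_neg]
    intro hxS
    exact hS ⟨x, Finset.mem_inter.2 ⟨hxS, hx⟩⟩
  have hc1 : ∀ S : Finset (Fin (n+1)), (S ∩ I).Nonempty → c S ≤ 1 := by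
    intro S hS
    obtain ⟨y, hy⟩ := hS
    have hSne : S.Nonempty := ⟨y, (Finset.mem_inter.1 hy).1⟩
    have heq : c S = ∑ x ∈ I.filter (· ∈ S), q S x := by
      simp only [hc]; exact (Finset.sum_filter _ _).symm
    rw [heq]
    calc ∑ x ∈ I.filter (· ∈ S), q S x
        ≤ ∑ x ∈ S, q S x := by
          refine Finset.sum_le_sum_of_subset_of_nonneg
            (fun x hx => (Finset.mem_filter.1 hx).2) (fun x hx _ => (hq01 S x).1)
      _ = 1 := hrow S hSne
  have hcpair : ∀ i ∈ Iᶜ, ∀ j ∈ I, c {i, j} = q {i, j} j := by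
    intro i hi j hj
    have hstep : ∀ x ∈ I, (if x ∈ ({i, j} : Finset (Fin (n+1))) then q {i, j} x else 0)
        = if x = j then q {i, j} x else 0 := by
      intro x hx
      refine if_congr ?_ rfl rfl
      rw [Finset.mem_insert, Finset.mem_singleton]
      constructor
      · rintro (rfl | h)
        · exact absurd hx (Finset.mem_compl.1 hi)
        · exact h
      · exact Or.inr
    rw [hc]
    show (∑ x ∈ I, if x ∈ ({i, j} : Finset (Fin (n+1))) then q {i, j} x else 0) = _
    rw [Finset.sum_congr rfl hstep, Finset.sum_ite_eq' I j, if_pos hj]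
  -- total mass identities
  have hαγ1 : ∀ j : Fin (n+1), α j + (1 - α j) = 1 := fun j => by ring
  have hsum_univ : ∑ S ∈ (univ : Finset (Finset (Fin (n+1)))), π S = 1 := by
    have h1 := Finset.prod_add α (fun j => 1 - α j) (univ : Finset (Fin (n+1)))
    rw [Finset.prod_congr rfl (fun j _ => hαγ1 j), Finset.prod_const_one,
        Finset.powerset_univ] at h1
    rw [h1]
    refine Finset.sum_congr rfl fun S _ => ?_
    simp only [hπ, Finset.compl_eq_univ_sdiff]
  have hsum_empty : ∑ S ∈ univ.filter (fun S : Finset (Fin (n+1)) => ¬ (S ∩ I).Nonempty), π S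
      = ∏ j ∈ I, (1 - α j) := by
    have hfe : univ.filter (fun S : Finset (Fin (n+1)) => ¬ (S ∩ I).Nonempty)
        = Iᶜ.powerset := by
      ext S
      simp only [Finset.mem_filter, Finset.mem_univ, true_and, Finset.mem_powerset,
        Finset.not_nonempty_iff_eq_empty]
      constructor
      · intro h x hxS
        rw [Finset.mem_compl]
        intro hxI
        have : x ∈ S ∩ I := Finset.mem_inter.2 ⟨hxS, hxI⟩
        rw [h] at this
        exact absurd this (Finset.notMem_empty x)
      · intro h
        rw [Finset.eq_empty_iff_forall_notMem]
        intro x hx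
        obtain ⟨hxS, hxI⟩ := Finset.mem_inter.1 hx
        exact (Finset.mem_compl.1 (h hxS)) hxI
    rw [hfe]
    have hterm : ∀ S ∈ Iᶜ.powerset,
        π S = (∏ j ∈ I, (1 - α j)) * ((∏ j ∈ S, α j) * ∏ j ∈ Iᶜ \ S, (1 - α j)) := by
      intro S hS
      have hSsub : S ⊆ Iᶜ := Finset.mem_powerset.1 hS
      have hcompl : Sᶜ = I ∪ (Iᶜ \ S) := by
        ext x
        simp only [Finset.mem_compl, Finset.mem_union, Finset.mem_sdiff]
        constructor
        · intro h
          by_cases hxI : x ∈ I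
          · exact Or.inl hxI
          · exact Or.inr ⟨hxI, h⟩
        · rintro (hxI | ⟨_, hxS⟩)
          · exact fun hxS => (Finset.mem_compl.1 (hSsub hxS)) hxI
          · exact hxS
      simp only [hπ]
      rw [hcompl, Finset.prod_union]
      · ring
      · refine Finset.disjoint_left.2 fun x hxI hx => ?_
        exact (Finset.mem_compl.1 (Finset.mem_sdiff.1 hx).1) hxI
    rw [Finset.sum_congr rfl hterm, ← Finset.mul_sum]
    have h2 := Finset.prod_add α (fun j => 1 - α j) Iᶜ
    rw [Finset.prod_congr rfl (fun j _ => hαγ1 j), Finset.prod_const_one] at h2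
    rw [← h2, mul_one]
  have hF1sum : ∑ S ∈ univ.filter (fun S : Finset (Fin (n+1)) => (S ∩ I).Nonempty), π S
      = 1 - ∏ j ∈ I, (1 - α j) := by
    have := Finset.sum_filter_add_sum_filter_not
      (univ : Finset (Finset (Fin (n+1)))) (fun S => (S ∩ I).Nonempty) π
    rw [hsum_univ] at this
    rw [hsum_empty] at this
    linarith
  set F1 : Finset (Finset (Fin (n+1))) :=
    univ.filter (fun S : Finset (Fin (n+1)) => (S ∩ I).Nonempty) with hF1
  set D : Finset (Finset (Fin (n+1))) :=
    (Iᶜ ×ˢ I).image (fun p : Fin (n+1) × Fin (n+1) => ({p.1, p.2} : Finset (Fin (n+1)))) with hD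
  set W : ℝ := ∑ p ∈ Iᶜ ×ˢ I, π {p.1, p.2} * ((1 - α p.1) / 2) with hW
  have hpair_ne : ∀ p ∈ Iᶜ ×ˢ I, p.1 ≠ p.2 := by
    intro p hp
    rw [Finset.mem_product] at hp
    intro h
    exact (Finset.mem_compl.1 hp.1) (h ▸ hp.2)
  have hinj : ∀ p ∈ Iᶜ ×ˢ I, ∀ p' ∈ Iᶜ ×ˢ I,
      ({p.1, p.2} : Finset (Fin (n+1))) = {p'.1, p'.2} → p = p' := by
    intro p hp p' hp' h
    rw [Finset.mem_product] at hp hp'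
    have h1 : p.1 ∈ ({p'.1, p'.2} : Finset (Fin (n+1))) := h ▸ Finset.mem_insert_self _ _
    rw [Finset.mem_insert, Finset.mem_singleton] at h1
    have hp1 : p.1 = p'.1 :=
      h1.resolve_right (fun he => (Finset.mem_compl.1 hp.1) (he ▸ hp'.2))
    have h2 : p.2 ∈ ({p'.1, p'.2} : Finset (Fin (n+1))) := by
      rw [← h]; simp
    rw [Finset.mem_insert, Finset.mem_singleton] at h2
    have hp2 : p.2 = p'.2 :=
      h2.resolve_left (fun he => (Finset.mem_compl.1 hp'.1) (he ▸ hp.2))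
    exact Prod.ext hp1 hp2
  have hDsum : ∀ (f : Finset (Fin (n+1)) → ℝ),
      ∑ S ∈ D, f S = ∑ p ∈ Iᶜ ×ˢ I, f {p.1, p.2} := by
    intro f
    rw [hD]
    exact Finset.sum_image hinj
  have hDF1 : D ⊆ F1 := by
    intro S hS
    rw [hD, Finset.mem_image] at hS
    obtain ⟨p, hp, rfl⟩ := hS
    rw [Finset.mem_product] at hp
    rw [hF1, Finset.mem_filter]
    exact ⟨Finset.mem_univ _, ⟨p.2, Finset.mem_inter.2 ⟨by simp, hp.2⟩⟩⟩
  have e1 : ∑ S ∈ (univ : Finset (Finset (Fin (n+1)))), c S * π S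
      = ∑ S ∈ F1, c S * π S := by
    symm
    apply Finset.sum_subset (Finset.subset_univ F1)
    intro S _ hS
    have hSne : ¬ (S ∩ I).Nonempty := fun hne =>
      hS (by rw [hF1, Finset.mem_filter]; exact ⟨Finset.mem_univ S, hne⟩)
    rw [hczero S hSne, zero_mul]
  have e2 : ∑ S ∈ F1 \ D, c S * π S + ∑ S ∈ D, c S * π S = ∑ S ∈ F1, c S * π S :=
    Finset.sum_sdiff hDF1
  have e2' : ∑ S ∈ F1 \ D, π S + ∑ S ∈ D, π S = ∑ S ∈ F1, π S :=
    Finset.sum_sdiff hDF1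
  have e3 : ∑ S ∈ F1 \ D, c S * π S ≤ ∑ S ∈ F1 \ D, π S := by
    refine Finset.sum_le_sum fun S hS => ?_
    have hSF1 : S ∈ F1 := (Finset.mem_sdiff.1 hS).1
    rw [hF1, Finset.mem_filter] at hSF1
    calc c S * π S ≤ 1 * π S := mul_le_mul_of_nonneg_right (hc1 S hSF1.2) (hπ0 S)
      _ = π S := one_mul _
  have e4 : ∑ S ∈ D, c S * π S ≤ ∑ S ∈ D, π S - W := by
    rw [hDsum (fun S => c S * π S), hDsum π, hW, ← Finset.sum_sub_distrib]
    refine Finset.sum_le_sum fun p hp => ?_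
    have hp' := Finset.mem_product.1 hp
    have hne := hpair_ne p hp
    have hcval : c {p.1, p.2} = q {p.1, p.2} p.2 := hcpair p.1 hp'.1 p.2 hp'.2
    have hcb : c {p.1, p.2} ≤ (1 + α p.1) / 2 := by rw [hcval]; exact hcap p.1 p.2 hne
    nlinarith [hπ0 ({p.1, p.2} : Finset (Fin (n+1)))]
  have hWval : W = 1 / 2 * (∏ k, (1 - α k)) * (∑ i ∈ I, α i / (1 - α i)) * (∑ j ∈ Iᶜ, α j) := by
    rw [hW, Finset.sum_product]
    have hterm : ∀ i ∈ Iᶜ, ∀ j ∈ I, π {i, j} * ((1 - α i) / 2)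
        = (1 / 2 * (∏ k, (1 - α k)) * (α j / (1 - α j))) * α i := by
      intro i hi j hj
      have hij : i ≠ j := fun h => (Finset.mem_compl.1 hi) (h ▸ hj)
      have hγj : (1:ℝ) - α j ≠ 0 := ne_of_gt (by linarith [(hα j).2])
      have hP : (∏ k, (1 - α k))
          = ((1 - α i) * (1 - α j)) * ∏ k ∈ ({i, j} : Finset (Fin (n+1)))ᶜ, (1 - α k) := by
        rw [← Finset.prod_mul_prod_compl ({i, j} : Finset (Fin (n+1))) (fun k => 1 - α k),
          Finset.prod_pair hij]
      simp only [hπ]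
      rw [Finset.prod_pair hij, hP]
      field_simp
    calc ∑ i ∈ Iᶜ, ∑ j ∈ I, π {i, j} * ((1 - α i) / 2)
        = ∑ i ∈ Iᶜ, (1 / 2 * (∏ k, (1 - α k)) * (∑ j ∈ I, α j / (1 - α j))) * α i := by
          refine Finset.sum_congr rfl fun i hi => ?_
          rw [Finset.sum_congr rfl (fun j hj => hterm i hi j hj), ← Finset.sum_mul,
            ← Finset.mul_sum]
      _ = 1 / 2 * (∏ k, (1 - α k)) * (∑ j ∈ I, α j / (1 - α j)) * (∑ i ∈ Iᶜ, α i) := by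
          rw [← Finset.mul_sum]
  -- the sum of the interim allocation over I
  have hIneq : (1 - ∏ j, (1 - α j)) * (∑ i ∈ I, α i)
      ≤ (1 - ∏ j ∈ I, (1 - α j)) - W := by
    rw [hmain, e1]
    linarith [e2, e2', e3, e4, hF1sum]
  rw [hWval] at hIneq
  linarith

end Necessity

theorem stmt_3 (n : ℕ) (hn : 2 ≤ n) (α : Fin n → ℝ)
    (hα : ∀ i, 0 < α i ∧ α i < 1) (hsum : ∑ i, α i = 1) :
    (∃ q : Finset (Fin n) → Fin n → ℝ,
      (∀ S i, 0 ≤ q S i ∧ q S i ≤ 1) ∧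
      (∀ S i, i ∉ S → q S i = 0) ∧
      (∀ S : Finset (Fin n), S.Nonempty → ∑ i ∈ S, q S i = 1) ∧
      (∀ i, (1 - ∏ j, (1 - α j)) =
        ∑ S ∈ Finset.univ.filter (fun S : Finset (Fin n) => i ∈ S),
          q S i * (∏ j ∈ S.erase i, α j) * (∏ j ∈ Sᶜ, (1 - α j))) ∧
      (∀ i j : Fin n, i ≠ j → q {i, j} j ≤ (1 + α i) / 2)) ↔
    (∀ I : Finset (Fin n),
      (1 - ∏ k, (1 - α k)) * (∑ i ∈ I, α i)
        + (∏ i ∈ I, (1 - α i))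
        + (1 / 2) * (∏ k, (1 - α k)) * (∑ i ∈ I, α i / (1 - α i)) * (∑ j ∈ Iᶜ, α j)
        ≤ 1) := by
  obtain ⟨N, rfl⟩ : ∃ N, n = N + 1 := ⟨n - 1, by omega⟩
  constructor
  · rintro ⟨q, hq01, hq0, hrow, hint, hcap⟩ I
    exact necessity α hα hsum q hq01 hq0 hrow hint hcap I
  · intro _
    refine ⟨qfun α, ?_, ?_, ?_, ?_, ?_⟩
    · exact fun S i => ⟨qfun_nonneg hα S i, qfun_le_one hα hsum S i⟩
    · exact fun S i h => qfun_zero_of_not_mem S i h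
    · exact fun S hS => qfun_row hsum S hS
    · exact fun i => qfun_interim hsum i
    · exact fun i j hij => qfun_cap hα hsum i j hij
end

section
/- Let n ≥ 2 and let α_1,…,α_n ∈ (0,1) be real numbers with Σ_{i=1}^n α_i = 1. Then there exist allocation probabilities (q_S^i) (a family with q_S^i ∈ [0,1], q_S^i = 0 when i ∉ S, Σ_{i∈S} q_S^i = 1 for every nonempty S ⊆ {1,…,n}) such that: (a) for every i, Σ_{S∋i} q_S^i ∏_{j∈S∖{i}} α_j ∏_{j∉S}(1−α_j) = 1 − ∏_{k=1}^n (1−α_k), and (b) q_{{i,j}}^j ≤ (1+α_i)/2 for every two-element subset {i,j} ⊆ {1,…,n} and both orderings of i and j. -/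
namespace Stmt4

variable {n : ℕ}


/-- cyclic distance from `k` to `x`, in `[1, n]`; equals `n` iff `x = k`. -/
def D (n : ℕ) (k x : Fin n) : ℕ := if k.val < x.val then x.val - k.val else n + x.val - k.val



lemma D_ge_one (k x : Fin n) : 1 ≤ D n k x := by
  have := k.isLt; have := x.isLt; unfold D; split <;> omega

lemma D_le (k x : Fin n) : D n k x ≤ n := by
  have := k.isLt; have := x.isLt; unfold D; split <;> omega

lemma D_self (k : Fin n) : D n k k = n := by
  unfold D; simp

lemma D_lt_of_ne {k x : Fin n} (h : x ≠ k) : D n k x < n := by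
  have := k.isLt; have := x.isLt
  have hv : x.val ≠ k.val := fun hc => h (Fin.ext hc)
  unfold D; split <;> omega

lemma D_inj (k : Fin n) : Function.Injective (D n k) := by
  intro x y hxy
  have := k.isLt; have := x.isLt; have := y.isLt
  apply Fin.ext
  unfold D at hxy; split at hxy <;> split at hxy <;> omega

lemma D_inj' (i : Fin n) : Function.Injective (fun k => D n k i) := by
  intro x y hxy
  have := i.isLt; have := x.isLt; have := y.isLt
  apply Fin.ext
  simp only [D] at hxy; split at hxy <;> split at hxy <;> omega

lemma D_add (k x : Fin n) (h : x ≠ k) : D n k x + D n x k = n := by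
  have := k.isLt; have := x.isLt
  have hv : x.val ≠ k.val := fun hc => h (Fin.ext hc)
  unfold D; split <;> split <;> omega

lemma D_E (k i x : Fin n) : D n k x < D n k i ↔ D n x i < D n k i := by
  have := k.isLt; have := x.isLt; have := i.isLt
  unfold D; split <;> split <;> split <;> omega

/-- allocation rule: give to the member of `S` closest after the α-weighted random start. -/
def Q (α : Fin n → ℝ) (E : Fin n → Fin n → ℕ) (S : Finset (Fin n)) (i : Fin n) : ℝ :=
  ∑ k, if i ∈ S ∧ ∀ x ∈ S, E k i ≤ E k x then α k else 0

section Generic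

variable (α : Fin n → ℝ) (E : Fin n → Fin n → ℕ)
variable (hα : ∀ i, 0 < α i) (hsum : ∑ i, α i = 1)
variable (hb1 : ∀ k x, 1 ≤ E k x) (hb2 : ∀ k x, E k x ≤ n)
variable (hself : ∀ k, E k k = n)
variable (hinj : ∀ k, Function.Injective (E k))
variable (hinjk : ∀ i, Function.Injective (fun k => E k i))
variable (hE : ∀ k i x, E k x < E k i ↔ E x i < E k i)

include hα in
lemma Q_nonneg (S : Finset (Fin n)) (i : Fin n) : 0 ≤ Q α E S i := by
  apply Finset.sum_nonneg
  intro k _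
  split
  · exact (hα k).le
  · exact le_rfl

include hα hsum in
lemma Q_le_one (S : Finset (Fin n)) (i : Fin n) : Q α E S i ≤ 1 := by
  rw [← hsum]
  apply Finset.sum_le_sum
  intro k _
  split
  · exact le_rfl
  · exact (hα k).le

lemma Q_not_mem (S : Finset (Fin n)) (i : Fin n) (h : i ∉ S) : Q α E S i = 0 := by
  apply Finset.sum_eq_zero
  intro k _
  rw [if_neg]
  tauto

include hinj hsum in
lemma Q_rowsum (S : Finset (Fin n)) (hS : S.Nonempty) : ∑ i ∈ S, Q α E S i = 1 := by
  unfold Q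
  rw [Finset.sum_comm]
  rw [← hsum]
  apply Finset.sum_congr rfl
  intro k _
  obtain ⟨i0, hi0S, hi0min⟩ := Finset.exists_min_image S (fun x => E k x) hS
  rw [Finset.sum_eq_single_of_mem i0 hi0S]
  · rw [if_pos ⟨hi0S, hi0min⟩]
  · intro b hbS hbne
    rw [if_neg]
    rintro ⟨-, hbmin⟩
    exact hbne (hinj k (le_antisymm (hbmin i0 hi0S) (hi0min b hbS)))

end Generic


lemma marginal (α : Fin n → ℝ) (i : Fin n) (B : Finset (Fin n)) (hiB : i ∉ B) :
    ∑ S ∈ Finset.univ.filter (fun S : Finset (Fin n) => i ∈ S ∧ Disjoint S B),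
      ((∏ j ∈ S.erase i, α j) * ∏ j ∈ Sᶜ, (1 - α j)) = ∏ j ∈ B, (1 - α j) := by
  classical
  set u : Finset (Fin n) := (Finset.univ.erase i) \ B with hu
  have hiu : i ∉ u := by simp [hu]
  -- reindex by T = S.erase i
  rw [show (Finset.univ.filter (fun S : Finset (Fin n) => i ∈ S ∧ Disjoint S B))
      = u.powerset.image (fun T => insert i T) by
    ext S
    simp only [Finset.mem_filter, Finset.mem_univ, true_and, Finset.mem_image,
      Finset.mem_powerset]
    constructor
    · rintro ⟨hiS, hdisj⟩
      refine ⟨S.erase i, ?_, by simp [Finset.insert_erase hiS]⟩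
      intro x hx
      have hx' := Finset.mem_of_mem_erase hx
      rw [Finset.mem_erase] at hx
      simp [hu, Finset.mem_erase, hx.1]
      exact Finset.disjoint_left.mp hdisj hx'
    · rintro ⟨T, hT, rfl⟩
      refine ⟨Finset.mem_insert_self _ _, ?_⟩
      rw [Finset.disjoint_left]
      intro a ha
      rcases Finset.mem_insert.mp ha with rfl | haT
      · exact hiB
      · have := hT haT
        simp [hu] at this
        exact this.2]
  rw [Finset.sum_image (by
    intro T1 h1 T2 h2 hins
    have h1' : i ∉ T1 := fun h => hiu (Finset.mem_powerset.mp h1 h)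
    have h2' : i ∉ T2 := fun h => hiu (Finset.mem_powerset.mp h2 h)
    have := congrArg (fun S => Finset.erase S i) hins
    simpa [Finset.erase_insert, h1', h2'] using this)]
  have key : ∀ T ∈ u.powerset,
      (∏ j ∈ (insert i T).erase i, α j) * ∏ j ∈ (insert i T)ᶜ, (1 - α j)
      = (∏ j ∈ B, (1 - α j)) * ((∏ j ∈ T, α j) * ∏ j ∈ u \ T, (1 - α j)) := by
    intro T hT
    rw [Finset.mem_powerset] at hT
    have hiT : i ∉ T := fun h => hiu (hT h)
    have h1 : (insert i T).erase i = T := Finset.erase_insert hiT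
    have h2 : (insert i T)ᶜ = B ∪ (u \ T) := by
      ext x
      simp only [Finset.mem_compl, Finset.mem_insert, Finset.mem_union, Finset.mem_sdiff, hu,
        Finset.mem_erase, Finset.mem_univ, and_true]
      constructor
      · intro h
        push_neg at h
        by_cases hxB : x ∈ B
        · exact Or.inl hxB
        · exact Or.inr ⟨⟨h.1, hxB⟩, h.2⟩
      · rintro (hxB | ⟨⟨hxi, hxB⟩, hxT⟩)
        · push_neg
          constructor
          · rintro rfl; exact hiB hxB
          · intro hxT; exact absurd (hT hxT) (by simp [hu, hxB])
        · push_neg; exact ⟨hxi, hxT⟩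
    have hdisj : Disjoint B (u \ T) := by
      apply Finset.disjoint_left.mpr
      intro a haB ha
      rw [Finset.mem_sdiff, hu, Finset.mem_sdiff] at ha
      exact ha.1.2 haB
    rw [h1, h2, Finset.prod_union hdisj]
    ring
  rw [Finset.sum_congr rfl key, ← Finset.mul_sum, ← Finset.prod_add α (fun j => 1 - α j) u]
  simp


lemma Q_interim (α : Fin n → ℝ) (E : Fin n → Fin n → ℕ)
    (hb1 : ∀ k x, 1 ≤ E k x) (hb2 : ∀ k x, E k x ≤ n)
    (hself : ∀ k, E k k = n)
    (hinjk : ∀ i, Function.Injective (fun k => E k i))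
    (hE : ∀ k i x, E k x < E k i ↔ E x i < E k i)
    (i : Fin n) :
    ∑ S ∈ Finset.univ.filter (fun S : Finset (Fin n) => i ∈ S),
      Q α E S i * (∏ j ∈ S.erase i, α j) * (∏ j ∈ Sᶜ, (1 - α j))
    = 1 - ∏ k, (1 - α k) := by
  classical
  set B : Fin n → Finset (Fin n) :=
    fun k => Finset.univ.filter (fun x => E x i < E k i) with hB
  -- step 1: rewrite the winner condition
  have hQ : ∀ S ∈ Finset.univ.filter (fun S : Finset (Fin n) => i ∈ S),
      Q α E S i = ∑ k, if Disjoint S (B k) then α k else 0 := by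
    intro S hS
    rw [Finset.mem_filter] at hS
    apply Finset.sum_congr rfl
    intro k _
    congr 1
    simp only [eq_iff_iff]
    constructor
    · rintro ⟨-, hmin⟩
      rw [Finset.disjoint_left]
      intro x hxS hxB
      rw [hB, Finset.mem_filter] at hxB
      exact absurd ((hE k i x).mpr hxB.2) (not_lt.mpr (hmin x hxS))
    · intro hdisj
      refine ⟨hS.2, fun x hxS => ?_⟩
      by_contra hlt
      push_neg at hlt
      exact Finset.disjoint_left.mp hdisj hxS
        (by rw [hB, Finset.mem_filter]; exact ⟨Finset.mem_univ _, (hE k i x).mp hlt⟩)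
  -- step 2+3: swap sums and apply marginal
  have step : ∑ S ∈ Finset.univ.filter (fun S : Finset (Fin n) => i ∈ S),
      Q α E S i * (∏ j ∈ S.erase i, α j) * (∏ j ∈ Sᶜ, (1 - α j))
      = ∑ k, α k * ∏ j ∈ B k, (1 - α j) := by
    rw [Finset.sum_congr rfl (fun S hS => by rw [hQ S hS])]
    have : ∀ S ∈ Finset.univ.filter (fun S : Finset (Fin n) => i ∈ S),
        (∑ k, if Disjoint S (B k) then α k else 0) * (∏ j ∈ S.erase i, α j) * (∏ j ∈ Sᶜ, (1 - α j))
        = ∑ k, if Disjoint S (B k) then α k * ((∏ j ∈ S.erase i, α j) * (∏ j ∈ Sᶜ, (1 - α j))) else 0 := by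
      intro S _
      rw [Finset.sum_mul, Finset.sum_mul]
      apply Finset.sum_congr rfl
      intro k _
      split <;> ring
    rw [Finset.sum_congr rfl this, Finset.sum_comm]
    apply Finset.sum_congr rfl
    intro k _
    have hiB : i ∉ B k := by
      rw [hB, Finset.mem_filter]
      rintro ⟨-, hlt⟩
      rw [hself] at hlt
      exact absurd (hb2 k i) (not_le.mpr hlt)
    rw [← marginal α i (B k) hiB, Finset.mul_sum]
    rw [Finset.sum_filter, Finset.sum_filter]
    apply Finset.sum_congr rfl
    intro S _
    by_cases h1 : i ∈ S <;> by_cases h2 : Disjoint S (B k) <;> simp [h1, h2]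
  rw [step]
  -- step 4: telescoping
  have hn : 0 < n := i.pos
  set τ : Fin n → ℕ := fun k => E k i with hτ
  set G : ℕ → ℝ := fun m => ∏ x ∈ Finset.univ.filter (fun x => τ x ≤ m), (1 - α x) with hG
  have hBG : ∀ k, ∏ j ∈ B k, (1 - α j) = G (τ k - 1) := by
    intro k
    rw [hG, hB]
    apply Finset.prod_congr _ (fun _ _ => rfl)
    apply Finset.filter_congr
    intro x _
    have h1 := hb1 k i
    simp only [hτ]
    omega
  have hGstep : ∀ k, G (τ k) = (1 - α k) * G (τ k - 1) := by
    intro k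
    simp only [hG]
    have hfil : Finset.univ.filter (fun x => τ x ≤ τ k)
        = insert k (Finset.univ.filter (fun x => τ x ≤ τ k - 1)) := by
      ext x
      simp only [Finset.mem_filter, Finset.mem_univ, true_and, Finset.mem_insert]
      constructor
      · intro hx
        rcases eq_or_lt_of_le hx with heq | hlt
        · exact Or.inl (hinjk i heq)
        · exact Or.inr (by omega)
      · rintro (rfl | hx)
        · exact le_rfl
        · omega
    rw [hfil, Finset.prod_insert (by
      simp only [Finset.mem_filter, Finset.mem_univ, true_and]
      have := hb1 k i
      simp only [hτ]
      omega)]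
  have hterm : ∀ k, α k * ∏ j ∈ B k, (1 - α j) = G (τ k - 1) - G (τ k) := by
    intro k
    rw [hBG, hGstep]
    ring
  rw [Finset.sum_congr rfl (fun k _ => hterm k)]
  have himg : Finset.univ.image τ = Finset.Icc 1 n := by
    apply Finset.eq_of_subset_of_card_le
    · intro t ht
      rw [Finset.mem_image] at ht
      obtain ⟨k, -, rfl⟩ := ht
      rw [Finset.mem_Icc]
      exact ⟨hb1 k i, hb2 k i⟩
    · rw [Finset.card_image_of_injective _ (hinjk i)]
      simp [Nat.card_Icc]
  have hrw : ∑ k : Fin n, (G (τ k - 1) - G (τ k))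
      = ∑ t ∈ Finset.univ.image τ, (G (t - 1) - G t) := by
    rw [Finset.sum_image (fun a _ b _ h => hinjk i h)]
  rw [hrw, himg]
  have hIcc : Finset.Icc 1 n = Finset.image (fun m => m + 1) (Finset.range n) := by
    ext t
    simp only [Finset.mem_Icc, Finset.mem_image, Finset.mem_range]
    constructor
    · rintro ⟨h1, h2⟩; exact ⟨t - 1, by omega, by omega⟩
    · rintro ⟨m, hm, rfl⟩; omega
  rw [hIcc, Finset.sum_image (fun a _ b _ h => by omega)]
  simp only [Nat.add_sub_cancel]
  rw [Finset.sum_range_sub' G n]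
  have hG0 : G 0 = 1 := by
    simp only [hG]
    rw [Finset.filter_false_of_mem (fun x _ => by have := hb1 x i; simp only [hτ]; omega)]
    exact Finset.prod_empty
  have hGn : G n = ∏ k, (1 - α k) := by
    simp only [hG]
    rw [Finset.filter_true_of_mem (fun x _ => hb2 x i)]
  rw [hG0, hGn]


lemma pair_sum (α : Fin n → ℝ) (hsum : ∑ i, α i = 1) (i j : Fin n) (hij : i ≠ j) :
    Q α (D n) {i, j} j + Q α (fun k x => D n x k) {i, j} j = 1 + α i - α j := by
  classical
  unfold Q
  rw [← Finset.sum_add_distrib]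
  have key : ∀ k : Fin n,
      ((if j ∈ ({i, j} : Finset (Fin n)) ∧ ∀ x ∈ ({i, j} : Finset (Fin n)), D n k j ≤ D n k x
        then α k else 0)
      + (if j ∈ ({i, j} : Finset (Fin n)) ∧ ∀ x ∈ ({i, j} : Finset (Fin n)), D n j k ≤ D n x k
        then α k else 0))
      = α k + ((if k = i then α k else 0) - (if k = j then α k else 0)) := by
    intro k
    have hjm : j ∈ ({i, j} : Finset (Fin n)) := by simp
    have hc1 : (j ∈ ({i, j} : Finset (Fin n)) ∧ ∀ x ∈ ({i, j} : Finset (Fin n)), D n k j ≤ D n k x)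
        ↔ D n k j ≤ D n k i := by
      simp [hjm, Finset.forall_mem_insert]
    have hc2 : (j ∈ ({i, j} : Finset (Fin n)) ∧ ∀ x ∈ ({i, j} : Finset (Fin n)), D n j k ≤ D n x k)
        ↔ D n j k ≤ D n i k := by
      simp [hjm, Finset.forall_mem_insert]
    simp only [hc1, hc2]
    by_cases hki : k = i
    · have t1 : D n k j ≤ D n k i := by
        rw [hki, D_self i]
        exact (D_lt_of_ne (Ne.symm hij)).le
      have t2 : D n j k ≤ D n i k := by
        rw [hki, D_self i]
        exact (D_lt_of_ne hij).le
      rw [if_pos t1, if_pos t2, if_pos hki, if_neg (show ¬ k = j by rw [hki]; exact hij)]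
      ring
    · by_cases hkj : k = j
      · have t1 : ¬ (D n k j ≤ D n k i) := by
          rw [hkj, D_self j]
          exact not_le.mpr (D_lt_of_ne hij)
        have t2 : ¬ (D n j k ≤ D n i k) := by
          rw [hkj, D_self j]
          exact not_le.mpr (D_lt_of_ne (Ne.symm hij))
        rw [if_neg t1, if_neg t2, if_neg hki, if_pos hkj]
        ring
      · rw [if_neg hki, if_neg hkj]
        have h1 : D n k j + D n j k = n := D_add k j (fun h => hkj h.symm)
        have h2 : D n k i + D n i k = n := D_add k i (fun h => hki h.symm)
        have h3 : D n k j ≠ D n k i := fun h => hij (D_inj k h).symm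
        by_cases hc : D n k j ≤ D n k i
        · rw [if_pos hc, if_neg (by omega)]
          ring
        · rw [if_neg hc, if_pos (by omega)]
          ring
  rw [Finset.sum_congr rfl (fun k _ => key k), Finset.sum_add_distrib, hsum,
    Finset.sum_sub_distrib, Finset.sum_ite_eq' Finset.univ i α,
    Finset.sum_ite_eq' Finset.univ j α]
  simp only [Finset.mem_univ, if_true]
  ring


end Stmt4

theorem stmt_4 (n : ℕ) (hn : 2 ≤ n) (α : Fin n → ℝ)
    (hα : ∀ i, 0 < α i ∧ α i < 1) (hsum : ∑ i, α i = 1) :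
    ∃ q : Finset (Fin n) → Fin n → ℝ,
      (∀ S i, 0 ≤ q S i ∧ q S i ≤ 1) ∧
      (∀ S i, i ∉ S → q S i = 0) ∧
      (∀ S : Finset (Fin n), S.Nonempty → ∑ i ∈ S, q S i = 1) ∧
      (∀ i, (∑ S ∈ Finset.univ.filter (fun S : Finset (Fin n) => i ∈ S),
          q S i * (∏ j ∈ S.erase i, α j) * (∏ j ∈ Sᶜ, (1 - α j)))
        = 1 - ∏ k, (1 - α k)) ∧
      (∀ i j : Fin n, i ≠ j → q {i, j} j ≤ (1 + α i) / 2) := by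
  classical
  open Stmt4 in
  have hαp : ∀ i, 0 < α i := fun i => (hα i).1
  refine ⟨fun S i => (Stmt4.Q α (Stmt4.D n) S i
      + Stmt4.Q α (fun k x => Stmt4.D n x k) S i) / 2, ?_, ?_, ?_, ?_, ?_⟩
  · intro S i
    have h1 := Stmt4.Q_nonneg α (Stmt4.D n) hαp S i
    have h2 := Stmt4.Q_nonneg α (fun k x => Stmt4.D n x k) hαp S i
    have h3 := Stmt4.Q_le_one α (Stmt4.D n) hαp hsum S i
    have h4 := Stmt4.Q_le_one α (fun k x => Stmt4.D n x k) hαp hsum S i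
    constructor <;> [positivity; linarith]
  · intro S i hiS
    beta_reduce
    rw [Stmt4.Q_not_mem α _ S i hiS, Stmt4.Q_not_mem α _ S i hiS]
    norm_num
  · intro S hS
    rw [← Finset.sum_div, Finset.sum_add_distrib,
      Stmt4.Q_rowsum α (Stmt4.D n) hsum Stmt4.D_inj S hS,
      Stmt4.Q_rowsum α (fun k x => Stmt4.D n x k) hsum (fun k => Stmt4.D_inj' k) S hS]
    norm_num
  · intro i
    have hre : ∀ S ∈ Finset.univ.filter (fun S : Finset (Fin n) => i ∈ S),
        (Stmt4.Q α (Stmt4.D n) S i + Stmt4.Q α (fun k x => Stmt4.D n x k) S i) / 2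
          * (∏ j ∈ S.erase i, α j) * (∏ j ∈ Sᶜ, (1 - α j))
        = (Stmt4.Q α (Stmt4.D n) S i * (∏ j ∈ S.erase i, α j) * (∏ j ∈ Sᶜ, (1 - α j))
          + Stmt4.Q α (fun k x => Stmt4.D n x k) S i * (∏ j ∈ S.erase i, α j)
            * (∏ j ∈ Sᶜ, (1 - α j))) / 2 := by
      intro S _
      ring
    rw [Finset.sum_congr rfl hre, ← Finset.sum_div, Finset.sum_add_distrib,
      Stmt4.Q_interim α (Stmt4.D n) (fun k x => Stmt4.D_ge_one k x)
        (fun k x => Stmt4.D_le k x) Stmt4.D_self Stmt4.D_inj' Stmt4.D_E i,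
      Stmt4.Q_interim α (fun k x => Stmt4.D n x k) (fun k x => Stmt4.D_ge_one x k)
        (fun k x => Stmt4.D_le x k) Stmt4.D_self (fun j => Stmt4.D_inj j)
        (fun k i x => (Stmt4.D_E i k x).symm) i]
    ring
  · intro i j hij
    beta_reduce
    rw [Stmt4.pair_sum α hsum i j hij]
    have := (hα j).1
    linarith
end

section
/- Let n ≥ 1 and let α_1,…,α_n ∈ (0,1] be real numbers with Σ_{i=1}^n α_i = 1. Then there exist allocation probabilities (q_S^i) (a family with q_S^i ∈ [0,1], q_S^i = 0 when i ∉ S, Σ_{i∈S} q_S^i = 1 for every nonempty S ⊆ {1,…,n}) such that for every i, Σ_{S∋i} q_S^i ∏_{j∈S∖{i}} α_j ∏_{j∉S}(1−α_j) = 1 − ∏_{j=1}^n (1−α_j); that is, the induced interim allocation probabilities are the same for all agents and equal 1 − ∏_{j=1}^n (1−α_j). -/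
open Finset

private def EE (n : ℕ) (k j : Fin n) : ℕ := (j.1 + (n - 1 - k.1)) % n

private lemma mod_small {x n : ℕ} (hn : 0 < n) (h : x < 2 * n) :
    x % n = if x < n then x else x - n := by
  split
  · exact Nat.mod_eq_of_lt ‹_›
  · rw [Nat.mod_eq_sub_mod (by omega), Nat.mod_eq_of_lt (by omega)]

private lemma EE_lt {n : ℕ} (k j : Fin n) : EE n k j < n := Nat.mod_lt _ k.pos

private lemma EE_inj₂ {n : ℕ} (k : Fin n) {a b : Fin n}
    (h : EE n k a = EE n k b) : a = b := by
  have hn := k.pos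
  have h1 := a.isLt; have h2 := b.isLt; have h3 := k.isLt
  unfold EE at h
  rw [mod_small hn (by omega), mod_small hn (by omega)] at h
  split_ifs at h <;> (apply Fin.ext; omega)

private lemma EE_inj₁ {n : ℕ} (i : Fin n) {k k' : Fin n}
    (h : EE n k i = EE n k' i) : k = k' := by
  have hn := i.pos
  have h1 := i.isLt; have h2 := k.isLt; have h3 := k'.isLt
  unfold EE at h
  rw [mod_small hn (by omega), mod_small hn (by omega)] at h
  split_ifs at h <;> (apply Fin.ext; omega)

private def kap (n : ℕ) (i : Fin n) (t : ℕ) : Fin n :=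
  ⟨(i.1 + (n - 1 - t)) % n, Nat.mod_lt _ i.pos⟩

private lemma EE_kap {n : ℕ} (i : Fin n) {t : ℕ} (ht : t < n) :
    EE n (kap n i t) i = t := by
  have hn := i.pos
  have h1 := i.isLt
  have hv : (kap n i t).1 = (i.1 + (n - 1 - t)) % n := rfl
  rw [mod_small hn (by omega)] at hv
  have h2 := (kap n i t).isLt
  unfold EE
  rw [mod_small hn (by omega)]
  split_ifs at hv ⊢ <;> omega

private lemma EE_lt_iff {n : ℕ} (i j k : Fin n) :
    EE n k j < EE n k i ↔ EE n j i < EE n k i := by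
  have hn := i.pos
  have h1 := i.isLt; have h2 := j.isLt; have h3 := k.isLt
  unfold EE
  rw [mod_small hn (by omega), mod_small hn (by omega), mod_small hn (by omega)]
  split_ifs <;> omega

theorem stmt_5 (n : ℕ) (hn : 1 ≤ n) (α : Fin n → ℝ)
    (hα : ∀ i, 0 < α i ∧ α i ≤ 1) (hsum : ∑ i, α i = 1) :
    ∃ q : Finset (Fin n) → Fin n → ℝ,
      (∀ S i, 0 ≤ q S i ∧ q S i ≤ 1) ∧
      (∀ S i, i ∉ S → q S i = 0) ∧
      (∀ S : Finset (Fin n), S.Nonempty → ∑ i ∈ S, q S i = 1) ∧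
      (∀ i, (∑ S ∈ Finset.univ.filter (fun S : Finset (Fin n) => i ∈ S),
          q S i * (∏ j ∈ S.erase i, α j) * (∏ j ∈ Sᶜ, (1 - α j)))
        = 1 - ∏ j, (1 - α j)) := by
  refine ⟨fun S i => ∑ k, if i ∈ S ∧ ∀ j ∈ S, EE n k i ≤ EE n k j then α k else 0,
    ?_, ?_, ?_, ?_⟩
  · intro S i
    constructor
    · exact Finset.sum_nonneg fun k _ => by
        split
        · exact (hα k).1.le
        · exact le_rfl
    · calc (∑ k, if i ∈ S ∧ ∀ j ∈ S, EE n k i ≤ EE n k j then α k else 0)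
          ≤ ∑ k, α k := Finset.sum_le_sum fun k _ => by
            split
            · exact le_rfl
            · exact (hα k).1.le

        _ = 1 := hsum
  · intro S i hi
    exact Finset.sum_eq_zero fun k _ => by simp [hi]
  · intro S hS
    rw [Finset.sum_comm]
    have key : ∀ k : Fin n,
        (∑ i ∈ S, if i ∈ S ∧ ∀ j ∈ S, EE n k i ≤ EE n k j then α k else 0) = α k := by
      intro k
      obtain ⟨i0, hi0S, hi0min⟩ := S.exists_min_image (EE n k) hS
      have hcong : ∀ i ∈ S,
          (if i ∈ S ∧ ∀ j ∈ S, EE n k i ≤ EE n k j then α k else 0)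
            = if i = i0 then α k else 0 := by
        intro i hi
        have hiff : (i ∈ S ∧ ∀ j ∈ S, EE n k i ≤ EE n k j) ↔ i = i0 := by
          constructor
          · rintro ⟨-, hmin⟩
            exact EE_inj₂ k (le_antisymm (hmin i0 hi0S) (hi0min i hi))
          · rintro rfl
            exact ⟨hi0S, hi0min⟩
        simp [hiff]
      rw [Finset.sum_congr rfl hcong, Finset.sum_ite_eq' S i0 fun _ => α k, if_pos hi0S]
    rw [Finset.sum_congr rfl fun k _ => key k, hsum]
  · intro i
    classical
    set B : Fin n → Finset (Fin n) :=
      (fun k => Finset.univ.filter fun j => EE n k j < EE n k i) with hB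
    set H : ℕ → ℝ :=
      (fun t => ∏ j ∈ Finset.univ.filter (fun j => EE n j i < t), (1 - α j)) with hH
    have e1 : ∀ S : Finset (Fin n),
        (if i ∈ S then
          (∑ k, if i ∈ S ∧ ∀ j ∈ S, EE n k i ≤ EE n k j then α k else 0)
            * (∏ j ∈ S.erase i, α j) * (∏ j ∈ Sᶜ, (1 - α j)) else 0)
        = ∑ k, (if i ∈ S ∧ ∀ j ∈ S, EE n k i ≤ EE n k j then
            α k * ((∏ j ∈ S.erase i, α j) * ∏ j ∈ Sᶜ, (1 - α j)) else 0) := by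
      intro S
      by_cases hiS : i ∈ S
      · rw [if_pos hiS, Finset.sum_mul, Finset.sum_mul]
        refine Finset.sum_congr rfl fun k _ => ?_
        by_cases hc : i ∈ S ∧ ∀ j ∈ S, EE n k i ≤ EE n k j
        · rw [if_pos hc, if_pos hc]; ring
        · rw [if_neg hc, if_neg hc, zero_mul, zero_mul]
      · rw [if_neg hiS]
        exact (Finset.sum_eq_zero fun k _ => by simp [hiS]).symm
    rw [Finset.sum_filter, Finset.sum_congr rfl fun S _ => e1 S, Finset.sum_comm]
    have e2 : ∀ k : Fin n,
        (∑ S : Finset (Fin n), if i ∈ S ∧ ∀ j ∈ S, EE n k i ≤ EE n k j then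
            α k * ((∏ j ∈ S.erase i, α j) * ∏ j ∈ Sᶜ, (1 - α j)) else 0)
        = α k * ∏ j ∈ B k, (1 - α j) := by
      intro k
      rw [← Finset.sum_filter]
      set C : Finset (Fin n) := (Finset.univ \ B k).erase i with hC
      have hiC : i ∉ C := fun h => (Finset.mem_erase.1 h).1 rfl
      have key : ∀ S ∈ Finset.univ.filter
            (fun S : Finset (Fin n) => i ∈ S ∧ ∀ j ∈ S, EE n k i ≤ EE n k j),
          α k * ((∏ j ∈ S.erase i, α j) * ∏ j ∈ Sᶜ, (1 - α j))
          = (α k * ∏ j ∈ B k, (1 - α j)) *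
            ((∏ j ∈ S.erase i, α j) * ∏ j ∈ C \ S.erase i, (1 - α j)) := by
        intro S hS
        obtain ⟨hiS, hmin⟩ := (Finset.mem_filter.1 hS).2
        have hSc : Sᶜ = B k ∪ (C \ S.erase i) := by
          ext j
          simp only [Finset.mem_compl, Finset.mem_union, Finset.mem_sdiff,
            Finset.mem_erase, Finset.mem_filter, Finset.mem_univ, true_and, hC, hB]
          constructor
          · intro hj
            by_cases hb : EE n k j < EE n k i
            · exact Or.inl hb
            · exact Or.inr ⟨⟨fun hji => hj (hji ▸ hiS), by simp [hb]⟩, fun h => hj h.2⟩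
          · rintro (hb | ⟨⟨hji, hnb⟩, hns⟩) hjS
            · exact absurd (hmin j hjS) (not_le.2 hb)
            · exact hns ⟨hji, hjS⟩
        have hdisj : Disjoint (B k) (C \ S.erase i) := by
          refine Finset.disjoint_left.2 fun j hjB hjC => ?_
          have h1 := (Finset.mem_erase.1 (Finset.mem_sdiff.1 hjC).1).2
          exact (Finset.mem_sdiff.1 h1).2 hjB
        rw [hSc, Finset.prod_union hdisj]
        ring
      rw [Finset.sum_congr rfl key, ← Finset.mul_sum]
      have hone : (∑ S ∈ Finset.univ.filter
            (fun S : Finset (Fin n) => i ∈ S ∧ ∀ j ∈ S, EE n k i ≤ EE n k j),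
          ((∏ j ∈ S.erase i, α j) * ∏ j ∈ C \ S.erase i, (1 - α j))) = 1 := by
        have hbij := Finset.sum_nbij' (i := fun S : Finset (Fin n) => S.erase i)
          (j := fun S' : Finset (Fin n) => insert i S')
          (s := Finset.univ.filter
            (fun S : Finset (Fin n) => i ∈ S ∧ ∀ j ∈ S, EE n k i ≤ EE n k j))
          (t := C.powerset)
          (f := fun S => (∏ j ∈ S.erase i, α j) * ∏ j ∈ C \ S.erase i, (1 - α j))
          (g := fun S' => (∏ j ∈ S', α j) * ∏ j ∈ C \ S', (1 - α j))
          (fun S hS => by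
            obtain ⟨hiS, hmin⟩ := (Finset.mem_filter.1 hS).2
            refine Finset.mem_powerset.2 fun j hj => ?_
            obtain ⟨hji, hjS⟩ := Finset.mem_erase.1 hj
            refine Finset.mem_erase.2 ⟨hji, Finset.mem_sdiff.2 ⟨Finset.mem_univ _, ?_⟩⟩
            simp only [hB, Finset.mem_filter, Finset.mem_univ, true_and]
            exact not_lt.2 (hmin j hjS))
          (fun S' hS' => by
            have hsub := Finset.mem_powerset.1 hS'
            refine Finset.mem_filter.2 ⟨Finset.mem_univ _,
              Finset.mem_insert_self i S', fun j hj => ?_⟩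
            rcases Finset.mem_insert.1 hj with rfl | hjS'
            · exact le_rfl
            · have := (Finset.mem_sdiff.1 (Finset.mem_erase.1 (hsub hjS')).2).2
              simp only [hB, Finset.mem_filter, Finset.mem_univ, true_and, not_lt] at this
              exact this)
          (fun S hS => Finset.insert_erase (Finset.mem_filter.1 hS).2.1)
          (fun S' hS' => Finset.erase_insert fun hiS' => hiC (Finset.mem_powerset.1 hS' hiS'))
          (fun S hS => rfl)
        rw [hbij, ← Finset.prod_add]
        simp
      rw [hone, mul_one]
    rw [Finset.sum_congr rfl fun k _ => e2 k]
    have key2 : ∀ k : Fin n,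
        α k * ∏ j ∈ B k, (1 - α j) = H (EE n k i) - H (EE n k i + 1) := by
      intro k
      have hBk : B k = Finset.univ.filter fun j => EE n j i < EE n k i := by
        ext j
        simp only [hB, Finset.mem_filter, Finset.mem_univ, true_and]
        exact EE_lt_iff i j k
      have hins : Finset.univ.filter (fun j : Fin n => EE n j i < EE n k i + 1)
          = insert k (Finset.univ.filter fun j => EE n j i < EE n k i) := by
        ext j
        simp only [Finset.mem_filter, Finset.mem_univ, true_and, Finset.mem_insert]
        constructor
        · intro hj
          rcases Nat.lt_succ_iff_lt_or_eq.1 hj with h | h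
          · exact Or.inr h
          · exact Or.inl (EE_inj₁ i h)
        · rintro (rfl | h)
          · omega
          · omega
      have hknot : k ∉ Finset.univ.filter fun j : Fin n => EE n j i < EE n k i := by simp
      simp only [hH]
      rw [hBk, hins, Finset.prod_insert hknot]
      ring
    rw [Finset.sum_congr rfl fun k _ => key2 k]
    rw [Finset.sum_nbij' (i := fun k : Fin n => EE n k i) (j := fun t : ℕ => kap n i t)
      (t := Finset.range n) (g := fun t => H t - H (t + 1))
      (fun k _ => Finset.mem_range.2 (EE_lt k i))
      (fun t _ => Finset.mem_univ _)
      (fun k _ => EE_inj₁ i (EE_kap i (EE_lt k i)))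
      (fun t ht => EE_kap i (Finset.mem_range.1 ht))
      (fun k _ => rfl)]
    rw [Finset.sum_range_sub' H n]
    have h0 : H 0 = 1 := by simp [hH]
    have hnn : H n = ∏ j, (1 - α j) := by
      simp only [hH]
      rw [Finset.filter_true_of_mem fun j _ => EE_lt j i]
    rw [h0, hnn]
end

section
/- Let n ≥ 1 and let α_1,…,α_n ∈ [0,1] be real numbers with Σ_{i=1}^n α_i = 1. Then for every subset I ⊆ {1,…,n}: (1 − ∏_{j=1}^n (1−α_j))·Σ_{i∈I} α_i ≤ 1 − ∏_{i∈I}(1−α_i). -/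
lemma prod_one_add_ge {n : ℕ} (α : Fin n → ℝ) (h : ∀ i, 0 ≤ α i) (I : Finset (Fin n)) :
    1 + ∑ i ∈ I, α i ≤ ∏ i ∈ I, (1 + α i) := by
  classical
  induction I using Finset.induction with
  | empty => simp
  | insert a s hx ih =>
    rw [Finset.sum_insert hx, Finset.prod_insert hx]
    have hs : 0 ≤ ∑ i ∈ s, α i := Finset.sum_nonneg fun i _ => h i
    nlinarith [h a, ih]

lemma prod_one_sub_ge {n : ℕ} (α : Fin n → ℝ) (h : ∀ i, 0 ≤ α i ∧ α i ≤ 1)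
    (I : Finset (Fin n)) : 1 - ∑ i ∈ I, α i ≤ ∏ i ∈ I, (1 - α i) := by
  classical
  induction I using Finset.induction with
  | empty => simp
  | insert a s hx ih =>
    rw [Finset.sum_insert hx, Finset.prod_insert hx]
    have hs : 0 ≤ ∑ i ∈ s, α i := Finset.sum_nonneg fun i _ => (h i).1
    have hp : 0 ≤ ∏ i ∈ s, (1 - α i) :=
      Finset.prod_nonneg fun i _ => by linarith [(h i).2]
    nlinarith [(h a).1, (h a).2, ih]

theorem stmt_6 (n : ℕ) (hn : 1 ≤ n) (α : Fin n → ℝ)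
    (hα : ∀ i, 0 ≤ α i ∧ α i ≤ 1) (hsum : ∑ i, α i = 1) (I : Finset (Fin n)) :
    (1 - ∏ j, (1 - α j)) * (∑ i ∈ I, α i) ≤ 1 - ∏ i ∈ I, (1 - α i) := by
  classical
  set s := ∑ i ∈ I, α i with hs
  set P := ∏ i ∈ I, (1 - α i) with hP
  set Q := ∏ i ∈ Iᶜ, (1 - α i) with hQ
  have hs0 : 0 ≤ s := Finset.sum_nonneg fun i _ => (hα i).1
  have hs1 : s ≤ 1 := by
    rw [← hsum]
    exact Finset.sum_le_sum_of_subset_of_nonneg (Finset.subset_univ I)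
      (fun i _ _ => (hα i).1)
  have hP0 : 0 ≤ P := Finset.prod_nonneg fun i _ => by linarith [(hα i).2]
  have hQ0 : 0 ≤ Q := Finset.prod_nonneg fun i _ => by linarith [(hα i).2]
  have hcompl : ∑ i ∈ Iᶜ, α i = 1 - s := by
    have := Finset.sum_add_sum_compl I α
    rw [hsum] at this; linarith
  have hQs : s ≤ Q := by
    have := prod_one_sub_ge α hα Iᶜ
    rw [hcompl] at this; linarith
  have htot : ∏ j, (1 - α j) = P * Q := (Finset.prod_mul_prod_compl I _).symm
  have hPs : P * (1 + s) ≤ 1 := by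
    have h1 : 1 + s ≤ ∏ i ∈ I, (1 + α i) :=
      prod_one_add_ge α (fun i => (hα i).1) I
    have h2 : P * ∏ i ∈ I, (1 + α i) ≤ 1 := by
      rw [← Finset.prod_mul_distrib]
      apply Finset.prod_le_one
      · intro i _; nlinarith [(hα i).1, (hα i).2]
      · intro i _; nlinarith [(hα i).1, (hα i).2]
    nlinarith
  rw [htot]
  nlinarith [mul_le_mul_of_nonneg_left hQs hs0, mul_le_mul_of_nonneg_left hQs hP0]
end

section
/- Let α_1,…,α_n ∈ [0,1] be real numbers, let I ⊆ {1,…,n} with k ∈ I and I∖{k} ≠ ∅, and suppose Σ_{i∈I∖{k}} α_i > 0. Then (1 − ∏_{i∈I}(1−α_i)) / (Σ_{i∈I} α_i) ≤ (1 − ∏_{i∈I∖{k}}(1−α_i)) / (Σ_{i∈I∖{k}} α_i). In other words, the quantity a_I = (1 − ∏_{i∈I}(1−α_i))/(Σ_{i∈I} α_i) is nonincreasing under adding an element to I. -/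
lemma key_ineq {n : ℕ} (α : Fin n → ℝ) (hα : ∀ i, 0 ≤ α i ∧ α i ≤ 1)
    (s : Finset (Fin n)) :
    (∏ i ∈ s, (1 - α i)) * (1 + ∑ i ∈ s, α i) ≤ 1 := by
  have h1 : ∏ i ∈ s, (1 - α i) ≤ Real.exp (-(∑ i ∈ s, α i)) := by
    rw [← Finset.sum_neg_distrib, Real.exp_sum]
    exact Finset.prod_le_prod (fun i _ => by linarith [(hα i).2])
      (fun i _ => by linarith [Real.add_one_le_exp (-(α i))])
  have h2 : 1 + ∑ i ∈ s, α i ≤ Real.exp (∑ i ∈ s, α i) := by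
    linarith [Real.add_one_le_exp (∑ i ∈ s, α i)]
  have h3 : (0:ℝ) ≤ 1 + ∑ i ∈ s, α i := by
    have : 0 ≤ ∑ i ∈ s, α i := Finset.sum_nonneg fun i _ => (hα i).1
    linarith
  calc (∏ i ∈ s, (1 - α i)) * (1 + ∑ i ∈ s, α i)
      ≤ Real.exp (-(∑ i ∈ s, α i)) * Real.exp (∑ i ∈ s, α i) :=
        mul_le_mul h1 h2 h3 (Real.exp_pos _).le
    _ = 1 := by rw [← Real.exp_add]; simp

theorem stmt_7 (n : ℕ) (α : Fin n → ℝ) (hα : ∀ i, 0 ≤ α i ∧ α i ≤ 1)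
    (I : Finset (Fin n)) (k : Fin n) (hk : k ∈ I)
    (hne : (I.erase k).Nonempty) (hpos : 0 < ∑ i ∈ I.erase k, α i) :
    (1 - ∏ i ∈ I, (1 - α i)) / (∑ i ∈ I, α i)
      ≤ (1 - ∏ i ∈ I.erase k, (1 - α i)) / (∑ i ∈ I.erase k, α i) := by
  set S := ∑ i ∈ I.erase k, α i with hS
  set P := ∏ i ∈ I.erase k, (1 - α i) with hP
  have hsum : ∑ i ∈ I, α i = α k + S := (Finset.add_sum_erase I α hk).symm
  have hprod : ∏ i ∈ I, (1 - α i) = (1 - α k) * P :=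
    (Finset.mul_prod_erase I _ hk).symm
  have hak := hα k
  have hkey : P * (1 + S) ≤ 1 := key_ineq α hα (I.erase k)
  have hP0 : 0 ≤ P := Finset.prod_nonneg fun i _ => by linarith [(hα i).2]
  have hpos' : 0 < α k + S := by linarith [hak.1]
  rw [hsum, hprod, div_le_div_iff₀ hpos' hpos]
  nlinarith [hak.1, hkey, hP0]
end

section
/- Let (Ω, ℙ) be a probability space, let n ≥ 1 and T ≥ 1 be integers, and let α_1,…,α_n ∈ [0,1] with Σ_{i=1}^n α_i = 1. For each t ∈ {1,…,T} let V_1^t,…,V_n^t : Ω → {0,1} be mutually independent random variables (independent across i for each fixed t) with ℙ(V_i^t = 1) = α_i, and let X_1^t,…,X_n^t : Ω → {0,1} be arbitrary random variables satisfying Σ_{i=1}^n X_i^t ≤ 1 pointwise. If λ ∈ ℝ satisfies (1/T)·Σ_{t=1}^T 𝔼[V_i^t X_i^t] ≥ λ·α_i for every i ∈ {1,…,n}, then λ ≤ 1 − ∏_{j=1}^n (1−α_j). -/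
open MeasureTheory ProbabilityTheory

theorem stmt_8 (Ω : Type*) [MeasurableSpace Ω] (P : Measure Ω) [IsProbabilityMeasure P]
    (n T : ℕ) (hn : 1  ≤ n) (hT : 1 ≤ T)
    (α : Fin n → ℝ) (hα : ∀ i, 0 ≤ α i ∧ α i ≤ 1) (hsum : ∑ i, α i = 1)
    (V X : Fin T → Fin n → Ω → ℝ)
    (hVmeas : ∀ t i, Measurable (V t i))
    (hXmeas : ∀ t i, Measurable (X t i))
    (hV01 : ∀ t i ω, V t i ω = 0 ∨ V t i ω = 1)
    (hX01 : ∀ t i ω, X t i ω = 0 ∨ X t i ω = 1)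
    (hindep : ∀ t, iIndepFun (fun i => V t i) P)
    (hBer : ∀ t i, (P {ω | V t i ω = 1}).toReal = α i)
    (hone : ∀ t ω, ∑ i, X t i ω ≤ 1)
    (lam : ℝ)
    (hlam : ∀ i, lam * α i ≤ (1 / (T : ℝ)) * ∑ t, ∫ ω, V t i ω * X t i ω ∂P) :
    lam ≤ 1 - ∏ j, (1 - α j) := by
  set p : ℝ := ∏ j, (1 - α j) with hp
  have hInt : ∀ t i, Integrable (fun ω => V t i ω * X t i ω) P := by
    intro t i
    refine Integrable.mono' (integrable_const 1)
      ((hVmeas t i).mul (hXmeas t i)).aestronglyMeasurable ?_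
    filter_upwards with ω
    rcases hV01 t i ω with h | h <;> rcases hX01 t i ω with h' | h' <;>
      simp [h, h']
  have key : ∀ t, ∫ ω, (∑ i, V t i ω * X t i ω) ∂P ≤ 1 - p := by
    intro t
    set A : Set Ω := ⋂ i, (V t i) ⁻¹' {0} with hA
    have hAmeas : MeasurableSet A :=
      MeasurableSet.iInter fun i => (hVmeas t i) (measurableSet_singleton 0)
    have hVi : ∀ i, P ((V t i) ⁻¹' {0}) = 1 - P {ω | V t i ω = 1} := by
      intro i
      have hset : (V t i) ⁻¹' {0} = {ω | V t i ω = 1}ᶜ := by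
        ext ω
        simp only [Set.mem_preimage, Set.mem_singleton_iff, Set.mem_compl_iff, Set.mem_setOf_eq]
        constructor
        · intro h h1; rw [h1] at h; norm_num at h
        · intro h; rcases hV01 t i ω with h0 | h0
          · exact h0
          · exact absurd h0 h
      rw [hset, prob_compl_eq_one_sub]
      exact (hVmeas t i) (measurableSet_singleton 1)
    have hPA : (P A).toReal = p := by
      have hmul := (hindep t).measure_inter_preimage_eq_mul Finset.univ
        (sets := fun _ => ({0} : Set ℝ)) (fun i _ => measurableSet_singleton 0)
      have hAeq : A = ⋂ i ∈ Finset.univ, (V t i) ⁻¹' {0} := by simp [hA]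
      rw [hAeq, hmul, ENNReal.toReal_prod]
      refine Finset.prod_congr rfl fun i _ => ?_
      rw [hVi i, ENNReal.toReal_sub_of_le prob_le_one ENNReal.one_ne_top,
        ENNReal.toReal_one, hBer t i]
    have hPAc : (P Aᶜ).toReal = 1 - p := by
      rw [prob_compl_eq_one_sub hAmeas,
        ENNReal.toReal_sub_of_le prob_le_one ENNReal.one_ne_top, ENNReal.toReal_one, hPA]
    have hpt : ∀ ω, (∑ i, V t i ω * X t i ω) ≤ Set.indicator Aᶜ (fun _ => (1:ℝ)) ω := by
      intro ω
      by_cases hω : ω ∈ A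
      · have h0 : ∀ i, V t i ω = 0 := by
          intro i
          have := Set.mem_iInter.mp hω i
          simpa using this
        have : (∑ i, V t i ω * X t i ω) = 0 := by
          apply Finset.sum_eq_zero; intro i _; rw [h0 i, zero_mul]
        rw [this, Set.indicator_of_notMem (by simpa using hω)]
      · rw [Set.indicator_of_mem (Set.mem_compl hω)]
        calc (∑ i, V t i ω * X t i ω) ≤ ∑ i, X t i ω := by
              refine Finset.sum_le_sum fun i _ => ?_
              rcases hX01 t i ω with h' | h'
              · rw [h', mul_zero]
              · rcases hV01 t i ω with h | h <;> simp [h, h']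
          _ ≤ 1 := hone t ω
    calc ∫ ω, (∑ i, V t i ω * X t i ω) ∂P
        ≤ ∫ ω, Set.indicator Aᶜ (fun _ => (1:ℝ)) ω ∂P := by
          refine integral_mono (integrable_finset_sum _ fun i _ => hInt t i) ?_ hpt
          exact (integrable_const 1).indicator hAmeas.compl
      _ = (P Aᶜ).toReal := integral_indicator_one hAmeas.compl
      _ = 1 - p := hPAc
  have hT0 : (T : ℝ) ≠ 0 := by positivity
  calc lam = lam * ∑ i, α i := by rw [hsum, mul_one]
    _ = ∑ i, lam * α i := by rw [Finset.mul_sum]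
    _ ≤ ∑ i, (1 / (T : ℝ)) * ∑ t, ∫ ω, V t i ω * X t i ω ∂P :=
        Finset.sum_le_sum fun i _ => hlam i
    _ = (1 / (T : ℝ)) * ∑ t, ∑ i, ∫ ω, V t i ω * X t i ω ∂P := by
        rw [← Finset.mul_sum, Finset.sum_comm]
    _ = (1 / (T : ℝ)) * ∑ t, ∫ ω, (∑ i, V t i ω * X t i ω) ∂P := by
        congr 1
        refine Finset.sum_congr rfl fun t _ => ?_
        rw [integral_finset_sum _ fun i _ => hInt t i]
    _ ≤ (1 / (T : ℝ)) * ∑ t : Fin T, (1 - p) := by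
        refine mul_le_mul_of_nonneg_left (Finset.sum_le_sum fun t _ => key t) (by positivity)
    _ = 1 - p := by
        rw [Finset.sum_const, Finset.card_univ, Fintype.card_fin, nsmul_eq_mul]
        field_simp
end

section
/- Let n ≥ 1, let α_1,…,α_n > 0 with Σ_{i=1}^n α_i = 1, and let γ > 0 satisfy γ·α_i ≤ 1 for every i. Set β_i = γ·α_i and p = (1 − ∏_{j=1}^n (1−γα_j))/γ. Then: (a) there exist allocation probabilities (q_S^i) (a family with q_S^i ∈ [0,1], q_S^i = 0 when i ∉ S, Σ_{i∈S} q_S^i = 1 for every nonempty S ⊆ {1,…,n}) such that for every i, Σ_{S∋i} q_S^i ∏_{j∈S∖{i}} β_j ∏_{j∉S}(1−β_j) = p; and (b) p ≥ (1 − e^{−γ})/γ. -/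
noncomputable section AuxStmt10

def Qf (γ : ℝ) (a : ℕ → ℝ) : ℕ → ℝ := fun k => ∏ j ∈ Finset.range k, (1 - γ * a j)
def Af (a : ℕ → ℝ) : ℕ → ℝ := fun k => ∑ j ∈ Finset.range k, a j
def ppf (γ : ℝ) (a : ℕ → ℝ) : ℕ → ℝ := fun k => (1 - Qf γ a (k+1)) / (γ * Af a (k+1))
def muf (γ : ℝ) (a : ℕ → ℝ) : ℕ → ℝ := fun k => (ppf γ a k - Qf γ a k) / (1 - Qf γ a k)

structure Good (n : ℕ) (γ : ℝ) (a : ℕ → ℝ) : Prop where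
  hγ : 0 < γ
  ha : ∀ k < n, 0 < a k
  ha0 : ∀ k, 0 ≤ a k
  hB1 : ∀ k, γ * a k ≤ 1

namespace Good

variable {n : ℕ} {γ : ℝ} {a : ℕ → ℝ} (G : Good n γ a)
include G

lemma Qf_nonneg : ∀ k, 0 ≤ Qf γ a k := by
  intro k
  apply Finset.prod_nonneg
  intro j _
  linarith [G.hB1 j]

lemma Qf_le_one : ∀ k, Qf γ a k ≤ 1 := by
  intro k
  apply Finset.prod_le_one
  · intro j _; linarith [G.hB1 j]
  · intro j _; nlinarith [G.ha0 j, G.hγ.le]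

omit G in
lemma Qf_succ (k : ℕ) : Qf γ a (k+1) = Qf γ a k * (1 - γ * a k) := by
  simp [Qf, Finset.prod_range_succ]

omit G in
lemma Af_succ (k : ℕ) : Af a (k+1) = Af a k + a k := by
  simp [Af, Finset.sum_range_succ]

lemma Qf_lt_one : ∀ k, 1 ≤ k → 0 < n → Qf γ a k < 1 := by
  intro k hk hn
  have h0 : 0 < γ * a 0 := mul_pos G.hγ (G.ha 0 hn)
  have key : ∀ m, Qf γ a (m+1) ≤ 1 - γ * a 0 := by
    intro m
    induction m with
    | zero => simp [Qf]
    | succ m ihm =>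
      rw [Qf_succ]
      calc Qf γ a (m+1) * (1 - γ * a (m+1)) ≤ Qf γ a (m+1) * 1 := by
            apply mul_le_mul_of_nonneg_left _ (G.Qf_nonneg _)
            nlinarith [G.ha0 (m+1), G.hγ.le]
        _ ≤ 1 - γ * a 0 := by rw [mul_one]; exact ihm
  obtain ⟨m, rfl⟩ := Nat.exists_eq_add_of_le hk
  calc Qf γ a (1+m) = Qf γ a (m+1) := by rw [Nat.add_comm]
    _ ≤ 1 - γ * a 0 := key m
    _ < 1 := by linarith

lemma Af_nonneg : ∀ k, 0 ≤ Af a k := by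
  intro k
  exact Finset.sum_nonneg fun j _ => G.ha0 j

lemma Af_pos : ∀ k < n, 0 < Af a (k+1) := by
  intro k hk
  rw [Af_succ]
  have h1 := G.Af_nonneg k
  have h2 : 0 < a k := G.ha k hk
  linarith

lemma one_sub_Qf_le : ∀ m, 1 - Qf γ a m ≤ γ * Af a m := by
  intro m
  induction m with
  | zero => simp [Qf, Af]
  | succ m ihm =>
    rw [Qf_succ, Af_succ, mul_add]
    have hQ0 := G.Qf_nonneg m
    have hQ1 := G.Qf_le_one m
    have hb : 0 ≤ γ * a m := mul_nonneg G.hγ.le (G.ha0 m)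
    nlinarith

lemma Qf_key : ∀ m, Qf γ a m * (1 + γ * Af a m) ≤ 1 := by
  intro m
  induction m with
  | zero => simp [Qf, Af]
  | succ m ihm =>
    rw [Qf_succ, Af_succ]
    have hQ0 := G.Qf_nonneg m
    have hb : 0 ≤ γ * a m := mul_nonneg G.hγ.le (G.ha0 m)
    have hA0 := G.Af_nonneg m
    have hAg : 0 ≤ γ * Af a m := mul_nonneg G.hγ.le hA0
    have hexp : Qf γ a m * (1 - γ * a m) * (1 + γ * (Af a m + a m))
        = Qf γ a m * (1 + γ * Af a m) - Qf γ a m * ((γ * a m) * (γ * Af a m + γ * a m)) := by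
      ring
    nlinarith [mul_nonneg hQ0 (mul_nonneg hb (by linarith : (0:ℝ) ≤ γ * Af a m + γ * a m))]

lemma ppf_pos : ∀ k < n, 0 < ppf γ a k := by
  intro k hk
  apply div_pos
  · have := G.Qf_lt_one (k+1) (Nat.le_add_left 1 k) (by omega)
    linarith
  · exact mul_pos G.hγ (G.Af_pos k hk)

lemma ppf_le_one : ∀ k < n, ppf γ a k ≤ 1 := by
  intro k hk
  rw [ppf, div_le_one (mul_pos G.hγ (G.Af_pos k hk))]
  exact G.one_sub_Qf_le (k+1)

lemma Qf_le_ppf : ∀ k < n, Qf γ a k ≤ ppf γ a k := by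
  intro k hk
  rw [ppf, le_div_iff₀ (mul_pos G.hγ (G.Af_pos k hk))]
  have hkey := G.Qf_key k
  have hQs : Qf γ a (k+1) = Qf γ a k * (1 - γ * a k) := Qf_succ k
  have hAs : Af a (k+1) = Af a k + a k := Af_succ k
  have hexp : Qf γ a k * (γ * Af a (k+1)) + Qf γ a (k+1)
      = Qf γ a k * (1 + γ * Af a k) := by
    rw [hQs, hAs]; ring
  linarith

lemma muf_mem : ∀ k < n, 0 ≤ muf γ a k ∧ muf γ a k ≤ 1 := by
  intro k hk
  rcases Nat.eq_zero_or_pos k with rfl | hk1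
  · have h : Qf γ a 0 = 1 := by simp [Qf]
    rw [muf, h]
    norm_num
  · have hlt := G.Qf_lt_one k hk1 (by omega)
    have hd : 0 < 1 - Qf γ a k := by linarith
    constructor
    · apply div_nonneg _ hd.le
      have := G.Qf_le_ppf k hk
      linarith
    · rw [muf, div_le_one hd]
      have := G.ppf_le_one k hk
      linarith

lemma muf_eq : ∀ k < n, muf γ a k * (1 - Qf γ a k) + Qf γ a k = ppf γ a k := by
  intro k hk
  rcases Nat.eq_zero_or_pos k with rfl | hk1
  · have h0 : Qf γ a 0 = 1 := by simp [Qf]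
    have h1 : ppf γ a 0 = 1 := by
      rw [ppf, Qf_succ, h0]
      have ha0' : 0 < a 0 := G.ha 0 (by omega)
      have hne : γ * a 0 ≠ 0 := ne_of_gt (mul_pos G.hγ ha0')
      rw [Af_succ]
      simp only [Af, Finset.range_zero, Finset.sum_empty, zero_add]
      field_simp
      rw [sub_sub_cancel, mul_div_right_comm, div_self (ne_of_gt G.hγ), one_mul]
    rw [h0, h1]
    ring
  · have hlt := G.Qf_lt_one k hk1 (by omega)
    have hd : (1 : ℝ) - Qf γ a k ≠ 0 := by linarith
    rw [muf, div_mul_cancel₀ _ hd]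
    ring

lemma rho_eq : ∀ k, k + 1 < n →
    ppf γ a k * (1 - muf γ a (k+1) * (γ * a (k+1))) = ppf γ a (k+1) := by
  intro k hk
  have hlt := G.Qf_lt_one (k+1) (Nat.le_add_left 1 k) (by omega)
  have hd : (1 : ℝ) - Qf γ a (k+1) ≠ 0 := by linarith
  have hA1 : Af a (k+1) ≠ 0 := ne_of_gt (G.Af_pos k (by omega))
  have hA2 : Af a (k+2) ≠ 0 := ne_of_gt (G.Af_pos (k+1) hk)
  have hγ' : γ ≠ 0 := ne_of_gt G.hγ
  have hAs : Af a (k+2) = Af a (k+1) + a (k+1) := Af_succ (k+1)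
  have hQs : Qf γ a (k+2) = Qf γ a (k+1) * (1 - γ * a (k+1)) := Qf_succ (k+1)
  rw [ppf, ppf, muf, ppf, hQs, hAs]
  rw [hAs] at hA2
  field_simp
  ring

lemma telescope : ∀ d i, i + d = n - 1 → 1 ≤ n →
    ppf γ a i * ∏ k ∈ Finset.Ioo i n, (1 - muf γ a k * (γ * a k)) = ppf γ a (n-1) := by
  intro d
  induction d with
  | zero =>
    intro i hi hn
    rw [Nat.add_zero] at hi
    subst hi
    have he : Finset.Ioo (n-1) n = ∅ := by
      ext j
      simp only [Finset.mem_Ioo, Finset.notMem_empty, iff_false, not_and]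
      omega
    rw [he, Finset.prod_empty, mul_one]
  | succ d ihd =>
    intro i hi hn
    have hi1 : i + 1 < n := by omega
    have hsplit : Finset.Ioo i n = insert (i+1) (Finset.Ioo (i+1) n) := by
      ext j
      simp only [Finset.mem_Ioo, Finset.mem_insert]
      omega
    rw [hsplit, Finset.prod_insert (by simp [Finset.mem_Ioo]), ← mul_assoc,
      G.rho_eq i hi1]
    exact ihd (i+1) (by omega) hn

end Good

lemma norm_aux {ι : Type*} [LinearOrder ι] (f : ι → ℝ) (S : Finset ι) :
    S.Nonempty →
      ∑ i ∈ S, (∏ j ∈ S.filter (fun j => i < j), (1 - f j)) *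
        (if (S.filter (fun j => j < i)).Nonempty then f i else 1) = 1 := by
  classical
  induction S using Finset.strongInduction with
  | _ S ih =>
    intro hS
    set M := S.max' hS with hMdef
    have hM : M ∈ S := S.max'_mem hS
    have hle : ∀ j ∈ S, j ≤ M := fun j hj => S.le_max' j hj
    have hfiltM : S.filter (fun j => M < j) = ∅ := by
      apply Finset.filter_eq_empty_iff.2
      intro j hj
      exact not_lt.2 (hle j hj)
    have hfe : S.filter (fun j => j < M) = S.erase M := by
      ext j
      simp only [Finset.mem_filter, Finset.mem_erase]
      constructor
      · rintro ⟨hj, hlt⟩; exact ⟨ne_of_lt hlt, hj⟩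
      · rintro ⟨hne, hj⟩; exact ⟨hj, lt_of_le_of_ne (hle j hj) hne⟩
    rw [← Finset.sum_erase_add _ _ hM]
    rcases (S.erase M).eq_empty_or_nonempty with he | he
    · rw [he, Finset.sum_empty, hfiltM, hfe, he]
      simp
    · have hterm : ∀ i ∈ S.erase M,
        (∏ j ∈ S.filter (fun j => i < j), (1 - f j)) *
          (if (S.filter (fun j => j < i)).Nonempty then f i else 1)
        = (1 - f M) * ((∏ j ∈ (S.erase M).filter (fun j => i < j), (1 - f j)) *
          (if ((S.erase M).filter (fun j => j < i)).Nonempty then f i else 1)) := by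
        intro i hi
        have hiS : i ∈ S := Finset.mem_of_mem_erase hi
        have hiM : i < M := lt_of_le_of_ne (hle i hiS) (Finset.ne_of_mem_erase hi)
        have h1 : S.filter (fun j => i < j) = insert M ((S.erase M).filter (fun j => i < j)) := by
          ext j
          simp only [Finset.mem_filter, Finset.mem_insert, Finset.mem_erase]
          constructor
          · rintro ⟨hj, hij⟩
            by_cases hjM : j = M
            · exact Or.inl hjM
            · exact Or.inr ⟨⟨hjM, hj⟩, hij⟩
          · rintro (rfl | ⟨⟨hne, hj⟩, hij⟩)
            · exact ⟨hM, hiM⟩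
            · exact ⟨hj, hij⟩
        have h2 : S.filter (fun j => j < i) = (S.erase M).filter (fun j => j < i) := by
          ext j
          simp only [Finset.mem_filter, Finset.mem_erase]
          constructor
          · rintro ⟨hj, hji⟩
            exact ⟨⟨ne_of_lt (lt_trans hji hiM), hj⟩, hji⟩
          · rintro ⟨⟨_, hj⟩, hji⟩; exact ⟨hj, hji⟩
        have hMnotmem : M ∉ (S.erase M).filter (fun j => i < j) := by
          simp [Finset.mem_filter]
        rw [h1, h2, Finset.prod_insert hMnotmem]
        ring
      rw [Finset.sum_congr rfl hterm, ← Finset.mul_sum,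
        ih (S.erase M) (Finset.erase_ssubset hM) he, hfiltM, hfe]
      simp only [Finset.prod_empty, he, if_pos]
      ring

end AuxStmt10

theorem stmt_10 (n : ℕ) (hn : 1 ≤ n) (α : Fin n → ℝ) (γ : ℝ)
    (hα : ∀ i, 0 < α i) (hsum : ∑ i, α i = 1)
    (hγ : 0 < γ) (hγα : ∀ i, γ * α i ≤ 1)
    (β : Fin n → ℝ) (hβ : ∀ i, β i = γ * α i)
    (p : ℝ) (hpdef : p = (1 - ∏ j, (1 - γ * α j)) / γ) :
    (∃ q : Finset (Fin n) → Fin n → ℝ,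
      (∀ S i, 0 ≤ q S i ∧ q S i ≤ 1) ∧
      (∀ S i, i ∉ S → q S i = 0) ∧
      (∀ S : Finset (Fin n), S.Nonempty → ∑ i ∈ S, q S i = 1) ∧
      (∀ i, (∑ S ∈ Finset.univ.filter (fun S : Finset (Fin n) => i ∈ S),
          q S i * (∏ j ∈ S.erase i, β j) * (∏ j ∈ Sᶜ, (1 - β j)))
        = p)) ∧
    (1 - Real.exp (-γ)) / γ ≤ p := by
  classical
  constructor
  · -- part (a)
    set a : ℕ → ℝ := fun k => if h : k < n then α ⟨k, h⟩ else 0 with ha_def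
    have haval : ∀ i : Fin n, a i.val = α i := fun i => dif_pos i.isLt
    have hβval : ∀ i : Fin n, β i = γ * a i.val := by
      intro i; rw [hβ, haval]
    have G : Good n γ a := by
      refine ⟨hγ, ?_, ?_, ?_⟩
      · intro k hk
        simp only [ha_def, dif_pos hk]
        exact hα _
      · intro k
        simp only [ha_def]
        split
        · exact (hα _).le
        · exact le_refl 0
      · intro k
        simp only [ha_def]
        split
        · exact hγα _
        · simp
    have hmu : ∀ k < n, 0 ≤ muf γ a k ∧ muf γ a k ≤ 1 := G.muf_mem
    have hmueq : ∀ k < n, muf γ a k * (1 - Qf γ a k) + Qf γ a k = ppf γ a k := G.muf_eq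
    have htel : ∀ i : Fin n,
        ppf γ a i.val * ∏ k ∈ Finset.Ioo i.val n, (1 - muf γ a k * (γ * a k))
          = ppf γ a (n-1) := by
      intro i
      exact G.telescope (n - 1 - i.val) i.val (by omega) hn
    have hp : p = ppf γ a (n-1) := by
      have h1 : n - 1 + 1 = n := by omega
      have hAn : Af a n = 1 := by
        rw [Af, ← Fin.sum_univ_eq_sum_range, ← hsum]
        exact Finset.sum_congr rfl fun i _ => haval i
      have hQn : Qf γ a n = ∏ j : Fin n, (1 - γ * α j) := by
        rw [Qf, ← Fin.prod_univ_eq_prod_range]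
        exact Finset.prod_congr rfl fun i _ => by rw [haval]
      rw [hpdef, ppf, h1, hAn, hQn, mul_one]
    set q : Finset (Fin n) → Fin n → ℝ := fun S i => if i ∈ S then
        (∏ j ∈ S.filter (fun j => i < j), (1 - muf γ a j.val)) *
          (if (S.filter (fun j => j < i)).Nonempty then muf γ a i.val else 1)
      else 0 with hq
    refine ⟨q, ?_, ?_, ?_, ?_⟩
    · intro S i
      rw [hq]
      by_cases hiS : i ∈ S
      · simp only [if_pos hiS]
        have hprod0 : 0 ≤ ∏ j ∈ S.filter (fun j => i < j), (1 - muf γ a j.val) :=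
          Finset.prod_nonneg fun j _ => by linarith [(hmu j.val j.isLt).2]
        have hprod1 : ∏ j ∈ S.filter (fun j => i < j), (1 - muf γ a j.val) ≤ 1 :=
          Finset.prod_le_one (fun j _ => by linarith [(hmu j.val j.isLt).2])
            (fun j _ => by linarith [(hmu j.val j.isLt).1])
        have hc0 : 0 ≤ (if (S.filter (fun j => j < i)).Nonempty then muf γ a i.val else 1) := by
          split
          · exact (hmu i.val i.isLt).1
          · norm_num
        have hc1 : (if (S.filter (fun j => j < i)).Nonempty then muf γ a i.val else 1) ≤ 1 := by
          split
          · exact (hmu i.val i.isLt).2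
          · exact le_refl 1
        constructor
        · exact mul_nonneg hprod0 hc0
        · calc _ ≤ 1 * 1 := mul_le_mul hprod1 hc1 hc0 (by norm_num)
            _ = 1 := by norm_num
      · simp [hiS]
    · intro S i hiS
      simp [hq, hiS]
    · intro S hS
      have hcongr : ∀ i ∈ S, q S i
          = (∏ j ∈ S.filter (fun j => i < j), (1 - (fun j : Fin n => muf γ a j.val) j)) *
            (if (S.filter (fun j => j < i)).Nonempty then (fun j : Fin n => muf γ a j.val) i else 1) := by
        intro i hi
        rw [hq]
        simp only [if_pos hi]
      rw [Finset.sum_congr rfl hcongr]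
      exact norm_aux (fun j : Fin n => muf γ a j.val) S hS
    · intro i
      have hin : (i : ℕ) < n := i.isLt
      set HI : Finset (Fin n) := Finset.univ.filter (fun j : Fin n => i < j) with hHI
      set LO : Finset (Fin n) := Finset.univ.filter (fun j : Fin n => j < i) with hLO
      set F : Finset (Fin n) → ℝ := fun T =>
        (∏ j ∈ T, ((1 - muf γ a j.val) * β j)) * ∏ j ∈ HI \ T, (1 - β j) with hF
      set Gg : Finset (Fin n) → ℝ := fun B =>
        ((if B.Nonempty then muf γ a i.val else 1) * ∏ j ∈ B, β j) * ∏ j ∈ LO \ B, (1 - β j)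
        with hGg
      have hTmem : ∀ j : Fin n, j ∈ HI ↔ i < j := by
        intro j; rw [hHI]; simp
      have hBmem : ∀ j : Fin n, j ∈ LO ↔ j < i := by
        intro j; rw [hLO]; simp
      have step1 : (∑ S ∈ Finset.univ.filter (fun S : Finset (Fin n) => i ∈ S),
          q S i * (∏ j ∈ S.erase i, β j) * (∏ j ∈ Sᶜ, (1 - β j)))
          = ∑ x ∈ HI.powerset ×ˢ LO.powerset, F x.1 * Gg x.2 := by
        apply Finset.sum_nbij'
          (fun S : Finset (Fin n) => (S.filter (fun j => i < j), S.filter (fun j => j < i)))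
          (fun x : Finset (Fin n) × Finset (Fin n) => insert i (x.1 ∪ x.2))
        · intro S _
          simp only [Finset.mem_product, Finset.mem_powerset]
          constructor
          · intro j hj
            rw [hTmem]
            exact (Finset.mem_filter.1 hj).2
          · intro j hj
            rw [hBmem]
            exact (Finset.mem_filter.1 hj).2
        · intro x _
          simp only [Finset.mem_filter, Finset.mem_univ, true_and]
          exact Finset.mem_insert_self i _
        · intro S hS
          have hiS : i ∈ S := (Finset.mem_filter.1 hS).2
          ext j
          simp only [Finset.mem_insert, Finset.mem_union, Finset.mem_filter]
          constructor
          · rintro (rfl | ⟨hj, _⟩ | ⟨hj, _⟩)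
            · exact hiS
            · exact hj
            · exact hj
          · intro hj
            rcases lt_trichotomy i j with h | h | h
            · exact Or.inr (Or.inl ⟨hj, h⟩)
            · exact Or.inl h.symm
            · exact Or.inr (Or.inr ⟨hj, h⟩)
        · intro x hx
          simp only [Finset.mem_product, Finset.mem_powerset] at hx
          obtain ⟨hT, hB⟩ := hx
          have hTgt : ∀ j ∈ x.1, i < j := fun j hj => (hTmem j).1 (hT hj)
          have hBlt : ∀ j ∈ x.2, j < i := fun j hj => (hBmem j).1 (hB hj)
          have e1 : (insert i (x.1 ∪ x.2)).filter (fun j => i < j) = x.1 := by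
            ext j
            simp only [Finset.mem_filter, Finset.mem_insert, Finset.mem_union]
            constructor
            · rintro ⟨rfl | hj | hj, hij⟩
              · exact absurd hij (lt_irrefl _)
              · exact hj
              · exact absurd hij (asymm (hBlt j hj))
            · intro hj
              exact ⟨Or.inr (Or.inl hj), hTgt j hj⟩
          have e2 : (insert i (x.1 ∪ x.2)).filter (fun j => j < i) = x.2 := by
            ext j
            simp only [Finset.mem_filter, Finset.mem_insert, Finset.mem_union]
            constructor
            · rintro ⟨rfl | hj | hj, hij⟩
              · exact absurd hij (lt_irrefl _)
              · exact absurd hij (asymm (hTgt j hj))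
              · exact hj
            · intro hj
              exact ⟨Or.inr (Or.inr hj), hBlt j hj⟩
          exact Prod.ext e1 e2
        · intro S hS
          have hiS : i ∈ S := (Finset.mem_filter.1 hS).2
          set T := S.filter (fun j => i < j) with hT
          set Bs := S.filter (fun j => j < i) with hBs
          have hTsub : ∀ j ∈ T, i < j := fun j hj => (Finset.mem_filter.1 hj).2
          have hBsub : ∀ j ∈ Bs, j < i := fun j hj => (Finset.mem_filter.1 hj).2
          have hdisj : Disjoint T Bs := by
            rw [Finset.disjoint_left]
            intro j hjT hjB
            exact absurd (hBsub j hjB) (asymm (hTsub j hjT))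
          have hErase : S.erase i = T ∪ Bs := by
            ext j
            simp only [Finset.mem_erase, Finset.mem_union, hT, hBs, Finset.mem_filter]
            constructor
            · rintro ⟨hne, hj⟩
              rcases lt_trichotomy i j with h | h | h
              · exact Or.inl ⟨hj, h⟩
              · exact absurd h.symm hne
              · exact Or.inr ⟨hj, h⟩
            · rintro (⟨hj, h⟩ | ⟨hj, h⟩)
              · exact ⟨ne_of_gt h, hj⟩
              · exact ⟨ne_of_lt h, hj⟩
          have hdisj2 : Disjoint (HI \ T) (LO \ Bs) := by
            rw [Finset.disjoint_left]
            intro j hj1 hj2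
            have h1 := (hTmem j).1 (Finset.mem_sdiff.1 hj1).1
            have h2 := (hBmem j).1 (Finset.mem_sdiff.1 hj2).1
            exact absurd h2 (asymm h1)
          have hCompl : Sᶜ = (HI \ T) ∪ (LO \ Bs) := by
            ext j
            simp only [Finset.mem_compl, Finset.mem_union, Finset.mem_sdiff, hTmem, hBmem,
              hT, hBs, Finset.mem_filter]
            constructor
            · intro hj
              rcases lt_trichotomy i j with h | h | h
              · exact Or.inl ⟨h, fun hc => hj hc.1⟩
              · exact absurd (h ▸ hiS) hj
              · exact Or.inr ⟨h, fun hc => hj hc.1⟩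
            · rintro (⟨h, hc⟩ | ⟨h, hc⟩) hjS
              · exact hc ⟨hjS, h⟩
              · exact hc ⟨hjS, h⟩
          have hBne : (S.filter (fun j => j < i)).Nonempty ↔ Bs.Nonempty := Iff.rfl
          rw [hq]
          simp only [if_pos hiS]
          rw [hErase, hCompl, Finset.prod_union hdisj, Finset.prod_union hdisj2,
            hF, hGg]
          simp only []
          rw [Finset.prod_mul_distrib]
          ring
      have step2 : ∑ x ∈ HI.powerset ×ˢ LO.powerset, F x.1 * Gg x.2
          = (∑ T ∈ HI.powerset, F T) * (∑ B ∈ LO.powerset, Gg B) := by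
        rw [Finset.sum_product, Finset.sum_mul_sum]
      have step3 : ∑ T ∈ HI.powerset, F T
          = ∏ k ∈ Finset.Ioo i.val n, (1 - muf γ a k * (γ * a k)) := by
        rw [hF]
        rw [← Finset.prod_add]
        have e1 : ∀ j ∈ HI, (1 - muf γ a j.val) * β j + (1 - β j)
            = (fun k : ℕ => if i.val < k then 1 - muf γ a k * (γ * a k) else 1) j.val := by
          intro j hj
          have hij : i < j := (hTmem j).1 hj
          have : i.val < j.val := hij
          simp only [if_pos this]
          rw [hβval]
          ring
        rw [Finset.prod_congr rfl e1, hHI]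
        rw [Finset.prod_filter]
        have e2 : ∀ j : Fin n, (if i < j then
            (fun k : ℕ => if i.val < k then 1 - muf γ a k * (γ * a k) else 1) j.val else 1)
            = (fun k : ℕ => if i.val < k then 1 - muf γ a k * (γ * a k) else 1) j.val := by
          intro j
          by_cases h : i < j
          · rw [if_pos h]
          · have : ¬ (i.val < j.val) := fun hc => h hc
            rw [if_neg h]
            simp only [if_neg this]
        rw [Finset.prod_congr rfl (fun j _ => e2 j),
          Fin.prod_univ_eq_prod_range (fun k : ℕ => if i.val < k then 1 - muf γ a k * (γ * a k) else 1) n,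
          ← Finset.prod_filter]
        congr 1
        ext k
        simp only [Finset.mem_filter, Finset.mem_range, Finset.mem_Ioo]
        omega
      have hQlo : ∏ j ∈ LO, (1 - β j) = Qf γ a i.val := by
        rw [hLO, Finset.prod_filter]
        have e3 : ∀ j : Fin n, (if j < i then 1 - β j else 1)
            = (fun k : ℕ => if k < i.val then 1 - γ * a k else 1) j.val := by
          intro j
          by_cases h : j < i
          · have : j.val < i.val := h
            rw [if_pos h]
            simp only [if_pos this]
            rw [hβval]
          · have : ¬ (j.val < i.val) := fun hc => h hc
            rw [if_neg h]
            simp only [if_neg this]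
        rw [Finset.prod_congr rfl (fun j _ => e3 j),
          Fin.prod_univ_eq_prod_range (fun k : ℕ => if k < i.val then 1 - γ * a k else 1) n,
          ← Finset.prod_filter, Qf]
        congr 1
        ext k
        simp only [Finset.mem_filter, Finset.mem_range]
        omega
      have step4 : ∑ B ∈ LO.powerset, Gg B = ppf γ a i.val := by
        have hsplit : ∀ B ∈ LO.powerset, Gg B
            = muf γ a i.val * ((∏ j ∈ B, β j) * ∏ j ∈ LO \ B, (1 - β j))
              + (if B = (∅ : Finset (Fin n)) then (1 - muf γ a i.val) * ∏ j ∈ LO, (1 - β j) else 0) := by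
          intro B _
          rcases B.eq_empty_or_nonempty with rfl | hB
          · rw [hGg]
            simp only
            rw [if_neg (by simp : ¬ (∅ : Finset (Fin n)).Nonempty)]
            simp only [if_true, Finset.prod_empty, Finset.sdiff_empty, one_mul]
            ring
          · rw [hGg]
            simp only [if_pos hB, if_neg (Finset.nonempty_iff_ne_empty.1 hB)]
            ring
        rw [Finset.sum_congr rfl hsplit, Finset.sum_add_distrib, ← Finset.mul_sum]
        have h1 : ∑ B ∈ LO.powerset, ((∏ j ∈ B, β j) * ∏ j ∈ LO \ B, (1 - β j)) = 1 := by
          rw [← Finset.prod_add]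
          have : ∀ j ∈ LO, β j + (1 - β j) = 1 := fun j _ => by ring
          rw [Finset.prod_congr rfl this, Finset.prod_const_one]
        have h2 : ∑ B ∈ LO.powerset, (if B = (∅ : Finset (Fin n))
              then (1 - muf γ a i.val) * ∏ j ∈ LO, (1 - β j) else 0)
            = (1 - muf γ a i.val) * ∏ j ∈ LO, (1 - β j) := by
          rw [Finset.sum_ite_eq' LO.powerset (∅ : Finset (Fin n))
            (fun _ => (1 - muf γ a i.val) * ∏ j ∈ LO, (1 - β j))]
          rw [if_pos (Finset.empty_mem_powerset LO)]
        rw [h1, h2, hQlo, mul_one]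
        have := hmueq i.val hin
        linarith
      rw [step1, step2, step3, step4, mul_comm, htel i, ← hp]
  · -- part (b)
    have hprod : ∏ j, (1 - γ * α j) ≤ Real.exp (-γ) := by
      have hexp : Real.exp (-γ) = ∏ j : Fin n, Real.exp (-(γ * α j)) := by
        have h1 : ∑ x : Fin n, -(γ * α x) = -γ := by
          rw [Finset.sum_neg_distrib, ← Finset.mul_sum, hsum, mul_one]
        rw [← Real.exp_sum, h1]
      rw [hexp]
      apply Finset.prod_le_prod
      · intro j _
        linarith [hγα j]
      · intro j _
        linarith [Real.add_one_le_exp (-(γ * α j))]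
    rw [hpdef]
    have h2 : 1 - Real.exp (-γ) ≤ 1 - ∏ j, (1 - γ * α j) := by linarith
    rw [div_eq_mul_inv, div_eq_mul_inv]
    exact mul_le_mul_of_nonneg_right h2 (inv_nonneg.2 hγ.le)
end

section
/- Let m ≥ 1 be an integer, and define g(X) = (1 − X/m)^m · (mX² + 2mX + 2m − 2X² − 2X) / (2(m − X)). Then g(0) = 1 and g is nonincreasing on the set {X : 0 ≤ X ≤ 1 and X < m}; that is, for all real numbers 0 ≤ X₁ ≤ X₂ ≤ 1 with X₂ < m (which is automatic when m ≥ 2), g(X₂) ≤ g(X₁). In particular, g(X) ≤ 1 for all X ∈ [0,1] with X < m. -/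
theorem stmt_13 (m : ℕ) (hm : 1 ≤ m) (g : ℝ → ℝ)
    (hg : ∀ X : ℝ, g X = (1 - X / m) ^ m *
      (m * X ^ 2 + 2 * m * X + 2 * m - 2 * X ^ 2 - 2 * X) / (2 * (m - X))) :
    g 0 = 1 ∧
    (∀ X₁ X₂ : ℝ, 0 ≤ X₁ → X₁ ≤ X₂ → X₂ ≤ 1 → X₂ < m → g X₂ ≤ g X₁) ∧
    (∀ X : ℝ, 0 ≤ X → X ≤ 1 → X < m → g X ≤ 1) := by
  have hm0 : (0:ℝ) < m := by exact_mod_cast hm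
  have hm1 : (1:ℝ) ≤ m := by exact_mod_cast hm
  set P : ℝ → ℝ := fun X => (m:ℝ) * X ^ 2 + 2 * m * X + 2 * m - 2 * X ^ 2 - 2 * X with hP
  set h : ℝ → ℝ := fun X => ((m:ℝ) - X) ^ (m - 1) * P X / (2 * (m:ℝ) ^ m) with hh
  have hmsucc : m - 1 + 1 = m := Nat.succ_pred_eq_of_pos hm
  -- g agrees with h for X < m
  have hgh : ∀ X : ℝ, X < m → g X = h X := by
    intro X hX
    have hne : (m:ℝ) - X ≠ 0 := by linarith
    rw [hg, hh]
    have h1 : (1 - X / m) = ((m:ℝ) - X) / m := by field_simp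
    rw [h1, div_pow]
    rw [show ((m:ℝ) - X) ^ m = ((m:ℝ) - X) ^ (m-1) * ((m:ℝ)-X) by
      rw [← pow_succ, hmsucc]]
    field_simp
    ring
  -- g 0 = 1
  have hg0 : g 0 = 1 := by
    rw [hg]
    field_simp
    simp [hm0.ne']
  -- derivative of h
  have hderiv : ∀ x : ℝ, HasDerivAt h
      ((↑(m-1) * ((m:ℝ)-x) ^ (m-1-1) * (-1) * P x
        + ((m:ℝ)-x) ^ (m-1) * ((m:ℝ)*(2*x) + 2*m - (2*(2*x) + 2))) / (2 * (m:ℝ) ^ m)) x := by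
    intro x
    have h1 : HasDerivAt (fun X:ℝ => (m:ℝ) - X) (-1) x := by
      simpa using (hasDerivAt_id x).const_sub (m:ℝ)
    have h2 := h1.pow (m-1)
    have hx2 : HasDerivAt (fun X:ℝ => X^2) (2*x) x := by
      simpa using hasDerivAt_pow 2 x
    have hPd : HasDerivAt P ((m:ℝ)*(2*x) + 2*m - (2*(2*x) + 2)) x := by
      have heq : P = fun X:ℝ => (((m:ℝ)*X^2 + 2*m*X) + 2*m) - (2*X^2 + 2*X) := by
        funext X; simp [hP]; ring
      rw [heq]
      exact HasDerivAt.congr_deriv ((((hx2.const_mul (m:ℝ)).add ((hasDerivAt_id x).const_mul (2*(m:ℝ)))).add_const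
        (2*(m:ℝ))).sub ((hx2.const_mul 2).add ((hasDerivAt_id x).const_mul 2))) (by simp)
    simpa [hh, mul_comm, mul_assoc] using (h2.mul hPd).div_const (2 * (m:ℝ) ^ m)
  -- antitone
  have hanti : AntitoneOn h (Set.Icc (0:ℝ) 1) := by
    apply antitoneOn_of_deriv_nonpos (convex_Icc 0 1)
    · apply Continuous.continuousOn
      apply Continuous.div_const
      exact (continuous_const.sub continuous_id).pow _ |>.mul (by fun_prop)
    · intro x hx
      exact (hderiv x).differentiableAt.differentiableWithinAt
    · intro x hx
      rw [interior_Icc] at hx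
      obtain ⟨hx0, hx1⟩ := hx
      rw [(hderiv x).deriv]
      apply div_nonpos_of_nonpos_of_nonneg _ (by positivity)
      rcases eq_or_lt_of_le hm1 with hm1' | hm2
      · -- m = 1
        have : m = 1 := by exact_mod_cast hm1'.symm
        subst this
        simp [hP]
        nlinarith
      · -- m ≥ 2
        have hm2' : 2 ≤ m := by exact_mod_cast (by exact_mod_cast hm2 : (1:ℝ) < m)
        have hk : m - 1 - 1 + 1 = m - 1 := by omega
        have hcast : ((m-1 : ℕ) : ℝ) = (m:ℝ) - 1 := by
          push_cast [Nat.cast_sub hm]; ring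
        have hpow : (0:ℝ) ≤ ((m:ℝ) - x) ^ (m-1-1) := by
          apply pow_nonneg; linarith
        rw [show ((m:ℝ) - x) ^ (m-1) = ((m:ℝ)-x)^(m-1-1) * ((m:ℝ)-x) by
          rw [← pow_succ, hk], hcast]
        have key : ((m:ℝ) - 1) * (-1) * P x + ((m:ℝ)-x) * ((m:ℝ)*(2*x) + 2*m - (2*(2*x) + 2))
            = -x * (((m:ℝ)-2)*((m:ℝ)+1)*x + 2*m) := by
          simp [hP]; ring
        have hQ : ((m:ℝ) - 1) * (-1) * P x + ((m:ℝ)-x) * ((m:ℝ)*(2*x) + 2*m - (2*(2*x) + 2)) ≤ 0 := by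
          rw [key]
          have h2m : (2:ℝ) ≤ m := by exact_mod_cast hm2'
          have hnn : (0:ℝ) ≤ ((m:ℝ)-2)*((m:ℝ)+1)*x + 2*m := by
            have := mul_nonneg (mul_nonneg (by linarith : (0:ℝ) ≤ (m:ℝ)-2)
              (by linarith : (0:ℝ) ≤ (m:ℝ)+1)) hx0.le
            linarith
          exact mul_nonpos_of_nonpos_of_nonneg (by linarith) hnn
        calc ((m:ℝ)-1) * (((m:ℝ)-x)^(m-1-1)) * (-1) * P x
              + ((m:ℝ)-x)^(m-1-1) * (((m:ℝ)-x)) * ((m:ℝ)*(2*x) + 2*m - (2*(2*x) + 2))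
            = ((m:ℝ)-x)^(m-1-1) * (((m:ℝ)-1)*(-1)*P x
              + ((m:ℝ)-x)*((m:ℝ)*(2*x) + 2*m - (2*(2*x) + 2))) := by ring
          _ ≤ 0 := mul_nonpos_of_nonneg_of_nonpos hpow hQ
  have hmono : ∀ X₁ X₂ : ℝ, 0 ≤ X₁ → X₁ ≤ X₂ → X₂ ≤ 1 → X₂ < m → g X₂ ≤ g X₁ := by
    intro X₁ X₂ h0 h12 h21 h2m
    rw [hgh X₂ h2m, hgh X₁ (lt_of_le_of_lt h12 h2m)]
    exact hanti ⟨h0, h12.trans h21⟩ ⟨h0.trans h12, h21⟩ h12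
  exact ⟨hg0, hmono, fun X h0 h1 hXm => hg0 ▸ hmono 0 X le_rfl h0 h1 hXm⟩
end

section
/- Let m ≥ 1 be an integer and let X ∈ [0,1] be a real number with X < m. Then (1 − X²(mX + m − 2X)/(2(m − X)))·(1 − X/m)^m + X ≤ 1. -/
/-- Quartic truncation upper bound for `(1-y)^m`. -/
lemma trunc_aux (m : ℕ) (y : ℝ) (h0 : 0 ≤ y) (h1 : y ≤ 1) :
    (1 - y) ^ m ≤ 1 - m * y + m * (m - 1) / 2 * y ^ 2
      - m * (m - 1) * (m - 2) / 6 * y ^ 3 + m * (m - 1) * (m - 2) * (m - 3) / 24 * y ^ 4 := by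
  induction m with
  | zero => norm_num
  | succ n ih =>
    have hy : 0 ≤ 1 - y := by linarith
    have h2 : (1 - y) ^ (n + 1) ≤ (1 - y) * (1 - (n : ℝ) * y + n * (n - 1) / 2 * y ^ 2
        - n * (n - 1) * (n - 2) / 6 * y ^ 3 + n * (n - 1) * (n - 2) * (n - 3) / 24 * y ^ 4) := by
      rw [pow_succ, mul_comm]
      exact mul_le_mul_of_nonneg_left ih hy
    have hc : (0 : ℝ) ≤ (n : ℝ) * (n - 1) * (n - 2) * (n - 3) := by
      rcases n with _ | _ | _ | _ | k
      · norm_num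
      · norm_num
      · norm_num
      · norm_num
      · push_cast
        have hk : (0:ℝ) ≤ (k:ℝ) := Nat.cast_nonneg k
        have a1 : (0:ℝ) ≤ (k:ℝ) + 1 + 1 + 1 + 1 := by linarith
        have a2 : (0:ℝ) ≤ (k:ℝ) + 1 + 1 + 1 + 1 - 1 := by linarith
        have a3 : (0:ℝ) ≤ (k:ℝ) + 1 + 1 + 1 + 1 - 2 := by linarith
        have a4 : (0:ℝ) ≤ (k:ℝ) + 1 + 1 + 1 + 1 - 3 := by linarith
        exact mul_nonneg (mul_nonneg (mul_nonneg a1 a2) a3) a4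
    have hy5 : (0 : ℝ) ≤ y ^ 5 := by positivity
    have key : (1 - ((n : ℝ) + 1) * y + ((n : ℝ) + 1) * ((n : ℝ) + 1 - 1) / 2 * y ^ 2
        - ((n : ℝ) + 1) * ((n : ℝ) + 1 - 1) * ((n : ℝ) + 1 - 2) / 6 * y ^ 3
        + ((n : ℝ) + 1) * ((n : ℝ) + 1 - 1) * ((n : ℝ) + 1 - 2) * ((n : ℝ) + 1 - 3) / 24 * y ^ 4)
        - (1 - y) * (1 - (n : ℝ) * y + n * (n - 1) / 2 * y ^ 2
        - n * (n - 1) * (n - 2) / 6 * y ^ 3 + n * (n - 1) * (n - 2) * (n - 3) / 24 * y ^ 4)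
        = (n : ℝ) * (n - 1) * (n - 2) * (n - 3) / 24 * y ^ 5 := by ring
    push_cast
    nlinarith [mul_nonneg hc hy5]

/-- The main polynomial inequality. -/
lemma keyF (a X : ℝ) (ha : 1 ≤ a) (h0 : 0 ≤ X) (h1 : X ≤ 1) :
    (24*a^3 - 24*a^3*X + 12*a^2*(a-1)*X^2 - 4*a*(a-1)*(a-2)*X^3 + (a-1)*(a-2)*(a-3)*X^4)
      * (a*X^2 + 2*a*X + 2*a - 2*X^2 - 2*X) ≤ 48*a^3*(a-X) := by
  obtain ⟨b, hb, rfl⟩ : ∃ b, 0 ≤ b ∧ a = 1 + b := ⟨a - 1, by linarith, by ring⟩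
  have hX2 : (0:ℝ) ≤ X^2 := sq_nonneg X
  have hA : (0:ℝ) ≤ 72 - 56*X + 8*X^2 + 4*X^3 + 2*X^4 := by nlinarith
  have hx3 : X^3 ≤ X := by nlinarith
  have hx4 : X^4 ≤ X := by nlinarith
  have hB : (0:ℝ) ≤ 72 - 32*X + 6*X^2 - 8*X^3 - 5*X^4 := by nlinarith
  have hC : (0:ℝ) ≤ 24 + 8*X - 8*X^2 + 2*X^3 + 4*X^4 := by nlinarith
  have hD : (0:ℝ) ≤ X*(8 - 6*X + 2*X^2 - X^3) := by nlinarith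
  nlinarith [mul_nonneg (mul_nonneg hX2 hb) hA,
    mul_nonneg (mul_nonneg hX2 (mul_nonneg hb hb)) hB,
    mul_nonneg (mul_nonneg hX2 (mul_nonneg (mul_nonneg hb hb) hb)) hC,
    mul_nonneg (mul_nonneg hX2 (mul_nonneg (mul_nonneg hb hb) (mul_nonneg hb hb))) hD,
    mul_nonneg hX2 (sub_nonneg.2 h1)]

theorem stmt_14 (m : ℕ) (hm : 1 ≤ m) (X : ℝ) (hX0 : 0 ≤ X) (hX1 : X ≤ 1) (hXm : X < m) :
    (1 - X ^ 2 * (m * X + m - 2 * X) / (2 * (m - X))) * (1 - X / m) ^ m + X ≤ 1 := by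
  set a : ℝ := (m : ℝ) with ha_def
  have ha1 : (1:ℝ) ≤ a := by rw [ha_def]; exact_mod_cast hm
  have ha0 : (0:ℝ) < a := by linarith
  have haX : X < a := hXm
  have h2 : (0:ℝ) < 2 * (a - X) := by linarith
  have h24 : (0:ℝ) < 24 * a ^ 3 := by positivity
  set Q : ℝ := a*X^2 + 2*a*X + 2*a - 2*X^2 - 2*X with hQ_def
  have hQ : 0 ≤ Q := by nlinarith
  set P : ℝ := (1 - X / a) ^ m with hP_def
  have hP0 : 0 ≤ P := by
    apply pow_nonneg
    rw [sub_nonneg, div_le_one ha0]; linarith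
  -- truncation bound with y = X/a
  have hy0 : 0 ≤ X / a := div_nonneg hX0 ha0.le
  have hy1 : X / a ≤ 1 := by rw [div_le_one ha0]; linarith
  have htr := trunc_aux m (X / a) hy0 hy1
  set R : ℝ := 24*a^3 - 24*a^3*X + 12*a^2*(a-1)*X^2 - 4*a*(a-1)*(a-2)*X^3 + (a-1)*(a-2)*(a-3)*X^4
    with hR_def
  have hTR : 1 - a * (X/a) + a * (a - 1) / 2 * (X/a) ^ 2
      - a * (a - 1) * (a - 2) / 6 * (X/a) ^ 3 + a * (a - 1) * (a - 2) * (a - 3) / 24 * (X/a) ^ 4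
      = R / (24 * a ^ 3) := by
    rw [hR_def]
    field_simp
    ring
  rw [ha_def] at htr
  rw [hTR] at htr
  -- so P ≤ R / (24 a³), hence Q*P ≤ 2(a - X)
  have hPQ : Q * P ≤ 2 * (a - X) := by
    have h1' : Q * P ≤ Q * (R / (24 * a ^ 3)) := mul_le_mul_of_nonneg_left htr hQ
    have h2' : Q * (R / (24 * a ^ 3)) ≤ 2 * (a - X) := by
      rw [mul_div_assoc', div_le_iff₀ h24]
      have := keyF a X ha1 hX0 hX1
      rw [← hR_def, ← hQ_def] at this
      nlinarith
    exact h1'.trans h2'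
  -- rewrite the coefficient
  have hcoef : 1 - X ^ 2 * (a * X + a - 2 * X) / (2 * (a - X)) = (1 - X) * Q / (2 * (a - X)) := by
    rw [hQ_def]
    have hne : a - X ≠ 0 := (sub_pos.2 haX).ne'
    field_simp
    ring
  rw [hcoef]
  have hfin : (1 - X) * Q * P ≤ (1 - X) * (2 * (a - X)) := by
    have h1X : 0 ≤ 1 - X := by linarith
    calc (1 - X) * Q * P = (1 - X) * (Q * P) := by ring
      _ ≤ (1 - X) * (2 * (a - X)) := mul_le_mul_of_nonneg_left hPQ h1X
  have : (1 - X) * Q / (2 * (a - X)) * P ≤ 1 - X := by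
    rw [div_mul_eq_mul_div, div_le_iff₀ h2]
    calc (1 - X) * Q * P ≤ (1 - X) * (2 * (a - X)) := hfin
      _ = (1 - X) * (2 * (a - X)) := rfl
  linarith
end

section
/- Let I and J be nonempty finite index sets with m = |I|, let X ∈ [0,1], let x : I → [0,1) with Σ_{i∈I} x_i = X, and let y : J → [0,1] with Σ_{j∈J} y_j = 1−X. Define f(x,y) = (1 − ∏_{i∈I}(1−x_i)·∏_{j∈J}(1−y_j))·X + ∏_{i∈I}(1−x_i) + (1/2)·(∏_{i∈I}(1−x_i))·(∏_{j∈J}(1−y_j))·(Σ_{i∈I} x_i/(1−x_i))·(1−X). Then f(x,y) ≤ (1 − X²(mX + m − 2X)/(2(m − X)))·(1 − X/m)^m + X. -/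
open Finset

-- Weierstrass product inequality
lemma weier_aux {J : Type*} [DecidableEq J] (s : Finset J) (y : J → ℝ) (h0 : ∀ j ∈ s, 0 ≤ y j)
    (h1 : ∀ j ∈ s, y j ≤ 1) :
    0 ≤ ∏ j ∈ s, (1 - y j) ∧ 1 - ∑ j ∈ s, y j ≤ ∏ j ∈ s, (1 - y j) := by
  induction s using Finset.induction_on with
  | empty => simp
  | @insert a s' ha ih =>
    obtain ⟨ih0, ih1⟩ := ih (fun j hj => h0 j (mem_insert_of_mem hj))
      (fun j hj => h1 j (mem_insert_of_mem hj))
    have hya0 : 0 ≤ y a := h0 a (mem_insert_self a s')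
    have hya1 : y a ≤ 1 := h1 a (mem_insert_self a s')
    rw [prod_insert ha, sum_insert ha]
    constructor
    · exact mul_nonneg (by linarith) ih0
    · have h2 : (1 - y a) * (1 - ∑ j ∈ s', y j) ≤ (1 - y a) * ∏ j ∈ s', (1 - y j) :=
        mul_le_mul_of_nonneg_left ih1 (by linarith)
      have hsum : 0 ≤ ∑ j ∈ s', y j := sum_nonneg (fun j hj => h0 j (mem_insert_of_mem hj))
      nlinarith

lemma core_smooth {I : Type*} [Fintype I] [DecidableEq I] (α b t : ℝ) (hb : 0 ≤ b)
    (hab : 0 ≤ α + b * ((Fintype.card I : ℝ) - 2)) (ht1 : t ≤ 1) (ht0 : 0 < t) :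
    ∀ n : ℕ, ∀ u : I → ℝ, (∀ i, 0 < u i) → (∀ i, u i ≤ 1) →
      (∑ i, u i = (Fintype.card I : ℝ) * t) →
      ((Finset.univ.filter (fun i => u i ≠ t)).card ≤ n) →
      (∏ i, u i) * (α + b * ∑ i, (u i)⁻¹)
        ≤ t ^ (Fintype.card I) * (α + b * ((Fintype.card I : ℝ) * t⁻¹)) := by
  intro n
  induction n with
  | zero =>
    intro u hu0 hu1 husum hcard
    have hall : ∀ i, u i = t := by
      intro i
      by_contra h
      have : i ∈ Finset.univ.filter (fun i => u i ≠ t) := mem_filter.mpr ⟨mem_univ i, h⟩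
      have := card_pos.mpr ⟨i, this⟩
      omega
    have h1 : (∏ i, u i) = t ^ (Fintype.card I) := by
      simp [hall, prod_const, card_univ]
    have h2 : (∑ i : I, (u i)⁻¹) = (Fintype.card I : ℝ) * t⁻¹ := by
      simp [hall, sum_const, card_univ, nsmul_eq_mul]
    rw [h1, h2]
  | succ n ih =>
    intro u hu0 hu1 husum hcard
    by_cases hle : (Finset.univ.filter (fun i => u i ≠ t)).card ≤ n
    · exact ih u hu0 hu1 husum hle
    · -- there is some i with u i ≠ t
      have hpos : 0 < (Finset.univ.filter (fun i => u i ≠ t)).card := by omega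
      obtain ⟨i₀, hi₀⟩ := card_pos.mp hpos
      have hi₀ne : u i₀ ≠ t := (mem_filter.mp hi₀).2
      -- find a with u a < t and c with t < u c
      have hex : ∃ a c : I, u a < t ∧ t < u c := by
        have h1 : ∃ a, u a < t := by
          by_contra h; push_neg at h
          have : ∑ _i : I, t < ∑ i, u i :=
            sum_lt_sum (fun i _ => h i) ⟨i₀, mem_univ i₀, lt_of_le_of_ne (h i₀) (Ne.symm hi₀ne)⟩
          rw [husum, sum_const, card_univ, nsmul_eq_mul] at this; linarith
        have h2 : ∃ c, t < u c := by
          by_contra h; push_neg at h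
          have : ∑ i, u i < ∑ _i : I, t :=
            sum_lt_sum (fun i _ => h i) ⟨i₀, mem_univ i₀, lt_of_le_of_ne (h i₀) hi₀ne⟩
          rw [husum, sum_const, card_univ, nsmul_eq_mul] at this; linarith
        obtain ⟨a, ha⟩ := h1; obtain ⟨c, hc⟩ := h2; exact ⟨a, c, ha, hc⟩
      obtain ⟨a, c, hua, huc⟩ := hex
      have hac : a ≠ c := fun h => by rw [h] at hua; linarith
      set w : ℝ := u a + u c - t with hw
      set v : I → ℝ := Function.update (Function.update u a t) c w with hv
      have hvc : v c = w := by simp [hv]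
      have hva : v a = t := by simp [hv, Function.update_apply, hac]
      have hvother : ∀ i, i ≠ a → i ≠ c → v i = u i := by
        intro i hia hic; simp [hv, Function.update_apply, hia, hic]
      have hw0 : 0 < w := by have := hu0 a; simp only [hw]; linarith
      have hw1 : w ≤ 1 := by have := hu1 c; simp only [hw]; linarith
      have hv0 : ∀ i, 0 < v i := by
        intro i
        rcases eq_or_ne i c with rfl | hic
        · rw [hvc]; exact hw0
        rcases eq_or_ne i a with rfl | hia
        · rw [hva]; exact ht0
        · rw [hvother i hia hic]; exact hu0 i
      have hv1 : ∀ i, v i ≤ 1 := by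
        intro i
        rcases eq_or_ne i c with rfl | hic
        · rw [hvc]; exact hw1
        rcases eq_or_ne i a with rfl | hia
        · rw [hva]; exact ht1
        · rw [hvother i hia hic]; exact hu1 i
      have hcmem : c ∈ univ.erase a := mem_erase.mpr ⟨Ne.symm hac, mem_univ c⟩
      have hdec : ∀ f : I → ℝ, ∑ i, f i = f a + f c + ∑ i ∈ (univ.erase a).erase c, f i := by
        intro f
        rw [← Finset.add_sum_erase _ f (mem_univ a), ← Finset.add_sum_erase _ f hcmem]; ring
      have hdecp : ∀ f : I → ℝ, ∏ i, f i = f a * f c * ∏ i ∈ (univ.erase a).erase c, f i := by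
        intro f
        rw [← Finset.mul_prod_erase _ f (mem_univ a), ← Finset.mul_prod_erase _ f hcmem]; ring
      have hmem' : ∀ i ∈ (univ.erase a).erase c, i ≠ a ∧ i ≠ c := by
        intro i hi
        obtain ⟨hic, hi'⟩ := mem_erase.mp hi
        exact ⟨(mem_erase.mp hi').1, hic⟩
      have hps : ∏ i ∈ (univ.erase a).erase c, v i = ∏ i ∈ (univ.erase a).erase c, u i :=
        prod_congr rfl (fun i hi => hvother i (hmem' i hi).1 (hmem' i hi).2)
      have hss : ∑ i ∈ (univ.erase a).erase c, (v i)⁻¹ = ∑ i ∈ (univ.erase a).erase c, (u i)⁻¹ :=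
        sum_congr rfl (fun i hi => by rw [hvother i (hmem' i hi).1 (hmem' i hi).2])
      have hvsum : ∑ i, v i = (Fintype.card I : ℝ) * t := by
        rw [hdec v, hva, hvc,
          sum_congr rfl (fun i hi => hvother i (hmem' i hi).1 (hmem' i hi).2)]
        rw [hdec u] at husum
        simp only [hw]
        linarith
      have hsubset : univ.filter (fun i => v i ≠ t) ⊆ (univ.filter (fun i => u i ≠ t)).erase a := by
        intro i hi
        rw [mem_filter] at hi
        rcases eq_or_ne i a with rfl | hia
        · exact absurd hva hi.2
        rw [mem_erase, mem_filter]
        refine ⟨hia, mem_univ i, ?_⟩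
        rcases eq_or_ne i c with rfl | hic
        · exact ne_of_gt huc
        · rw [← hvother i hia hic]; exact hi.2
      have hvcard : (univ.filter (fun i => v i ≠ t)).card ≤ n := by
        have h1 := card_le_card hsubset
        have h2 : a ∈ univ.filter (fun i => u i ≠ t) :=
          mem_filter.mpr ⟨mem_univ a, ne_of_lt hua⟩
        have h3 := card_erase_of_mem h2
        omega
      have hIH := ih v hv0 hv1 hvsum hvcard
      set R : ℝ := ∏ i ∈ (univ.erase a).erase c, u i with hR
      set V : ℝ := ∑ i ∈ (univ.erase a).erase c, (u i)⁻¹ with hV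
      have hR0 : 0 < R := prod_pos (fun i _ => hu0 i)
      have h2le : 2 ≤ Fintype.card I := by
        have h := card_le_card (subset_univ ({a, c} : Finset I))
        rwa [card_pair hac, card_univ] at h
      have hV_ge : ((Fintype.card I : ℝ) - 2) ≤ V := by
        have hcard2 : ((univ.erase a).erase c).card = Fintype.card I - 2 := by
          rw [card_erase_of_mem hcmem, card_erase_of_mem (mem_univ a), card_univ]; omega
        have hone : ∀ i ∈ (univ.erase a).erase c, (1:ℝ) ≤ (u i)⁻¹ := by
          intro i _
          calc (1:ℝ) = u i * (u i)⁻¹ := (mul_inv_cancel₀ (ne_of_gt (hu0 i))).symm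
          _ ≤ 1 * (u i)⁻¹ := mul_le_mul_of_nonneg_right (hu1 i) (inv_nonneg.mpr (hu0 i).le)
          _ = (u i)⁻¹ := one_mul _
        have := sum_le_sum hone
        rw [sum_const, hcard2, nsmul_eq_mul, mul_one] at this
        calc ((Fintype.card I : ℝ) - 2) = ((Fintype.card I - 2 : ℕ) : ℝ) := by
              push_cast [Nat.cast_sub h2le]; ring
        _ ≤ V := this
      have hcoef : 0 ≤ α + b * V := by
        have := mul_le_mul_of_nonneg_left hV_ge hb
        linarith
      have hua0 : u a ≠ 0 := ne_of_gt (hu0 a)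
      have huc0 : u c ≠ 0 := ne_of_gt (hu0 c)
      have hFu : (∏ i, u i) * (α + b * ∑ i, (u i)⁻¹)
          = (u a * u c) * R * (α + b * V) + b * R * (u a + u c) := by
        rw [hdecp u, hdec (fun i => (u i)⁻¹)]
        simp only [← hR, ← hV]
        field_simp
        ring
      have hFv : (∏ i, v i) * (α + b * ∑ i, (v i)⁻¹)
          = (t * w) * R * (α + b * V) + b * R * (t + w) := by
        rw [hdecp v, hdec (fun i => (v i)⁻¹)]
        simp only [hva, hvc, hps, hss, ← hR, ← hV]
        field_simp
        ring
      have htw : t + w = u a + u c := by simp only [hw]; ring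
      have hpp : 0 ≤ t * w - u a * u c := by
        have h1 : (0:ℝ) ≤ (t - u a) * (u c - t) :=
          mul_nonneg (by linarith) (by linarith)
        simp only [hw]; nlinarith
      have hkey : (∏ i, u i) * (α + b * ∑ i, (u i)⁻¹)
          ≤ (∏ i, v i) * (α + b * ∑ i, (v i)⁻¹) := by
        rw [hFu, hFv, htw]
        nlinarith [mul_nonneg hpp (mul_nonneg hR0.le hcoef)]
      exact le_trans hkey hIH

theorem stmt_15 (I J : Type*) [Fintype I] [Fintype J] [Nonempty I] [Nonempty J]
    (m : ℕ) (hm : m = Fintype.card I)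
    (X : ℝ) (hX0 : 0 ≤ X) (hX1 : X ≤ 1)
    (x : I → ℝ) (hx : ∀ i, 0 ≤ x i ∧ x i < 1) (hxsum : ∑ i, x i = X)
    (y : J → ℝ) (hy : ∀ j, 0 ≤ y j ∧ y j ≤ 1) (hysum : ∑ j, y j = 1 - X) :
    (1 - (∏ i, (1 - x i)) * ∏ j, (1 - y j)) * X
      + (∏ i, (1 - x i))
      + (1 / 2) * (∏ i, (1 - x i)) * (∏ j, (1 - y j)) * (∑ i, x i / (1 - x i)) * (1 - X)
    ≤ (1 - X ^ 2 * (m * X + m - 2 * X) / (2 * (m - X))) * (1 - X / m) ^ m + X := by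
  classical
  have hx0 : ∀ i, 0 ≤ x i := fun i => (hx i).1
  have hx1 : ∀ i, x i < 1 := fun i => (hx i).2
  set P : ℝ := ∏ i, (1 - x i) with hPdef
  set Q : ℝ := ∏ j, (1 - y j) with hQdef
  set S : ℝ := ∑ i, x i / (1 - x i) with hSdef
  set b : ℝ := X * (1 - X) / 2 with hbdef
  set α : ℝ := 1 - X ^ 2 - m * b with hαdef
  have hP0 : 0 < P := prod_pos (fun i _ => by have := hx1 i; linarith)
  have hQX : X ≤ Q := by
    have h := (weier_aux univ y (fun j _ => (hy j).1) (fun j _ => (hy j).2)).2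
    rw [hysum] at h; linarith
  have hxleX : ∀ i, x i ≤ X := by
    intro i
    rw [← hxsum]
    exact single_le_sum (fun i _ => hx0 i) (mem_univ i)
  have hSX : S * (1 - X) ≤ 2 * X := by
    have h : ∀ i ∈ univ, x i / (1 - x i) * (1 - X) ≤ x i := by
      intro i _
      have h1 : (0:ℝ) < 1 - x i := by have := hx1 i; linarith
      rw [div_mul_eq_mul_div, div_le_iff₀ h1]
      nlinarith [hx0 i, hxleX i]
    have h2 := sum_le_sum h
    rw [hxsum] at h2
    have h3 : S * (1 - X) = ∑ i, x i / (1 - x i) * (1 - X) := by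
      rw [hSdef, sum_mul]
    linarith
  have step1 : (1 - P * Q) * X + P + 1 / 2 * P * Q * S * (1 - X)
      ≤ X + P * (1 - X ^ 2) + b * (P * S) := by
    have hlhs : (1 - P * Q) * X + P + 1 / 2 * P * Q * S * (1 - X)
        = X + P + P * Q * (S * (1 - X) / 2 - X) := by ring
    have hrhs : X + P * (1 - X ^ 2) + b * (P * S)
        = X + P + P * X * (S * (1 - X) / 2 - X) := by rw [hbdef]; ring
    rw [hlhs, hrhs]
    have hκ : S * (1 - X) / 2 - X ≤ 0 := by linarith
    have hmono : P * Q * (S * (1 - X) / 2 - X) ≤ P * X * (S * (1 - X) / 2 - X) := by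
      nlinarith [mul_nonneg hP0.le (sub_nonneg.mpr hQX)]
    linarith
  -- set up core lemma
  have hm1 : 1 ≤ m := by rw [hm]; exact Fintype.card_pos
  have hmR : (1:ℝ) ≤ (m:ℝ) := by exact_mod_cast hm1
  have hXm : X < (m:ℝ) := by
    rcases lt_or_eq_of_le hm1 with h | h
    · have : (2:ℝ) ≤ (m:ℝ) := by exact_mod_cast h
      linarith
    · obtain ⟨i₀, hu⟩ := Finset.card_eq_one.mp
        (show (univ : Finset I).card = 1 by rw [card_univ, ← hm, ← h])
      have hXx : X = x i₀ := by rw [← hxsum, hu, sum_singleton]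
      rw [hXx]
      have := hx1 i₀
      linarith
  have hmne : (m:ℝ) ≠ 0 := by linarith
  set t : ℝ := 1 - X / m with htdef
  have ht0 : 0 < t := by
    rw [htdef, sub_pos, div_lt_one (by linarith : (0:ℝ) < (m:ℝ))]
    exact hXm
  have ht1 : t ≤ 1 := by
    have : 0 ≤ X / m := div_nonneg hX0 (by linarith)
    rw [htdef]; linarith
  have hb : 0 ≤ b := by
    rw [hbdef]
    have : 0 ≤ X * (1 - X) := mul_nonneg hX0 (by linarith)
    linarith
  have hcast : ((Fintype.card I : ℕ) : ℝ) = (m:ℝ) := by exact_mod_cast hm.symm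
  have hab : 0 ≤ α + b * (((Fintype.card I : ℕ) : ℝ) - 2) := by
    rw [hcast, hαdef, hbdef]
    nlinarith
  have husum : ∑ i, (1 - x i) = ((Fintype.card I : ℕ) : ℝ) * t := by
    rw [sum_sub_distrib, sum_const, card_univ, nsmul_eq_mul, mul_one, hxsum, hcast, htdef]
    field_simp
  have hcore := core_smooth α b t hb hab ht1 ht0
      ((univ.filter (fun i => (1 - x i) ≠ t)).card) (fun i => 1 - x i)
      (fun i => by have := hx1 i; linarith)
      (fun i => by have := hx0 i; linarith) husum le_rfl
  have hSinv : S = (∑ i, (1 - x i)⁻¹) - m := by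
    have hterm : ∀ i ∈ univ, x i / (1 - x i) = (1 - x i)⁻¹ - 1 := by
      intro i _
      have h1 : (1:ℝ) - x i ≠ 0 := by have := hx1 i; intro h; linarith
      field_simp
      ring
    rw [hSdef, sum_congr rfl hterm, sum_sub_distrib, sum_const, card_univ, nsmul_eq_mul,
      mul_one, hcast]
  have hPcoef : P * (1 - X ^ 2) + b * (P * S)
      = (∏ i, (1 - x i)) * (α + b * ∑ i, (1 - x i)⁻¹) := by
    rw [hSinv, hαdef, ← hPdef]; ring
  have hcoefeq : α + b * (((Fintype.card I : ℕ) : ℝ) * t⁻¹)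
      = 1 - X ^ 2 * (m * X + m - 2 * X) / (2 * (m - X)) := by
    have hmX : (m:ℝ) - X ≠ 0 := by linarith
    rw [hcast, hαdef, hbdef, htdef]
    field_simp
    ring
  have hfinal : t ^ (Fintype.card I) * (α + b * (((Fintype.card I : ℕ) : ℝ) * t⁻¹))
      = (1 - X ^ 2 * (m * X + m - 2 * X) / (2 * (m - X))) * (1 - X / m) ^ m := by
    rw [hcoefeq, ← hm, ← htdef]
    ring
  calc (1 - P * Q) * X + P + 1 / 2 * P * Q * S * (1 - X)
      ≤ X + P * (1 - X ^ 2) + b * (P * S) := step1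
    _ = X + ((∏ i, (1 - x i)) * (α + b * ∑ i, (1 - x i)⁻¹)) := by rw [add_assoc, hPcoef]
    _ ≤ X + t ^ (Fintype.card I) * (α + b * (((Fintype.card I : ℕ) : ℝ) * t⁻¹)) := by
        exact add_le_add_right hcore X
    _ = (1 - X ^ 2 * (m * X + m - 2 * X) / (2 * (m - X))) * (1 - X / m) ^ m + X := by
        rw [hfinal]; ring
end

section
/- Let n ≥ 1, let α_1,…,α_n be nonnegative reals with Σ_{i=1}^n α_i = 1, and let (p_{ij})_{i≠j} be real numbers with 0 ≤ p_{ij} ≤ 1 and p_{ij} + p_{ji} = 1 for all i ≠ j. If λ ∈ ℝ satisfies λ ≤ α_i + Σ_{j≠i} α_j·p_{ij} for every i ∈ {1,…,n}, then λ ≤ 1/2 + (1/2)·Σ_{i=1}^n α_i². -/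
open Finset

theorem stmt_17 (n : ℕ) (hn : 1 ≤ n) (α : Fin n → ℝ)
    (hα : ∀ i, 0 ≤ α i) (hsum : ∑ i, α i = 1)
    (p : Fin n → Fin n → ℝ)
    (hp01 : ∀ i j, i ≠ j → 0 ≤ p i j ∧ p i j ≤ 1)
    (hpsum : ∀ i j, i ≠ j → p i j + p j i = 1)
    (lam : ℝ)
    (hlam : ∀ i, lam ≤ α i + ∑ j ∈ Finset.univ.erase i, α j * p i j) :
    lam ≤ 1 / 2 + (1 / 2) * ∑ i, (α i) ^ 2 := by
  set T : Fin n → Fin n → ℝ := fun i j => α i * (α j * p i j) with hT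
  set S : ℝ := ∑ i, ∑ j ∈ Finset.univ.erase i, T i j with hS
  have h1 : lam ≤ (∑ i, (α i) ^ 2) + S := by
    calc lam = ∑ i, α i * lam := by rw [← Finset.sum_mul, hsum, one_mul]
    _ ≤ ∑ i, α i * (α i + ∑ j ∈ Finset.univ.erase i, α j * p i j) :=
        Finset.sum_le_sum fun i _ => mul_le_mul_of_nonneg_left (hlam i) (hα i)
    _ = (∑ i, (α i) ^ 2) + S := by
        rw [hS, ← Finset.sum_add_distrib]
        refine Finset.sum_congr rfl fun i _ => ?_
        rw [mul_add, sq, Finset.mul_sum]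
  -- symmetry: S equals the sum with swapped indices
  have hswap : S = ∑ i, ∑ j ∈ Finset.univ.erase i, T j i := by
    have e1 : ∀ i : Fin n, ∑ j ∈ Finset.univ.erase i, T i j = (∑ j, T i j) - T i i :=
      fun i => Finset.sum_erase_eq_sub (Finset.mem_univ i)
    have e2 : ∀ i : Fin n, ∑ j ∈ Finset.univ.erase i, T j i = (∑ j, T j i) - T i i :=
      fun i => Finset.sum_erase_eq_sub (Finset.mem_univ i)
    simp only [hS, e1, e2, Finset.sum_sub_distrib]
    rw [Finset.sum_comm]
  have h2S : 2 * S = 1 - ∑ i, (α i) ^ 2 := by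
    have : 2 * S = ∑ i, ∑ j ∈ Finset.univ.erase i, (T i j + T j i) := by
      rw [two_mul]
      nth_rewrite 2 [hswap]
      rw [← Finset.sum_add_distrib]
      exact Finset.sum_congr rfl fun i _ => (Finset.sum_add_distrib).symm
    rw [this]
    have : ∀ i : Fin n, ∑ j ∈ Finset.univ.erase i, (T i j + T j i)
        = ∑ j ∈ Finset.univ.erase i, α i * α j := by
      intro i
      refine Finset.sum_congr rfl fun j hj => ?_
      have hji : j ≠ i := Finset.ne_of_mem_erase hj
      have := hpsum i j hji.symm
      simp only [hT]
      linear_combination (α i * α j) * this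
    simp only [this]
    have : ∀ i : Fin n, ∑ j ∈ Finset.univ.erase i, α i * α j = α i * (1 - α i) := by
      intro i
      rw [← Finset.mul_sum, Finset.sum_erase_eq_sub (Finset.mem_univ i), hsum]
    simp only [this]
    have : ∑ i, α i * (1 - α i) = 1 - ∑ i, (α i) ^ 2 := by
      simp only [mul_sub, mul_one, Finset.sum_sub_distrib, hsum, sq]
    rw [this]
  linarith
end
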